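/- arXiv:2601.14206 — 3 statements merged into one kernel-verified Lean document; each statement's English description precedes it below -/
import Mathlib

section
/- Let G be a connected finite simple graph on N vertices in which every vertex has degree at most Δ, and let R be a positive integer with N > Δ^{4R}+1. Let H be a Hamiltonian of range R with respect to G such that H |W⟩ = λ |W⟩ for some λ ∈ ℂ. Then there exist Ω, ω ∈ ℂ and, for each nonempty subset X ⊆ V with diam(X) ≤ 2R, an operator h_X supported on X satisfying h_X |W⟩ = 0 and h_X |0̄⟩ = 0, such that H = Ω·I + ω·N̂ + ∑_X h_X. -/
open scoped BigOperators
set_option linter.unusedSectionVars false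

noncomputable section

/-- The state space of a collection of qubits indexed by `V`: the complex vector space of
functions from configurations `V → Bool` to `ℂ`. -/
abbrev QState (V : Type*) := (V → Bool) → ℂ

section Defs

variable {V : Type*} [Fintype V] [DecidableEq V]

/-- The standard basis vector associated to the configuration `f`. -/
def basisVec (f : V → Bool) : QState V := fun g => if g = f then 1 else 0

/-- The creation operator `s†_i` at site `i`. -/
def creOp (i : V) : Module.End ℂ (QState V) where
  toFun ψ := fun g => if g i = true then ψ (Function.update g i false) else 0
  map_add' ψ φ := by funext g; by_cases h : g i = true <;> simp [h]
  map_smul' a ψ := by funext g; by_cases h : g i = true <;> simp [h]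

/-- The annihilation operator `s_i` at site `i`. -/
def annOp (i : V) : Module.End ℂ (QState V) where
  toFun ψ := fun g => if g i = false then ψ (Function.update g i true) else 0
  map_add' ψ φ := by funext g; by_cases h : g i = false <;> simp [h]
  map_smul' a ψ := by funext g; by_cases h : g i = false <;> simp [h]

@[simp] lemma creOp_apply (i : V) (ψ : QState V) (g : V → Bool) :
    creOp i ψ g = if g i = true then ψ (Function.update g i false) else 0 := rfl

variable (V)

/-- The vacuum `|0̄⟩`: the basis vector of the all-false configuration. -/
def vac : QState V := basisVec (fun _ => false)

/-- The total raising operator `S† = ∑ i, s†_i`. -/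
def Sdag : Module.End ℂ (QState V) := ∑ i : V, creOp i

/-- The number operator `N̂ = ∑ i, s†_i s_i`. -/
def numOp : Module.End ℂ (QState V) := ∑ i : V, creOp i * annOp i

/-- The unnormalized Dicke state `|W^p⟩ = (S†)^p |0̄⟩`. -/
def WState (p : ℕ) : QState V := ((Sdag V) ^ p) (vac V)

variable {V}

/-- Creation operators at different sites commute. -/
lemma creOp_commute (i j : V) : Commute (creOp (V := V) i) (creOp j) := by
  rcases eq_or_ne i j with rfl | hij
  · exact Commute.refl _
  · show creOp i * creOp j = creOp j * creOp i
    refine LinearMap.ext fun ψ => funext fun g => ?_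
    simp only [Module.End.mul_apply, creOp_apply]
    by_cases hi : g i = true <;> by_cases hj : g j = true <;>
      simp [hi, hj, Function.update_of_ne hij, Function.update_of_ne hij.symm,
        Function.update_comm hij]

/-- The product `∏_{j ∈ Y} s†_j` of creation operators over a finite set `Y` of sites
(the operators commute, so the product is well defined; the empty product is the identity). -/
def creProd (Y : Finset V) : Module.End ℂ (QState V) :=
  Y.noncommProd creOp fun a _ b _ _ => creOp_commute a b

/-- The operator `O` is supported on the set of sites `X`. -/
def SupportedOn (O : Module.End ℂ (QState V)) (X : Set V) : Prop :=
  (∀ f g : V → Bool, (∃ i ∉ X, f i ≠ g i) → O (basisVec f) g = 0) ∧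
  (∀ f f' g g' : V → Bool,
    (∀ i ∈ X, f i = f' i) → (∀ i ∈ X, g i = g' i) →
    (∀ i ∉ X, f i = g i) → (∀ i ∉ X, f' i = g' i) →
    O (basisVec f) g = O (basisVec f') g')

/-- An operator is `k`-local if it is a finite sum of operators each supported
on a subset of at most `k` sites. -/
def IsKLocal (k : ℕ) (O : Module.End ℂ (QState V)) : Prop :=
  ∃ (n : ℕ) (h : Fin n → Module.End ℂ (QState V)) (X : Fin n → Finset V),
    (∀ t, SupportedOn (h t) ↑(X t)) ∧ (∀ t, (X t).card ≤ k) ∧ O = ∑ t, h t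

/-- Vertices `i` and `j` are within distance `r` in the graph `G`:
they are joined by a walk of length at most `r`. -/
def WithinDist (G : SimpleGraph V) (r : ℕ) (i j : V) : Prop :=
  ∃ w : G.Walk i j, w.length ≤ r

/-- The ball of radius `r` around vertex `i` in the graph `G`. -/
def gball (G : SimpleGraph V) (i : V) (r : ℕ) : Set V := {j | WithinDist G r i j}

/-- `diam(X) ≤ R` with respect to `G`: every two vertices of `X` are within distance `R - 1`. -/
def GDiamLE (G : SimpleGraph V) (X : Finset V) (R : ℕ) : Prop :=
  ∀ i ∈ X, ∀ j ∈ X, WithinDist G (R - 1) i j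

/-- `H` is a Hamiltonian of range `R` with respect to the graph `G`: a finite sum over
nonempty subsets `X` with `diam(X) ≤ R` of operators supported on `X`. -/
def IsRangeHam (G : SimpleGraph V) (R : ℕ) (H : Module.End ℂ (QState V)) : Prop :=
  ∃ h : Finset V → Module.End ℂ (QState V),
    (∀ X, SupportedOn (h X) ↑X) ∧
    (∀ X, h X ≠ 0 → X.Nonempty ∧ GDiamLE G X R) ∧
    H = ∑ X : Finset V, h X

/-- `H` is a `k`-local Hamiltonian of range `R` with respect to the graph `G`. -/
def IsKLocalRangeHam (G : SimpleGraph V) (k R : ℕ) (H : Module.End ℂ (QState V)) : Prop :=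
  ∃ h : Finset V → Module.End ℂ (QState V),
    (∀ X, SupportedOn (h X) ↑X) ∧
    (∀ X, h X ≠ 0 → X.Nonempty ∧ GDiamLE G X R ∧ X.card ≤ k) ∧
    H = ∑ X : Finset V, h X

/-- An invertible linear operator `M` is `δ`-locality-preserving with respect to `G` if
conjugation by `M` or `M⁻¹` increases the range of any operator by at most `δ`. -/
def LocalityPreserving (G : SimpleGraph V) (δ : ℕ) (M : QState V ≃ₗ[ℂ] QState V) : Prop :=
  ∀ R : ℕ, 0 < R → ∀ O : Module.End ℂ (QState V), IsRangeHam G R O →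
    IsRangeHam G (R + δ) (M.toLinearMap ∘ₗ O ∘ₗ M.symm.toLinearMap) ∧
    IsRangeHam G (R + δ) (M.symm.toLinearMap ∘ₗ O ∘ₗ M.toLinearMap)

end Defs

section Chain

/-- Distance between two sites of the open chain `{0, …, N-1}`. -/
def chainDist {N : ℕ} (i j : Fin N) : ℕ := ((i : ℤ) - (j : ℤ)).natAbs

/-- `diam(X) ≤ R` on the open chain: `diam(X) = 1 + max |i - j|`. -/
def ChainDiamLE {N : ℕ} (X : Finset (Fin N)) (R : ℕ) : Prop :=
  ∀ i ∈ X, ∀ j ∈ X, chainDist i j + 1 ≤ R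

/-- `H` is a Hamiltonian of range `R` on the open chain of `N` sites. -/
def IsChainRangeHam {N : ℕ} (R : ℕ) (H : Module.End ℂ (QState (Fin N))) : Prop :=
  ∃ h : Finset (Fin N) → Module.End ℂ (QState (Fin N)),
    (∀ X, SupportedOn (h X) ↑X) ∧
    (∀ X, h X ≠ 0 → X.Nonempty ∧ ChainDiamLE X R) ∧
    H = ∑ X : Finset (Fin N), h X

/-- `H` is a `k`-local Hamiltonian of range `R` on the open chain of `N` sites. -/
def IsChainKLocalRangeHam {N : ℕ} (k R : ℕ) (H : Module.End ℂ (QState (Fin N))) : Prop :=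
  ∃ h : Finset (Fin N) → Module.End ℂ (QState (Fin N)),
    (∀ X, SupportedOn (h X) ↑X) ∧
    (∀ X, h X ≠ 0 → X.Nonempty ∧ ChainDiamLE X R ∧ X.card ≤ k) ∧
    H = ∑ X : Finset (Fin N), h X

end Chain

end

noncomputable section Aux

namespace WAux

open Finset Classical

variable {V : Type*} [Fintype V] [DecidableEq V]

def f0 : V → Bool := fun _ => false

def dl (i : V) : V → Bool := Function.update f0 i true

lemma f0_apply (v : V) : f0 v = false := rfl

lemma dl_apply (i v : V) : dl i v = if v = i then true else false := by
  rcases eq_or_ne v i with rfl | h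
  · simp [dl]
  · simp [dl, Function.update_of_ne h, f0, h]

lemma dl_self (i : V) : dl i i = true := by simp [dl_apply]

lemma dl_of_ne {i v : V} (h : v ≠ i) : dl i v = false := by simp [dl_apply, h]

lemma dl_eq_true {i v : V} : dl i v = true ↔ v = i := by
  rcases eq_or_ne v i with rfl | h
  · simp [dl_self]
  · simp [dl_of_ne h, h]

lemma dl_ne_f0 (i : V) : dl i ≠ f0 := by
  intro h
  have h2 := congrFun h i
  rw [dl_self, f0_apply] at h2
  simp at h2

lemma dl_inj {i j : V} (h : dl i = dl j) : i = j := by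
  have h2 := congrFun h i
  rw [dl_self] at h2
  exact dl_eq_true.mp h2.symm

lemma basisVec_apply (f g : V → Bool) : basisVec f g = if g = f then 1 else 0 := rfl

/-- operator from a matrix -/
def OpML : ((V → Bool) → (V → Bool) → ℂ) →ₗ[ℂ] Module.End ℂ (QState V) where
  toFun c :=
    { toFun := fun ψ g => ∑ f : V → Bool, c g f * ψ f
      map_add' := fun ψ φ => by
        funext g
        simp [Pi.add_apply, mul_add, Finset.sum_add_distrib]
      map_smul' := fun a ψ => by
        funext g
        show ∑ f : V → Bool, c g f * (a * ψ f) = a * ∑ f : V → Bool, c g f * ψ f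
        rw [Finset.mul_sum]
        exact Finset.sum_congr rfl fun f _ => mul_left_comm _ _ _ }
  map_add' c c' := by
    refine LinearMap.ext fun ψ => ?_
    funext g
    show ∑ f : V → Bool, (c g f + c' g f) * ψ f
        = ∑ f : V → Bool, c g f * ψ f + ∑ f : V → Bool, c' g f * ψ f
    rw [← Finset.sum_add_distrib]
    exact Finset.sum_congr rfl fun f _ => add_mul _ _ _
  map_smul' a c := by
    refine LinearMap.ext fun ψ => ?_
    funext g
    show ∑ f : V → Bool, (a * c g f) * ψ f = a * ∑ f : V → Bool, c g f * ψ f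
    rw [Finset.mul_sum]
    exact Finset.sum_congr rfl fun f _ => mul_assoc _ _ _

lemma opml_apply (c : (V → Bool) → (V → Bool) → ℂ) (ψ : QState V) (g : V → Bool) :
    OpML c ψ g = ∑ f : V → Bool, c g f * ψ f := rfl

lemma opml_basis (c : (V → Bool) → (V → Bool) → ℂ) (f : V → Bool) :
    OpML c (basisVec f) = fun g => c g f := by
  funext g
  rw [opml_apply]
  simp [basisVec, mul_ite]

def mat (O : Module.End ℂ (QState V)) (g f : V → Bool) : ℂ := O (basisVec f) g

lemma expand (ψ : QState V) : ψ = ∑ f : V → Bool, ψ f • basisVec f := by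
  funext g
  rw [Finset.sum_apply]
  simp [basisVec, Pi.smul_apply, smul_eq_mul, mul_ite]

lemma opml_mat (O : Module.End ℂ (QState V)) : OpML (mat O) = O := by
  refine LinearMap.ext fun ψ => ?_
  have h : O ψ = ∑ f : V → Bool, ψ f • O (basisVec f) := by
    conv_lhs => rw [expand ψ, map_sum]
    exact Finset.sum_congr rfl fun f _ => map_smul O _ _
  funext g
  rw [h, Finset.sum_apply, opml_apply]
  exact Finset.sum_congr rfl fun f _ => by
    simp [mat, Pi.smul_apply, smul_eq_mul, mul_comm]

lemma mat_sum {ι : Type*} (s : Finset ι) (F : ι → Module.End ℂ (QState V)) (g f : V → Bool) :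
    mat (∑ t ∈ s, F t) g f = ∑ t ∈ s, mat (F t) g f := by
  simp [mat, LinearMap.sum_apply, Finset.sum_apply]

def W1 : QState V := ∑ i : V, basisVec (dl i)

lemma opml_W (c : (V → Bool) → (V → Bool) → ℂ) :
    OpML c W1 = fun g => ∑ i : V, c g (dl i) := by
  funext g
  rw [W1, map_sum, Finset.sum_apply]
  exact Finset.sum_congr rfl fun i _ => by rw [opml_basis]

lemma op_W1 (O : Module.End ℂ (QState V)) (g : V → Bool) :
    O W1 g = ∑ i : V, mat O g (dl i) := by
  conv_lhs => rw [← opml_mat O]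
  rw [opml_W]

lemma vac_eq : vac V = basisVec (f0 : V → Bool) := rfl

lemma update_false_eq_f0 {g : V → Bool} {i : V} (h : g i = true) :
    Function.update g i false = f0 ↔ g = dl i := by
  constructor
  · intro he
    funext v
    rcases eq_or_ne v i with rfl | hv
    · rw [h, dl_self]
    · have h2 := congrFun he v
      rw [Function.update_of_ne hv, f0_apply] at h2
      rw [h2, dl_of_ne hv]
  · intro he
    subst he
    funext v
    rcases eq_or_ne v i with rfl | hv
    · rw [Function.update_self, f0_apply]
    · rw [Function.update_of_ne hv, dl_of_ne hv, f0_apply]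

lemma WState_eq : WState V 1 = (W1 : QState V) := by
  rw [WState, pow_one, vac_eq, Sdag, LinearMap.sum_apply, W1]
  refine Finset.sum_congr rfl fun i _ => ?_
  funext g
  rw [creOp_apply]
  by_cases h : g i = true
  · rw [if_pos h]
    rw [basisVec_apply, basisVec_apply]
    have : Function.update g i false = (f0 : V → Bool) ↔ g = dl i := update_false_eq_f0 h
    by_cases h2 : g = dl i
    · rw [if_pos h2, if_pos (this.mpr h2)]
    · rw [if_neg h2, if_neg (fun hc => h2 (this.mp hc))]
  · rw [if_neg h, basisVec_apply, if_neg]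
    intro hc
    rw [hc, dl_self] at h
    exact h rfl

def ntOp (t : V) : Module.End ℂ (QState V) := creOp t * annOp t

lemma ntOp_mat (t : V) (g f : V → Bool) :
    mat (ntOp t) g f = if g = f ∧ f t = true then 1 else 0 := by
  have hstep : mat (ntOp t) g f =
      if g t = true then (annOp t (basisVec f)) (Function.update g t false) else 0 := rfl
  rw [hstep]
  by_cases hg : g t = true
  · rw [if_pos hg]
    have hann : (annOp t (basisVec f)) (Function.update g t false) =
        if (Function.update g t false) t = false then
          basisVec f (Function.update (Function.update g t false) t true) else 0 := rfl
    rw [hann, if_pos (Function.update_self t false g), Function.update_idem]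
    have hgg : Function.update g t true = g := by
      rw [← hg]; exact Function.update_eq_self t g
    rw [hgg, basisVec_apply]
    by_cases hgf : g = f
    · subst hgf
      rw [if_pos rfl, if_pos ⟨rfl, hg⟩]
    · rw [if_neg hgf, if_neg (fun hc => hgf hc.1)]
  · rw [if_neg hg]
    rw [if_neg]
    rintro ⟨rfl, hft⟩
    exact hg hft

lemma numOp_eq : numOp V = ∑ t : V, ntOp t := rfl

lemma mat_numOp (g f : V → Bool) :
    mat (numOp V) g f = if g = f then ((univ.filter (fun t => f t = true)).card : ℂ) else 0 := by
  rw [numOp_eq, mat_sum]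
  rw [Finset.sum_congr rfl (fun t _ => ntOp_mat t g f)]
  by_cases hgf : g = f
  · rw [if_pos hgf]
    have : ∀ t : V, (if g = f ∧ f t = true then (1:ℂ) else 0) =
        if f t = true then (1:ℂ) else 0 := by
      intro t
      by_cases hft : f t = true
      · rw [if_pos ⟨hgf, hft⟩, if_pos hft]
      · rw [if_neg (fun hc => hft hc.2), if_neg hft]
    rw [Finset.sum_congr rfl (fun t _ => this t)]
    rw [Finset.sum_boole]
  · rw [if_neg hgf]
    exact Finset.sum_eq_zero fun t _ => if_neg (fun hc => hgf hc.1)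


/-! SupportedOn closure lemmas -/

section Supp

variable {V : Type*} [Fintype V] [DecidableEq V]

lemma supportedOn_zero (X : Set V) : SupportedOn (0 : Module.End ℂ (QState V)) X := by
  constructor
  · intro f g _
    simp
  · intro f f' g g' _ _ _ _
    simp

lemma supportedOn_add {O1 O2 : Module.End ℂ (QState V)} {X : Set V}
    (h1 : SupportedOn O1 X) (h2 : SupportedOn O2 X) : SupportedOn (O1 + O2) X := by
  constructor
  · intro f g hd
    rw [LinearMap.add_apply, Pi.add_apply, h1.1 f g hd, h2.1 f g hd, add_zero]
  · intro f f' g g' a b c d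
    rw [LinearMap.add_apply, Pi.add_apply, LinearMap.add_apply, Pi.add_apply,
      h1.2 f f' g g' a b c d, h2.2 f f' g g' a b c d]

lemma supportedOn_neg {O : Module.End ℂ (QState V)} {X : Set V}
    (h : SupportedOn O X) : SupportedOn (-O) X := by
  constructor
  · intro f g hd
    rw [LinearMap.neg_apply, Pi.neg_apply, h.1 f g hd, neg_zero]
  · intro f f' g g' a b c d
    rw [LinearMap.neg_apply, Pi.neg_apply, LinearMap.neg_apply, Pi.neg_apply,
      h.2 f f' g g' a b c d]

lemma supportedOn_sub {O1 O2 : Module.End ℂ (QState V)} {X : Set V}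
    (h1 : SupportedOn O1 X) (h2 : SupportedOn O2 X) : SupportedOn (O1 - O2) X := by
  rw [sub_eq_add_neg]
  exact supportedOn_add h1 (supportedOn_neg h2)

lemma supportedOn_smul {O : Module.End ℂ (QState V)} {X : Set V} (c : ℂ)
    (h : SupportedOn O X) : SupportedOn (c • O) X := by
  constructor
  · intro f g hd
    rw [LinearMap.smul_apply, Pi.smul_apply, h.1 f g hd, smul_zero]
  · intro f f' g g' a b c' d
    rw [LinearMap.smul_apply, Pi.smul_apply, LinearMap.smul_apply, Pi.smul_apply,
      h.2 f f' g g' a b c' d]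

lemma supportedOn_sum {ι : Type*} (s : Finset ι) (F : ι → Module.End ℂ (QState V)) (X : Set V)
    (h : ∀ t ∈ s, SupportedOn (F t) X) : SupportedOn (∑ t ∈ s, F t) X := by
  classical
  induction s using Finset.induction_on with
  | empty => simpa using supportedOn_zero X
  | insert a s' hnot ih =>
    rw [Finset.sum_insert hnot]
    exact supportedOn_add (h a (Finset.mem_insert_self a s'))
      (ih fun t ht => h t (Finset.mem_insert_of_mem ht))

lemma supportedOn_mono {O : Module.End ℂ (QState V)} {X Y : Set V}
    (hXY : X ⊆ Y) (h : SupportedOn O X) : SupportedOn O Y := by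
  obtain ⟨h1, h2⟩ := h
  constructor
  · rintro f g ⟨i, hiY, hne⟩
    exact h1 f g ⟨i, fun hiX => hiY (hXY hiX), hne⟩
  · intro f f' g g' hff hgg hfg hf'g'
    by_cases hd : ∀ i, i ∉ X → f i = g i
    · have hd' : ∀ i, i ∉ X → f' i = g' i := by
        intro i hi
        by_cases hiY : i ∈ Y
        · rw [← hff i hiY, ← hgg i hiY]
          exact hd i hi
        · exact hf'g' i hiY
      exact h2 f f' g g' (fun i hi => hff i (hXY hi)) (fun i hi => hgg i (hXY hi))
        (fun i hi => hd i hi) (fun i hi => hd' i hi)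
    · push_neg at hd
      obtain ⟨i, hiX, hne⟩ := hd
      have hi' : f' i ≠ g' i := by
        by_cases hiY : i ∈ Y
        · rw [← hff i hiY, ← hgg i hiY]
          exact hne
        · exact absurd (hfg i hiY) hne
      rw [h1 f g ⟨i, hiX, hne⟩, h1 f' g' ⟨i, hiX, hi'⟩]

lemma supportedOn_one (X : Set V) : SupportedOn (1 : Module.End ℂ (QState V)) X := by
  have hmat : ∀ f g : V → Bool, (1 : Module.End ℂ (QState V)) (basisVec f) g
      = if g = f then 1 else 0 := by
    intro f g
    rfl
  constructor
  · rintro f g ⟨i, _, hne⟩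
    rw [hmat, if_neg (fun hc => hne (congrFun hc i).symm)]
  · intro f f' g g' hff hgg hfg hf'g'
    rw [hmat, hmat]
    by_cases hgf : g = f
    · rw [if_pos hgf, if_pos]
      funext v
      by_cases hv : v ∈ X
      · rw [← hgg v hv, ← hff v hv]
        exact congrFun hgf v
      · exact (hf'g' v hv).symm
    · rw [if_neg hgf, if_neg]
      intro hc
      apply hgf
      funext v
      by_cases hv : v ∈ X
      · rw [hgg v hv, hff v hv]
        exact congrFun hc v
      · exact (hfg v hv).symm

end Supp

/-! Graph lemmas -/

section Graph

variable {V : Type*} [Fintype V] [DecidableEq V] (G : SimpleGraph V)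

lemma within_refl (r : ℕ) (x : V) : WithinDist G r x x :=
  ⟨SimpleGraph.Walk.nil, by simp⟩

lemma within_symm {r : ℕ} {x y : V} (h : WithinDist G r x y) : WithinDist G r y x := by
  obtain ⟨w, hw⟩ := h
  exact ⟨w.reverse, by simpa using hw⟩

lemma within_mono {r r' : ℕ} (hrr : r ≤ r') {x y : V} (h : WithinDist G r x y) :
    WithinDist G r' x y := by
  obtain ⟨w, hw⟩ := h
  exact ⟨w, le_trans hw hrr⟩

lemma within_trans {a b : ℕ} {x y z : V} (h1 : WithinDist G a x y) (h2 : WithinDist G b y z) :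
    WithinDist G (a + b) x z := by
  obtain ⟨w1, hw1⟩ := h1
  obtain ⟨w2, hw2⟩ := h2
  exact ⟨w1.append w2, by rw [SimpleGraph.Walk.length_append]; omega⟩

lemma within_step {r : ℕ} {x u v : V} (h : WithinDist G r x u) (ha : G.Adj u v) :
    WithinDist G (r + 1) x v := by
  obtain ⟨w, hw⟩ := h
  exact ⟨w.concat ha, by rw [SimpleGraph.Walk.length_concat]; omega⟩

lemma adj_within {r : ℕ} (hr : 1 ≤ r) {u v : V} (h : G.Adj u v) : WithinDist G r u v :=
  ⟨SimpleGraph.Walk.cons h SimpleGraph.Walk.nil, by simpa using hr⟩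

def Ball (x : V) (r : ℕ) : Finset V := univ.filter (fun v => WithinDist G r x v)

lemma mem_Ball {x v : V} {r : ℕ} : v ∈ Ball G x r ↔ WithinDist G r x v := by
  simp [Ball]

lemma self_mem_Ball (x : V) (r : ℕ) : x ∈ Ball G x r := (mem_Ball (G := G)).mpr (within_refl G r x)

lemma ball_zero (x : V) : Ball G x 0 = {x} := by
  ext v
  rw [mem_Ball, Finset.mem_singleton]
  constructor
  · rintro ⟨w, hw⟩
    exact (SimpleGraph.Walk.eq_of_length_eq_zero (Nat.le_zero.mp hw)).symm
  · rintro rfl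
    exact within_refl G 0 v

lemma exists_last_edge {x v : V} (w : G.Walk x v) (hw : 1 ≤ w.length) :
    ∃ u, G.Adj u v ∧ WithinDist G (w.length - 1) x u := by
  induction w using SimpleGraph.Walk.concatRec with
  | Hnil => simp at hw
  | Hconcat p h _ =>
    exact ⟨_, h, ⟨p, by rw [SimpleGraph.Walk.length_concat]; omega⟩⟩

def nbF (x : V) : Finset V := univ.filter (fun v => G.Adj x v)

lemma card_nbF_le {Δ : ℕ} (hdeg : ∀ v : V, (G.neighborSet v).ncard ≤ Δ) (x : V) :
    (nbF G x).card ≤ Δ := by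
  have hcoe : ((nbF G x : Finset V) : Set V) = G.neighborSet x := by
    ext v
    simp [nbF, SimpleGraph.neighborSet]
  have := Set.ncard_coe_finset (nbF G x)
  rw [hcoe] at this
  rw [← this]
  exact hdeg x

lemma sphere_card {Δ : ℕ} (hdeg : ∀ v : V, (G.neighborSet v).ncard ≤ Δ) (x : V) :
    ∀ r : ℕ, (Ball G x (r+1) \ Ball G x r).card ≤ Δ^(r+1) := by
  intro r
  induction r with
  | zero =>
    have hsub : Ball G x 1 \ Ball G x 0 ⊆ nbF G x := by
      intro v hv
      rw [Finset.mem_sdiff, mem_Ball, mem_Ball] at hv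
      obtain ⟨⟨w, hw⟩, hnot⟩ := hv
      have h1 : 1 ≤ w.length := by
        by_contra hc
        exact hnot ⟨w, by omega⟩
      obtain ⟨u, hadj, hwu⟩ := exists_last_edge G w h1
      have : u = x := by
        obtain ⟨w2, hw2⟩ := hwu
        have : w2.length = 0 := by omega
        exact (SimpleGraph.Walk.eq_of_length_eq_zero this).symm
      subst this
      rw [nbF, Finset.mem_filter]
      exact ⟨Finset.mem_univ v, hadj⟩
    calc (Ball G x 1 \ Ball G x 0).card ≤ (nbF G x).card := Finset.card_le_card hsub
      _ ≤ Δ := card_nbF_le G hdeg x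
      _ = Δ^1 := (pow_one Δ).symm
  | succ r ih =>
    have hsub : Ball G x (r+2) \ Ball G x (r+1) ⊆
        (Ball G x (r+1) \ Ball G x r).biUnion (fun u => nbF G u) := by
      intro v hv
      rw [Finset.mem_sdiff, mem_Ball, mem_Ball] at hv
      obtain ⟨⟨w, hw⟩, hnot⟩ := hv
      have h1 : 1 ≤ w.length := by
        by_contra hc
        exact hnot ⟨w, by omega⟩
      obtain ⟨u, hadj, hwu⟩ := exists_last_edge G w h1
      have hu1 : WithinDist G (r+1) x u := by
        apply within_mono G _ hwu
        omega
      have hu0 : ¬ WithinDist G r x u := by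
        intro hc
        exact hnot (within_step G hc hadj)
      rw [Finset.mem_biUnion]
      refine ⟨u, ?_, ?_⟩
      · rw [Finset.mem_sdiff, mem_Ball, mem_Ball]
        exact ⟨hu1, hu0⟩
      · rw [nbF, Finset.mem_filter]
        exact ⟨Finset.mem_univ v, hadj⟩
    calc (Ball G x (r+2) \ Ball G x (r+1)).card
        ≤ ((Ball G x (r+1) \ Ball G x r).biUnion (fun u => nbF G u)).card :=
          Finset.card_le_card hsub
      _ ≤ ∑ u ∈ Ball G x (r+1) \ Ball G x r, (nbF G u).card := Finset.card_biUnion_le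
      _ ≤ ∑ _u ∈ Ball G x (r+1) \ Ball G x r, Δ :=
          Finset.sum_le_sum fun u _ => card_nbF_le G hdeg u
      _ = (Ball G x (r+1) \ Ball G x r).card * Δ := by rw [Finset.sum_const, smul_eq_mul]
      _ ≤ Δ^(r+1) * Δ := Nat.mul_le_mul_right Δ ih
      _ = Δ^(r+2) := by rw [← pow_succ]

lemma ball_card {Δ : ℕ} (hdeg : ∀ v : V, (G.neighborSet v).ncard ≤ Δ) (hΔ : 2 ≤ Δ) (x : V) :
    ∀ r : ℕ, (Ball G x r).card ≤ Δ^(r+1) := by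
  intro r
  induction r with
  | zero =>
    rw [ball_zero, Finset.card_singleton, pow_one]
    omega
  | succ r ih =>
    have hsub : Ball G x (r+1) ⊆ Ball G x r ∪ (Ball G x (r+1) \ Ball G x r) := by
      intro v hv
      rw [Finset.mem_union, Finset.mem_sdiff]
      by_cases h : v ∈ Ball G x r
      · exact Or.inl h
      · exact Or.inr ⟨hv, h⟩
    calc (Ball G x (r+1)).card ≤ (Ball G x r ∪ (Ball G x (r+1) \ Ball G x r)).card :=
          Finset.card_le_card hsub
      _ ≤ (Ball G x r).card + (Ball G x (r+1) \ Ball G x r).card := Finset.card_union_le _ _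
      _ ≤ Δ^(r+1) + Δ^(r+1) := Nat.add_le_add ih (sphere_card G hdeg x r)
      _ = 2 * Δ^(r+1) := by omega
      _ ≤ Δ * Δ^(r+1) := Nat.mul_le_mul_right _ hΔ
      _ = Δ^(r+2) := by rw [pow_succ]; ring

lemma exists_far_of_card (x : V) (r : ℕ) (hcard : (Ball G x r).card < Fintype.card V) :
    ∃ i : V, ¬ WithinDist G r x i := by
  have h : ((Ball G x r)ᶜ : Finset V).Nonempty := by
    rw [← Finset.card_pos, Finset.card_compl]
    omega
  obtain ⟨i, hi⟩ := h
  rw [Finset.mem_compl, mem_Ball] at hi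
  exact ⟨i, hi⟩

end Graph

/-! Structure lemmas for a range-R family -/

section Main

variable {V : Type*} [Fintype V] [DecidableEq V]

/-- Context: a range-`R` family `k` whose sum `K` kills the W state and has zero
vacuum diagonal element, on a graph with far-away points. -/
structure Ctx (G : SimpleGraph V) (R : ℕ) (k : Finset V → Module.End ℂ (QState V)) : Prop where
  hR : 0 < R
  hks : ∀ X, SupportedOn (k X) ↑X
  hkc : ∀ X, k X ≠ 0 → X.Nonempty ∧ GDiamLE G X R
  heig : ∀ g : V → Bool, ∑ i : V, mat (∑ X : Finset V, k X) g (dl i) = 0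
  hdg0 : mat (∑ X : Finset V, k X) f0 f0 = 0
  hfar : ∀ t : V, ∃ i : V, ¬ WithinDist G (3*R) t i
  htri : ∃ x y z : V, ¬ WithinDist G (2*R-2) x y ∧ ¬ WithinDist G (2*R-2) x z ∧
    ¬ WithinDist G (2*R-2) y z

variable {G : SimpleGraph V} {R : ℕ} {k : Finset V → Module.End ℂ (QState V)}

lemma bool_fe (b : Bool) : b = false ∨ b = true := by
  cases b
  · exact Or.inl rfl
  · exact Or.inr rfl

/-- matrix of the total operator -/
def MK (k : Finset V → Module.End ℂ (QState V)) (g f : V → Bool) : ℂ :=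
  mat (∑ X : Finset V, k X) g f

lemma MK_eq (g f : V → Bool) : MK k g f = ∑ X : Finset V, mat (k X) g f := by
  rw [MK, mat_sum]

lemma heig' (C : Ctx G R k) (g : V → Bool) : ∑ i : V, MK k g (dl i) = 0 := C.heig g

lemma hdg0' (C : Ctx G R k) : MK k f0 f0 = 0 := C.hdg0

lemma lightcone (C : Ctx G R k) {f g : V → Bool} {u v : V}
    (hu : f u ≠ g u) (hv : f v ≠ g v) (huv : ¬ WithinDist G (R-1) u v) :
    MK k g f = 0 := by
  rw [MK_eq]
  refine Finset.sum_eq_zero fun X _ => ?_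
  by_cases hX : k X = 0
  · rw [hX]
    simp [mat]
  · obtain ⟨hne, hdiam⟩ := C.hkc X hX
    by_cases huX : u ∈ X
    · by_cases hvX : v ∈ X
      · exact absurd (hdiam u huX v hvX) huv
      · exact (C.hks X).1 f g ⟨v, by simpa using hvX, hv⟩
    · exact (C.hks X).1 f g ⟨u, by simpa using huX, hu⟩

lemma spectator (C : Ctx G R k) {f g f' g' : V → Bool} (d : V) (hd : f d ≠ g d)
    (hf : ∀ v, WithinDist G (R-1) d v → f v = f' v)
    (hg : ∀ v, WithinDist G (R-1) d v → g v = g' v)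
    (hfg : ∀ v, ¬ WithinDist G (R-1) d v → f v = g v)
    (hfg' : ∀ v, ¬ WithinDist G (R-1) d v → f' v = g' v) :
    MK k g f = MK k g' f' := by
  have hdiff : ∀ v, f v ≠ g v ↔ f' v ≠ g' v := by
    intro v
    by_cases hv : WithinDist G (R-1) d v
    · rw [hf v hv, hg v hv]
    · simp [hfg v hv, hfg' v hv]
  rw [MK_eq, MK_eq]
  refine Finset.sum_congr rfl fun X _ => ?_
  by_cases hX : k X = 0
  · rw [hX]
    simp [mat]
  obtain ⟨hne, hdiam⟩ := C.hkc X hX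
  by_cases hout : ∀ v, v ∉ X → f v = g v
  · have hdX : d ∈ X := by
      by_contra h
      exact hd (hout d h)
    have hballX : ∀ v ∈ X, WithinDist G (R-1) d v := fun v hv => hdiam d hdX v hv
    have hout' : ∀ v, v ∉ X → f' v = g' v := by
      intro v hv
      by_cases hw : WithinDist G (R-1) d v
      · rw [← hf v hw, ← hg v hw]
        exact hout v hv
      · exact hfg' v hw
    exact (C.hks X).2 f f' g g' (fun v hv => hf v (hballX v hv))
      (fun v hv => hg v (hballX v hv)) hout hout'
  · push_neg at hout
    obtain ⟨v, hvX, hvne⟩ := hout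
    show (k X) (basisVec f) g = (k X) (basisVec f') g'
    rw [(C.hks X).1 f g ⟨v, by simpa using hvX, hvne⟩,
      (C.hks X).1 f' g' ⟨v, by simpa using hvX, (hdiff v).mp hvne⟩]

/-- double excitation config -/
def pr2 (u v : V) : V → Bool := Function.update (dl u) v true

lemma pr2_apply (u v w : V) : pr2 u v w = true ↔ (w = u ∨ w = v) := by
  rcases eq_or_ne w v with rfl | hw
  · simp [pr2]
  · rw [pr2, Function.update_of_ne hw, dl_eq_true]
    simp [hw]

lemma pr2_false {u v w : V} (hu : w ≠ u) (hv : w ≠ v) : pr2 u v w = false := by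
  rcases bool_fe (pr2 u v w) with h | h
  · exact h
  · rcases (pr2_apply u v w).mp h with h' | h'
    · exact absurd h' hu
    · exact absurd h' hv

/-- the vacuum-column amplitude of a single excitation -/
def muv (k : Finset V → Module.End ℂ (QState V)) (x : V) : ℂ := MK k (dl x) f0

lemma mu_pair (C : Ctx G R k) {u v : V} (huv : ¬ WithinDist G (R-1) u v) :
    muv k u + muv k v = 0 := by
  have hne : u ≠ v := by
    rintro rfl
    exact huv (within_refl G _ u)
  have h0 := heig' C (pr2 u v)
  have hterm : ∀ j, j ≠ u → j ≠ v → MK k (pr2 u v) (dl j) = 0 := by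
    intro j hju hjv
    refine lightcone C (u := u) (v := v) ?_ ?_ huv
    · rw [dl_of_ne (Ne.symm hju), (pr2_apply u v u).mpr (Or.inl rfl)]
      simp
    · rw [dl_of_ne (Ne.symm hjv), (pr2_apply u v v).mpr (Or.inr rfl)]
      simp
  have hsum : ∑ j : V, MK k (pr2 u v) (dl j) =
      MK k (pr2 u v) (dl u) + MK k (pr2 u v) (dl v) := by
    have hsub : ∑ j ∈ ({u, v} : Finset V), MK k (pr2 u v) (dl j)
        = ∑ j : V, MK k (pr2 u v) (dl j) := by
      refine Finset.sum_subset (Finset.subset_univ _) ?_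
      intro j _ hj
      rw [Finset.mem_insert, Finset.mem_singleton] at hj
      push_neg at hj
      exact hterm j hj.1 hj.2
    rw [Finset.sum_pair hne] at hsub
    exact hsub.symm
  have h1 : MK k (pr2 u v) (dl u) = muv k v := by
    refine spectator C (f := dl u) (g := pr2 u v) (f' := f0) (g' := dl v) v ?_ ?_ ?_ ?_ ?_
    · rw [dl_of_ne (Ne.symm hne), (pr2_apply u v v).mpr (Or.inr rfl)]
      simp
    · intro w hw
      rw [f0_apply, dl_of_ne]
      intro hc
      subst hc
      exact huv (within_symm G hw)
    · intro w hw
      rcases eq_or_ne w v with rfl | hwv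
      · rw [(pr2_apply u w w).mpr (Or.inr rfl), dl_self]
      · rw [dl_of_ne hwv]
        rcases eq_or_ne w u with rfl | hwu
        · exact absurd (within_symm G hw) huv
        · rw [pr2_false hwu hwv]
    · intro w hw
      rcases eq_or_ne w u with rfl | hwu
      · rw [dl_self, (pr2_apply w v w).mpr (Or.inl rfl)]
      · rw [dl_of_ne hwu]
        rcases eq_or_ne w v with rfl | hwv
        · exact absurd (within_refl G _ w) hw
        · rw [pr2_false hwu hwv]
    · intro w hw
      rw [f0_apply, dl_of_ne]
      rintro rfl
      exact hw (within_refl G _ w)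
  have h2 : MK k (pr2 u v) (dl v) = muv k u := by
    refine spectator C (f := dl v) (g := pr2 u v) (f' := f0) (g' := dl u) u ?_ ?_ ?_ ?_ ?_
    · rw [dl_of_ne hne, (pr2_apply u v u).mpr (Or.inl rfl)]
      simp
    · intro w hw
      rw [f0_apply, dl_of_ne]
      intro hc
      subst hc
      exact huv hw
    · intro w hw
      rcases eq_or_ne w u with rfl | hwu
      · rw [(pr2_apply w v w).mpr (Or.inl rfl), dl_self]
      · rw [dl_of_ne hwu]
        rcases eq_or_ne w v with rfl | hwv
        · exact absurd hw huv
        · rw [pr2_false hwu hwv]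
    · intro w hw
      rcases eq_or_ne w v with rfl | hwv
      · rw [dl_self, (pr2_apply u w w).mpr (Or.inr rfl)]
      · rw [dl_of_ne hwv]
        rcases eq_or_ne w u with rfl | hwu
        · exact absurd (within_refl G _ w) hw
        · rw [pr2_false hwu hwv]
    · intro w hw
      rw [f0_apply, dl_of_ne]
      rintro rfl
      exact hw (within_refl G _ w)
  rw [hsum, h1, h2] at h0
  linear_combination h0

lemma mu_zero (C : Ctx G R k) (w : V) : muv k w = 0 := by
  obtain ⟨x, y, z, hxy, hxz, hyz⟩ := C.htri
  have hR := C.hR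
  have hmono : ∀ a b : V, WithinDist G (R-1) a b → WithinDist G (2*R-2) a b :=
    fun a b h => within_mono G (by omega) h
  have hxy' : muv k x + muv k y = 0 := mu_pair C (fun h => hxy (hmono _ _ h))
  have hxz' : muv k x + muv k z = 0 := mu_pair C (fun h => hxz (hmono _ _ h))
  have hyz' : muv k y + muv k z = 0 := mu_pair C (fun h => hyz (hmono _ _ h))
  have hx0 : muv k x = 0 := by linear_combination (hxy' + hxz' - hyz') / 2
  have hy0 : muv k y = 0 := by linear_combination hxy' - hx0
  by_cases hwx : WithinDist G (R-1) w x
  · by_cases hwy : WithinDist G (R-1) w y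
    · exfalso
      apply hxy
      exact within_mono G (by omega) (within_trans G (within_symm G hwx) hwy)
    · have h := mu_pair C hwy
      rw [hy0] at h
      linear_combination h
  · have h := mu_pair C hwx
    rw [hx0] at h
    linear_combination h

lemma vaccol_two (C : Ctx G R k) {g : V → Bool}
    (hclu : ∀ u v, g u = true → g v = true → WithinDist G (R-1) u v)
    {u0 c : V} (hu0 : g u0 = true) (hc : g c = true) (hne : u0 ≠ c) :
    MK k g f0 = 0 := by
  obtain ⟨i, hi⟩ := C.hfar c
  have hR := C.hR
  have hgi : g i = false := by
    rcases bool_fe (g i) with h | h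
    · exact h
    · exact absurd (within_mono G (by omega) (hclu c i hc h)) hi
  have hvne : ∀ v, g v = true → v ≠ i := by
    intro v hv hvi
    subst hvi
    rw [hv] at hgi
    exact absurd hgi (by simp)
  have hballi : ∀ v, WithinDist G (R-1) c v → v ≠ i := by
    intro v hv hvi
    subst hvi
    exact hi (within_mono G (by omega) hv)
  set g' : V → Bool := Function.update g i true with hg'def
  have hg'app : ∀ v, v ≠ i → g' v = g v := fun v hv => Function.update_of_ne hv _ _
  have hg'i : g' i = true := Function.update_self i true g
  have h0 := heig' C g'
  have hterm : ∀ j, j ≠ i → MK k g' (dl j) = 0 := by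
    intro j hji
    rcases eq_or_ne j c with rfl | hjc
    · refine lightcone C (u := u0) (v := i) ?_ ?_ ?_
      · rw [dl_of_ne hne, hg'app u0 (hvne u0 hu0), hu0]
        simp
      · rw [dl_of_ne (Ne.symm hji), hg'i]
        simp
      · intro hc2
        exact hi (within_mono G (by omega) (within_trans G (hclu j u0 hc hu0) hc2))
    · refine lightcone C (u := c) (v := i) ?_ ?_ ?_
      · rw [dl_of_ne (Ne.symm hjc), hg'app c (hvne c hc), hc]
        simp
      · rw [dl_of_ne (Ne.symm hji), hg'i]
        simp
      · intro hc2
        exact hi (within_mono G (by omega) hc2)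
  have hji : MK k g' (dl i) = MK k g f0 := by
    refine spectator C (f := dl i) (g := g') (f' := f0) (g' := g) c ?_ ?_ ?_ ?_ ?_
    · rw [dl_of_ne (fun h => (hvne c hc) h), hg'app c (hvne c hc), hc]
      simp
    · intro v hv
      rw [f0_apply, dl_of_ne (hballi v hv)]
    · intro v hv
      exact hg'app v (hballi v hv)
    · intro v hv
      rcases eq_or_ne v i with rfl | hvi
      · rw [dl_self, hg'i]
      · rw [dl_of_ne hvi, hg'app v hvi]
        rcases bool_fe (g v) with h | h
        · rw [h]
        · exact absurd (hclu c v hc h) hv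
    · intro v hv
      rw [f0_apply]
      rcases bool_fe (g v) with h | h
      · rw [h]
      · exact absurd (hclu c v hc h) hv
  have hsum : ∑ j : V, MK k g' (dl j) = MK k g' (dl i) := by
    refine Finset.sum_eq_single_of_mem i (Finset.mem_univ i) ?_
    intro j _ hj
    exact hterm j hj
  rw [hsum, hji] at h0
  exact h0

lemma vaccol (C : Ctx G R k) {g : V → Bool} (hg : g ≠ f0) : MK k g f0 = 0 := by
  by_cases hclu : ∀ u v, g u = true → g v = true → WithinDist G (R-1) u v
  · have hex : ∃ c, g c = true := by
      by_contra hcon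
      push_neg at hcon
      apply hg
      funext v
      rw [f0_apply]
      rcases bool_fe (g v) with h | h
      · exact h
      · exact absurd h (hcon v)
    obtain ⟨c, hc⟩ := hex
    by_cases h2 : ∃ u0, g u0 = true ∧ u0 ≠ c
    · obtain ⟨u0, hu0, hne⟩ := h2
      exact vaccol_two C hclu hu0 hc hne
    · push_neg at h2
      have hgc : g = dl c := by
        funext v
        rcases eq_or_ne v c with rfl | hv
        · rw [hc, dl_self]
        · rw [dl_of_ne hv]
          rcases bool_fe (g v) with h | h
          · exact h
          · exact absurd (h2 v h) (by simp [hv])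
      rw [hgc]
      exact mu_zero C c
  · push_neg at hclu
    obtain ⟨u, v, hu, hv, hnw⟩ := hclu
    refine lightcone C (f := f0) (u := u) (v := v) ?_ ?_ hnw
    · rw [f0_apply, hu]
      simp
    · rw [f0_apply, hv]
      simp

end Main

/-! Pieces -/

section Pieces

variable {V : Type*} [Fintype V] [DecidableEq V]
variable {G : SimpleGraph V} {R : ℕ} {k : Finset V → Module.End ℂ (QState V)}

lemma opml_basis' (c : (V → Bool) → (V → Bool) → ℂ) (f g : V → Bool) :
    OpML c (basisVec f) g = c g f := by
  rw [opml_basis]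

def dcfg (g f : V → Bool) : V → Bool := fun v => g v != f v

lemma dcfg_true {g f : V → Bool} {v : V} : dcfg g f v = true ↔ g v ≠ f v := bne_iff_ne

lemma dcfg_false {g f : V → Bool} {v : V} : dcfg g f v = false ↔ g v = f v := by
  cases hg : g v <;> cases hf : f v <;> simp [dcfg, hg, hf]

lemma dcfg_eq_f0 {g f : V → Bool} : dcfg g f = f0 ↔ g = f := by
  constructor
  · intro h
    funext v
    exact dcfg_false.mp (by rw [h, f0_apply])
  · rintro rfl
    funext v
    rw [f0_apply]
    exact dcfg_false.mpr rfl

def suppF (p : V → Bool) : Finset V := univ.filter (fun v => p v = true)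

lemma mem_suppF {p : V → Bool} {v : V} : v ∈ suppF p ↔ p v = true := by
  simp [suppF]

lemma suppF_f0 : suppF (f0 : V → Bool) = ∅ := by
  ext v
  simp [mem_suppF, f0_apply]

lemma suppF_dl (i : V) : suppF (dl i) = {i} := by
  ext v
  rw [mem_suppF, Finset.mem_singleton, dl_eq_true]

lemma suppF_nonempty {p : V → Bool} (hp : p ≠ f0) : (suppF p).Nonempty := by
  by_contra h
  rw [Finset.not_nonempty_iff_eq_empty] at h
  apply hp
  funext v
  rw [f0_apply]
  rcases bool_fe (p v) with h' | h'
  · exact h'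
  · exact absurd (mem_suppF.mpr h') (by rw [h]; exact Finset.notMem_empty v)

def ctrP [Nonempty V] (D : V → Bool) : V :=
  if h : ∃ v, D v = true then h.choose else Classical.arbitrary V

lemma ctrP_spec [Nonempty V] {D : V → Bool} (hD : D ≠ f0) : D (ctrP D) = true := by
  have h : ∃ v, D v = true := by
    obtain ⟨v, hv⟩ := suppF_nonempty hD
    exact ⟨v, mem_suppF.mp hv⟩
  rw [ctrP, dif_pos h]
  exact h.choose_spec

lemma ctrP_dl [Nonempty V] (i : V) : ctrP (dl i) = i :=
  dl_eq_true.mp (ctrP_spec (dl_ne_f0 i))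

def cDf (k : Finset V → Module.End ℂ (QState V)) (D : V → Bool) (g f : V → Bool) : ℂ :=
  if dcfg g f = D then MK k g f else 0

def wD (k : Finset V → Module.End ℂ (QState V)) (D p : V → Bool) : ℂ :=
  ∑ i : V, cDf k D p (dl i)

def EW (p : V → Bool) (g f : V → Bool) : ℂ :=
  if (∀ v, p v = true → g v = true) ∧ (∀ v, p v = false → g v = f v) ∧
      (suppF p ∩ suppF f).card = 1
    then ((suppF p).card : ℂ)⁻¹ else 0

def AjM (j : V) (g f : V → Bool) : ℂ :=
  if f j = true ∧ g = Function.update f j false then 1 else 0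

def corrD [Nonempty V] (k : Finset V → Module.End ℂ (QState V)) (D : V → Bool) :
    Module.End ℂ (QState V) :=
  (∑ p ∈ univ.filter (fun q : V → Bool => q ≠ f0), wD k D p • OpML (EW p)) +
    wD k D f0 • OpML (AjM (ctrP D))

def KD' [Nonempty V] (k : Finset V → Module.End ℂ (QState V)) (D : V → Bool) :
    Module.End ℂ (QState V) :=
  OpML (cDf k D) - corrD k D

def mkX (k : Finset V → Module.End ℂ (QState V)) (X : Finset V) (g : V → Bool) : ℂ :=
  mat (k X) g g

def uX (k : Finset V → Module.End ℂ (QState V)) (X : Finset V) (g : V → Bool) : ℂ :=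
  mkX k X g - mkX k X f0 - ∑ i ∈ suppF g, (mkX k X (dl i) - mkX k X f0)

def DgX (k : Finset V → Module.End ℂ (QState V)) (X : Finset V) : Module.End ℂ (QState V) :=
  OpML (fun g f => if g = f then uX k X g else 0)

def nuj (k : Finset V → Module.End ℂ (QState V)) (j : V) : ℂ := MK k f0 (dl j)

/-! EW lemmas -/

lemma EW_supported (p : V → Bool) : SupportedOn (OpML (EW p)) ↑(suppF p) := by
  constructor
  · rintro f g ⟨v, hv, hne⟩
    rw [Finset.mem_coe, mem_suppF] at hv
    have hpv : p v = false := by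
      rcases bool_fe (p v) with h | h
      · exact h
      · exact absurd h hv
    rw [opml_basis', EW, if_neg]
    rintro ⟨_, h2, _⟩
    exact hne (h2 v hpv).symm
  · intro f f' g g' hff hgg hfg hf'g'
    rw [opml_basis', opml_basis']
    have hmem : ∀ v, p v = true → v ∈ (↑(suppF p) : Set V) := by
      intro v hv
      rw [Finset.mem_coe, mem_suppF]
      exact hv
    have hnot : ∀ v, p v = false → v ∉ (↑(suppF p) : Set V) := by
      intro v hv hc
      rw [Finset.mem_coe, mem_suppF] at hc
      rw [hv] at hc
      exact absurd hc (by simp)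
    have hc1 : (∀ v, p v = true → g v = true) ↔ (∀ v, p v = true → g' v = true) := by
      refine forall_congr' fun v => ?_
      constructor
      · intro h hv
        rw [← hgg v (hmem v hv)]
        exact h hv
      · intro h hv
        rw [hgg v (hmem v hv)]
        exact h hv
    have hc2l : ∀ v, p v = false → g v = f v := fun v hv => (hfg v (hnot v hv)).symm
    have hc2r : ∀ v, p v = false → g' v = f' v := fun v hv => (hf'g' v (hnot v hv)).symm
    have hc3 : suppF p ∩ suppF f = suppF p ∩ suppF f' := by
      ext v
      rw [Finset.mem_inter, Finset.mem_inter, mem_suppF, mem_suppF, mem_suppF]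
      constructor
      · rintro ⟨h1, h2⟩
        exact ⟨h1, by rw [← hff v (hmem v h1)]; exact h2⟩
      · rintro ⟨h1, h2⟩
        exact ⟨h1, by rw [hff v (hmem v h1)]; exact h2⟩
    rw [EW, EW]
    by_cases h : (∀ v, p v = true → g v = true) ∧ (∀ v, p v = false → g v = f v) ∧
        (suppF p ∩ suppF f).card = 1
    · rw [if_pos h, if_pos ⟨hc1.mp h.1, fun v hv => hc2r v hv, by rw [← hc3]; exact h.2.2⟩]
    · rw [if_neg h, if_neg]
      rintro ⟨h1, _, h3⟩
      exact h ⟨hc1.mpr h1, fun v hv => hc2l v hv, by rw [hc3]; exact h3⟩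

lemma inter_suppF_dl (p : V → Bool) (i : V) :
    (suppF p ∩ suppF (dl i)).card = if p i = true then 1 else 0 := by
  rw [suppF_dl]
  by_cases hpi : p i = true
  · rw [if_pos hpi]
    have : suppF p ∩ {i} = {i} := by
      ext v
      rw [Finset.mem_inter, Finset.mem_singleton]
      constructor
      · rintro ⟨_, h⟩
        exact h
      · rintro rfl
        exact ⟨mem_suppF.mpr hpi, rfl⟩
    rw [this, Finset.card_singleton]
  · rw [if_neg hpi]
    have : suppF p ∩ {i} = ∅ := by
      ext v
      rw [Finset.mem_inter, Finset.mem_singleton]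
      simp only [Finset.notMem_empty, iff_false]
      rintro ⟨h1, rfl⟩
      exact hpi (mem_suppF.mp h1)
    rw [this, Finset.card_empty]

lemma EW_W {p : V → Bool} (hp : p ≠ f0) (g : V → Bool) :
    ∑ i : V, EW p g (dl i) = if g = p then 1 else 0 := by
  have hcard0 : (suppF p).card ≠ 0 := by
    have := Finset.card_pos.mpr (suppF_nonempty hp)
    omega
  by_cases hgp : g = p
  · subst hgp
    rw [if_pos rfl]
    have hterm : ∀ i : V, EW g g (dl i) =
        if i ∈ suppF g then ((suppF g).card : ℂ)⁻¹ else 0 := by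
      intro i
      by_cases hpi : g i = true
      · rw [if_pos (mem_suppF.mpr hpi), EW, if_pos]
        refine ⟨fun v hv => hv, ?_, ?_⟩
        · intro v hv
          rw [dl_of_ne]
          · exact hv
          · rintro rfl
            rw [hpi] at hv
            exact absurd hv (by simp)
        · rw [inter_suppF_dl, if_pos hpi]
      · rw [if_neg (fun hc => hpi (mem_suppF.mp hc)), EW, if_neg]
        rintro ⟨_, _, h3⟩
        rw [inter_suppF_dl, if_neg hpi] at h3
        exact absurd h3 (by omega)
    rw [Finset.sum_congr rfl (fun i _ => hterm i)]
    rw [Finset.sum_ite_mem, Finset.univ_inter, Finset.sum_const, nsmul_eq_mul]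
    exact mul_inv_cancel₀ (Nat.cast_ne_zero.mpr hcard0)
  · rw [if_neg hgp]
    refine Finset.sum_eq_zero fun i _ => ?_
    rw [EW, if_neg]
    rintro ⟨h1, h2, h3⟩
    apply hgp
    have hpi : p i = true := by
      rw [inter_suppF_dl] at h3
      rcases bool_fe (p i) with h | h
      · rw [if_neg (by rw [h]; simp)] at h3
        exact absurd h3 (by omega)
      · exact h
    funext v
    rcases bool_fe (p v) with h | h
    · rw [h, h2 v h, dl_of_ne]
      rintro rfl
      rw [hpi] at h
      exact absurd h (by simp)
    · rw [h, h1 v h]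

lemma EW_vac (p : V → Bool) (g : V → Bool) : EW p g f0 = 0 := by
  rw [EW, if_neg]
  rintro ⟨_, _, h3⟩
  rw [suppF_f0, Finset.inter_empty, Finset.card_empty] at h3
  exact absurd h3 (by omega)

lemma EW_dl_eq (t : V) (g f : V → Bool) :
    EW (dl t) g f = if g = f ∧ f t = true then 1 else 0 := by
  have hiff : ((∀ v, dl t v = true → g v = true) ∧ (∀ v, dl t v = false → g v = f v) ∧
      (suppF (dl t) ∩ suppF f).card = 1) ↔ (g = f ∧ f t = true) := by
    constructor
    · rintro ⟨h1, h2, h3⟩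
      have hft : f t = true := by
        rw [suppF_dl] at h3
        rcases bool_fe (f t) with h | h
        · exfalso
          have : ({t} : Finset V) ∩ suppF f = ∅ := by
            ext v
            rw [Finset.mem_inter, Finset.mem_singleton]
            simp only [Finset.notMem_empty, iff_false]
            rintro ⟨rfl, hc⟩
            rw [mem_suppF] at hc
            rw [h] at hc
            exact absurd hc (by simp)
          rw [this, Finset.card_empty] at h3
          exact absurd h3 (by omega)
        · exact h
      refine ⟨?_, hft⟩
      funext v
      rcases eq_or_ne v t with rfl | hv
      · rw [h1 v (dl_self v), hft]
      · exact h2 v (dl_of_ne hv)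
    · rintro ⟨heq, hft⟩
      refine ⟨?_, ?_, ?_⟩
      · intro v hv
        rw [dl_eq_true.mp hv, heq]
        exact hft
      · intro v _
        rw [heq]
      · have hts : ({t} : Finset V) ∩ suppF f = {t} := by
          ext v
          rw [Finset.mem_inter, Finset.mem_singleton]
          constructor
          · rintro ⟨h, _⟩
            exact h
          · rintro rfl
            exact ⟨rfl, mem_suppF.mpr hft⟩
        rw [suppF_dl, hts, Finset.card_singleton]
  rw [EW]
  by_cases h : g = f ∧ f t = true
  · rw [if_pos (hiff.mpr h), if_pos h, suppF_dl, Finset.card_singleton, Nat.cast_one, inv_one]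
  · rw [if_neg (fun hc => h (hiff.mp hc)), if_neg h]

end Pieces

/-! AjM lemmas -/

section Pieces2

variable {V : Type*} [Fintype V] [DecidableEq V]
variable {G : SimpleGraph V} {R : ℕ} {k : Finset V → Module.End ℂ (QState V)}

lemma update_dl_self (j : V) : Function.update (dl j) j false = f0 := by
  funext v
  rcases eq_or_ne v j with rfl | hv
  · rw [Function.update_self, f0_apply]
  · rw [Function.update_of_ne hv, dl_of_ne hv, f0_apply]

lemma AjM_cond_iff {j : V} {f g : V → Bool} (hout : ∀ v, v ≠ j → f v = g v) :
    (f j = true ∧ g = Function.update f j false) ↔ (f j = true ∧ g j = false) := by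
  constructor
  · rintro ⟨h1, h2⟩
    refine ⟨h1, ?_⟩
    rw [h2, Function.update_self]
  · rintro ⟨h1, h2⟩
    refine ⟨h1, ?_⟩
    funext v
    rcases eq_or_ne v j with rfl | hv
    · rw [h2, Function.update_self]
    · rw [Function.update_of_ne hv]
      exact (hout v hv).symm

lemma AjM_supported (j : V) : SupportedOn (OpML (AjM j)) ↑({j} : Finset V) := by
  constructor
  · rintro f g ⟨v, hv, hne⟩
    rw [Finset.coe_singleton, Set.mem_singleton_iff] at hv
    rw [opml_basis', AjM, if_neg]
    rintro ⟨_, rfl⟩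
    exact hne (Function.update_of_ne hv false f).symm
  · intro f f' g g' hff hgg hfg hf'g'
    have hjm : j ∈ (↑({j} : Finset V) : Set V) := by
      rw [Finset.coe_singleton]
      exact Set.mem_singleton j
    have houtm : ∀ v, v ≠ j → v ∉ (↑({j} : Finset V) : Set V) := by
      intro v hv
      rw [Finset.coe_singleton, Set.mem_singleton_iff]
      exact hv
    rw [opml_basis', opml_basis', AjM, AjM]
    rw [if_congr (AjM_cond_iff (fun v hv => hfg v (houtm v hv))) rfl rfl]
    rw [if_congr (AjM_cond_iff (fun v hv => hf'g' v (houtm v hv))) rfl rfl]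
    rw [hff j hjm, hgg j hjm]

lemma Aj_W (j : V) (g : V → Bool) :
    ∑ i : V, AjM j g (dl i) = if g = f0 then 1 else 0 := by
  have hterm : ∀ i, i ≠ j → AjM j g (dl i) = 0 := by
    intro i hij
    rw [AjM, if_neg]
    rintro ⟨h1, _⟩
    rw [dl_of_ne (Ne.symm hij)] at h1
    exact absurd h1 (by simp)
  have hj : AjM j g (dl j) = if g = f0 then 1 else 0 := by
    rw [AjM, update_dl_self]
    by_cases hg : g = f0
    · rw [if_pos ⟨dl_self j, hg⟩, if_pos hg]
    · rw [if_neg (fun hc => hg hc.2), if_neg hg]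
  rw [Finset.sum_eq_single_of_mem j (Finset.mem_univ j) (fun i _ hij => hterm i hij), hj]

lemma Aj_vac (j : V) (g : V → Bool) : AjM j g f0 = 0 := by
  rw [AjM, if_neg]
  rintro ⟨h1, _⟩
  rw [f0_apply] at h1
  exact absurd h1 (by simp)

/-! cDf lemmas -/

lemma cDf_vac (C : Ctx G R k) {D : V → Bool} (hD : D ≠ f0) (g : V → Bool) :
    cDf k D g f0 = 0 := by
  rw [cDf]
  by_cases hcd : dcfg g f0 = D
  · rw [if_pos hcd]
    refine vaccol C ?_
    obtain ⟨v, hv⟩ := suppF_nonempty hD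
    rw [mem_suppF] at hv
    intro hc
    rw [hc, dcfg_eq_f0.mpr rfl] at hcd
    rw [← hcd, f0_apply] at hv
    exact absurd hv (by simp)
  · rw [if_neg hcd]

lemma cDf_supported [Nonempty V] (C : Ctx G R k) {D : V → Bool} (hD : D ≠ f0) :
    SupportedOn (OpML (cDf k D)) ↑(Ball G (ctrP D) (R-1)) := by
  have hctr : D (ctrP D) = true := ctrP_spec hD
  constructor
  · rintro f g ⟨v, hv, hne⟩
    rw [Finset.mem_coe, mem_Ball] at hv
    rw [opml_basis', cDf]
    by_cases hcd : dcfg g f = D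
    · rw [if_pos hcd]
      refine lightcone C (u := ctrP D) (v := v) ?_ hne hv
      have := dcfg_true.mp (by rw [hcd]; exact hctr)
      exact fun hc => this hc.symm
    · rw [if_neg hcd]
  · intro f f' g g' hff hgg hfg hf'g'
    have hmemB : ∀ v, WithinDist G (R-1) (ctrP D) v → v ∈ (↑(Ball G (ctrP D) (R-1)) : Set V) := by
      intro v hv
      rw [Finset.mem_coe, mem_Ball]
      exact hv
    have hnotB : ∀ v, ¬ WithinDist G (R-1) (ctrP D) v →
        v ∉ (↑(Ball G (ctrP D) (R-1)) : Set V) := by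
      intro v hv hc
      rw [Finset.mem_coe, mem_Ball] at hc
      exact hv hc
    rw [opml_basis', opml_basis', cDf, cDf]
    by_cases hDB : ∀ v, D v = true → WithinDist G (R-1) (ctrP D) v
    · have hiff : dcfg g f = D ↔ dcfg g' f' = D := by
        constructor
        · intro h
          funext v
          by_cases hvB : WithinDist G (R-1) (ctrP D) v
          · have : dcfg g f v = D v := congrFun h v
            rw [← this, dcfg, dcfg]
            rw [hgg v (hmemB v hvB), hff v (hmemB v hvB)]
          · have h1 : dcfg g' f' v = false := dcfg_false.mpr (hf'g' v (hnotB v hvB)).symm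
            have h2 : D v = false := by
              rcases bool_fe (D v) with hh | hh
              · exact hh
              · exact absurd (hDB v hh) hvB
            rw [h1, h2]
        · intro h
          funext v
          by_cases hvB : WithinDist G (R-1) (ctrP D) v
          · have : dcfg g' f' v = D v := congrFun h v
            rw [← this, dcfg, dcfg]
            rw [← hgg v (hmemB v hvB), ← hff v (hmemB v hvB)]
          · have h1 : dcfg g f v = false := dcfg_false.mpr (hfg v (hnotB v hvB)).symm
            have h2 : D v = false := by
              rcases bool_fe (D v) with hh | hh
              · exact hh
              · exact absurd (hDB v hh) hvB
            rw [h1, h2]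
      by_cases hcd : dcfg g f = D
      · rw [if_pos hcd, if_pos (hiff.mp hcd)]
        refine spectator C (ctrP D) ?_ ?_ ?_ ?_ ?_
        · have := dcfg_true.mp (by rw [hcd]; exact hctr)
          exact fun hc => this hc.symm
        · intro v hv
          exact hff v (hmemB v hv)
        · intro v hv
          exact hgg v (hmemB v hv)
        · intro v hv
          exact hfg v (hnotB v hv)
        · intro v hv
          exact hf'g' v (hnotB v hv)
      · rw [if_neg hcd, if_neg (fun hc => hcd (hiff.mpr hc))]
    · push_neg at hDB
      obtain ⟨v, hDv, hvB⟩ := hDB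
      have h1 : dcfg g f ≠ D := by
        intro hc
        have := dcfg_true.mp (by rw [hc]; exact hDv)
        exact this (hfg v (hnotB v hvB)).symm
      have h2 : dcfg g' f' ≠ D := by
        intro hc
        have := dcfg_true.mp (by rw [hc]; exact hDv)
        exact this (hf'g' v (hnotB v hvB)).symm
      rw [if_neg h1, if_neg h2]

lemma wD_supp_sub [Nonempty V] (C : Ctx G R k) {D : V → Bool} (hD : D ≠ f0) {p : V → Bool}
    (hw : wD k D p ≠ 0) : suppF p ⊆ Ball G (ctrP D) (R-1) := by
  have hex : ∃ i, cDf k D p (dl i) ≠ 0 := by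
    by_contra h
    push_neg at h
    exact hw (Finset.sum_eq_zero fun i _ => h i)
  obtain ⟨i, hi⟩ := hex
  have hcd : dcfg p (dl i) = D := by
    by_contra h
    rw [cDf, if_neg h] at hi
    exact hi rfl
  have hMK : MK k p (dl i) ≠ 0 := by
    rw [cDf, if_pos hcd] at hi
    exact hi
  have hctr : D (ctrP D) = true := ctrP_spec hD
  have hctrdiff : p (ctrP D) ≠ dl i (ctrP D) := dcfg_true.mp (by rw [hcd]; exact hctr)
  have hDin : ∀ v, D v = true → WithinDist G (R-1) (ctrP D) v := by
    intro v hv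
    by_contra hnw
    apply hMK
    refine lightcone C (u := ctrP D) (v := v) (fun hc => hctrdiff hc.symm) ?_ hnw
    have := dcfg_true.mp (by rw [hcd]; exact hv)
    exact fun hc => this hc.symm
  have hclaim2 : p i = true → WithinDist G (R-1) (ctrP D) i := by
    intro hpi
    by_contra hni
    have hDi : D i = false := by
      rw [← hcd]
      refine dcfg_false.mpr ?_
      rw [hpi, dl_self]
    set p' : V → Bool := Function.update p i false with hp'def
    have hp'app : ∀ v, v ≠ i → p' v = p v := fun v hv => Function.update_of_ne hv _ _
    have hp'i : p' i = false := Function.update_self i false p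
    have hfaroff : ∀ w, ¬ WithinDist G (R-1) (ctrP D) w → w ≠ i → p w = false := by
      intro w hw hwi
      rcases bool_fe (p w) with h | h
      · exact h
      · exfalso
        have hdw : dcfg p (dl i) w = true := dcfg_true.mpr (by rw [h, dl_of_ne hwi]; simp)
        have : D w = true := by rw [← hcd]; exact hdw
        exact hw (hDin w this)
    have hspec : MK k p (dl i) = MK k p' f0 := by
      refine spectator C (f := dl i) (g := p) (f' := f0) (g' := p') (ctrP D)
        (fun hc => hctrdiff hc.symm) ?_ ?_ ?_ ?_
      · intro w hw
        rw [f0_apply, dl_of_ne]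
        rintro rfl
        exact hni hw
      · intro w hw
        refine (hp'app w ?_).symm
        rintro rfl
        exact hni hw
      · intro w hw
        rcases eq_or_ne w i with rfl | hwi
        · rw [dl_self, hpi]
        · rw [dl_of_ne hwi, hfaroff w hw hwi]
      · intro w hw
        rcases eq_or_ne w i with rfl | hwi
        · rw [f0_apply, hp'i]
        · rw [f0_apply, hp'app w hwi, hfaroff w hw hwi]
    have hp'ne : p' ≠ f0 := by
      obtain ⟨v0, hv0⟩ := suppF_nonempty hD
      rw [mem_suppF] at hv0
      have hv0i : v0 ≠ i := by
        rintro rfl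
        rw [hDi] at hv0
        exact absurd hv0 (by simp)
      have hpv0 : p v0 = true := by
        have := dcfg_true.mp (by rw [hcd]; exact hv0)
        rw [dl_of_ne hv0i] at this
        rcases bool_fe (p v0) with h | h
        · exact absurd h this
        · exact h
      intro hc
      have := congrFun hc v0
      rw [hp'app v0 hv0i, hpv0, f0_apply] at this
      exact absurd this (by simp)
    exact hMK (by rw [hspec]; exact vaccol C hp'ne)
  intro v hv
  rw [mem_suppF] at hv
  rw [mem_Ball]
  rcases bool_fe (D v) with hDv | hDv
  · have : p v = dl i v := by
      have := dcfg_false.mp (by rw [hcd]; exact hDv)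
      exact this
    rw [hv] at this
    have hvi : v = i := dl_eq_true.mp this.symm
    subst hvi
    exact hclaim2 hv
  · exact hDin v hDv

end Pieces2

/-! KD' and DgX lemmas -/

section Pieces3

variable {V : Type*} [Fintype V] [DecidableEq V]
variable {G : SimpleGraph V} {R : ℕ} {k : Finset V → Module.End ℂ (QState V)}

lemma corrD_W1 [Nonempty V] (C : Ctx G R k) {D : V → Bool} (hD : D ≠ f0) (g : V → Bool) :
    corrD k D W1 g = wD k D g := by
  rw [corrD, LinearMap.add_apply, Pi.add_apply, LinearMap.sum_apply, Finset.sum_apply]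
  have hterm : ∀ p ∈ univ.filter (fun q : V → Bool => q ≠ f0),
      (wD k D p • OpML (EW p)) W1 g = if g = p then wD k D p else 0 := by
    intro p hp
    rw [Finset.mem_filter] at hp
    rw [LinearMap.smul_apply, Pi.smul_apply, smul_eq_mul, opml_W]
    show wD k D p * ∑ i : V, EW p g (dl i) = _
    rw [EW_W hp.2 g]
    by_cases hgp : g = p
    · rw [if_pos hgp, if_pos hgp, mul_one]
    · rw [if_neg hgp, if_neg hgp, mul_zero]
  rw [Finset.sum_congr rfl hterm]
  have hA : (wD k D f0 • OpML (AjM (ctrP D))) W1 g = if g = f0 then wD k D f0 else 0 := by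
    rw [LinearMap.smul_apply, Pi.smul_apply, smul_eq_mul, opml_W]
    show wD k D f0 * ∑ i : V, AjM (ctrP D) g (dl i) = _
    rw [Aj_W]
    by_cases hg : g = f0
    · rw [if_pos hg, if_pos hg, mul_one]
    · rw [if_neg hg, if_neg hg, mul_zero]
  rw [hA]
  by_cases hg : g = f0
  · rw [if_pos hg]
    have : ∀ p ∈ univ.filter (fun q : V → Bool => q ≠ f0),
        (if g = p then wD k D p else 0) = 0 := by
      intro p hp
      rw [Finset.mem_filter] at hp
      rw [if_neg]
      rw [hg]
      exact fun hc => hp.2 hc.symm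
    rw [Finset.sum_congr rfl this, Finset.sum_const, smul_zero, zero_add, hg]
  · rw [if_neg hg, add_zero]
    rw [Finset.sum_ite_eq (univ.filter (fun q : V → Bool => q ≠ f0)) g (fun p => wD k D p)]
    rw [if_pos]
    rw [Finset.mem_filter]
    exact ⟨Finset.mem_univ g, hg⟩

lemma KD'_W1 [Nonempty V] (C : Ctx G R k) {D : V → Bool} (hD : D ≠ f0) :
    KD' k D W1 = 0 := by
  funext g
  rw [Pi.zero_apply, KD', LinearMap.sub_apply, Pi.sub_apply, corrD_W1 C hD g]
  rw [opml_W]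
  show (∑ i : V, cDf k D g (dl i)) - wD k D g = 0
  rw [wD, sub_self]

lemma KD'_vac [Nonempty V] (C : Ctx G R k) {D : V → Bool} (hD : D ≠ f0) :
    KD' k D (basisVec f0) = 0 := by
  funext g
  rw [Pi.zero_apply, KD', LinearMap.sub_apply, Pi.sub_apply]
  rw [opml_basis', cDf_vac C hD g]
  rw [corrD, LinearMap.add_apply, Pi.add_apply, LinearMap.sum_apply, Finset.sum_apply]
  have h1 : ∀ p ∈ univ.filter (fun q : V → Bool => q ≠ f0),
      (wD k D p • OpML (EW p)) (basisVec f0) g = 0 := by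
    intro p _
    rw [LinearMap.smul_apply, Pi.smul_apply, smul_eq_mul, opml_basis', EW_vac, mul_zero]
  have h2 : (wD k D f0 • OpML (AjM (ctrP D))) (basisVec f0) g = 0 := by
    rw [LinearMap.smul_apply, Pi.smul_apply, smul_eq_mul, opml_basis', Aj_vac, mul_zero]
  rw [Finset.sum_congr rfl h1, Finset.sum_const, smul_zero, h2, add_zero, zero_sub, neg_zero]

lemma KD'_supported [Nonempty V] (C : Ctx G R k) {D : V → Bool} (hD : D ≠ f0) :
    SupportedOn (KD' k D) ↑(Ball G (ctrP D) (R-1)) := by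
  refine supportedOn_sub (cDf_supported C hD) ?_
  refine supportedOn_add ?_ ?_
  · refine supportedOn_sum _ _ _ ?_
    intro p _
    by_cases hw : wD k D p = 0
    · rw [hw, zero_smul]
      exact supportedOn_zero _
    · refine supportedOn_smul _ ?_
      refine supportedOn_mono ?_ (EW_supported p)
      exact Finset.coe_subset.mpr (wD_supp_sub C hD hw)
  · refine supportedOn_smul _ ?_
    refine supportedOn_mono ?_ (AjM_supported (ctrP D))
    intro v hv
    rw [Finset.coe_singleton, Set.mem_singleton_iff] at hv
    subst hv
    rw [Finset.mem_coe]
    exact self_mem_Ball G _ _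

/-! DgX lemmas -/

lemma mkX_congr (C : Ctx G R k) {X : Finset V} {g g' : V → Bool}
    (h : ∀ v ∈ X, g v = g' v) : mkX k X g = mkX k X g' := by
  exact (C.hks X).2 g g' g g' (fun v hv => h v (Finset.mem_coe.mp hv))
    (fun v hv => h v (Finset.mem_coe.mp hv)) (fun v _ => rfl) (fun v _ => rfl)

lemma mkX_dl_out (C : Ctx G R k) {X : Finset V} {i : V} (hiX : i ∉ X) :
    mkX k X (dl i) = mkX k X f0 := by
  refine mkX_congr C ?_
  intro v hv
  rw [f0_apply, dl_of_ne]
  rintro rfl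
  exact hiX hv

lemma uX_dl (X : Finset V) (i : V) : uX k X (dl i) = 0 := by
  rw [uX, suppF_dl, Finset.sum_singleton]
  ring

lemma uX_f0 (X : Finset V) : uX k X (f0 : V → Bool) = 0 := by
  rw [uX, suppF_f0, Finset.sum_empty]
  ring

lemma uX_congr (C : Ctx G R k) {X : Finset V} {g g' : V → Bool}
    (h : ∀ v ∈ X, g v = g' v) : uX k X g = uX k X g' := by
  rw [uX, uX, mkX_congr C h]
  congr 1
  have hzero : ∀ i, i ∉ X → mkX k X (dl i) - mkX k X f0 = 0 := by
    intro i hi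
    rw [mkX_dl_out C hi, sub_self]
  have e1 : ∑ i ∈ suppF g, (mkX k X (dl i) - mkX k X f0)
      = ∑ i ∈ suppF g ∩ X, (mkX k X (dl i) - mkX k X f0) := by
    refine (Finset.sum_subset Finset.inter_subset_left ?_).symm
    intro i hi hni
    refine hzero i ?_
    intro hc
    exact hni (Finset.mem_inter.mpr ⟨hi, hc⟩)
  have e2 : ∑ i ∈ suppF g', (mkX k X (dl i) - mkX k X f0)
      = ∑ i ∈ suppF g' ∩ X, (mkX k X (dl i) - mkX k X f0) := by
    refine (Finset.sum_subset Finset.inter_subset_left ?_).symm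
    intro i hi hni
    refine hzero i ?_
    intro hc
    exact hni (Finset.mem_inter.mpr ⟨hi, hc⟩)
  rw [e1, e2]
  congr 1
  ext v
  rw [Finset.mem_inter, Finset.mem_inter, mem_suppF, mem_suppF]
  constructor
  · rintro ⟨h1, h2⟩
    exact ⟨by rw [← h v h2]; exact h1, h2⟩
  · rintro ⟨h1, h2⟩
    exact ⟨by rw [h v h2]; exact h1, h2⟩

lemma DgX_supported (C : Ctx G R k) (X : Finset V) : SupportedOn (DgX k X) ↑X := by
  constructor
  · rintro f g ⟨v, _, hne⟩
    rw [DgX, opml_basis', if_neg]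
    intro hc
    exact hne (congrFun hc v).symm
  · intro f f' g g' hff hgg hfg hf'g'
    rw [DgX, opml_basis', opml_basis']
    have hiff : g = f ↔ g' = f' := by
      constructor
      · intro h
        funext v
        by_cases hv : v ∈ X
        · rw [← hgg v (Finset.mem_coe.mpr hv), ← hff v (Finset.mem_coe.mpr hv)]
          exact congrFun h v
        · exact (hf'g' v (fun hc => hv (Finset.mem_coe.mp hc))).symm
      · intro h
        funext v
        by_cases hv : v ∈ X
        · rw [hgg v (Finset.mem_coe.mpr hv), hff v (Finset.mem_coe.mpr hv)]
          exact congrFun h v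
        · exact (hfg v (fun hc => hv (Finset.mem_coe.mp hc))).symm
    by_cases h : g = f
    · rw [if_pos h, if_pos (hiff.mp h)]
      exact uX_congr C (fun v hv => hgg v (Finset.mem_coe.mpr hv))
    · rw [if_neg h, if_neg (fun hc => h (hiff.mpr hc))]

lemma DgX_W1 (X : Finset V) : DgX k X W1 = 0 := by
  funext g
  rw [Pi.zero_apply, DgX, opml_W]
  show (∑ i : V, if g = dl i then uX k X g else 0) = 0
  refine Finset.sum_eq_zero fun i _ => ?_
  by_cases hgi : g = dl i
  · rw [if_pos hgi, hgi, uX_dl]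
  · rw [if_neg hgi]

lemma DgX_vac (X : Finset V) : DgX k X (basisVec f0) = 0 := by
  funext g
  rw [Pi.zero_apply, DgX, opml_basis']
  by_cases hg : g = f0
  · rw [if_pos hg, hg, uX_f0]
  · rw [if_neg hg]

lemma DgX_ne {X : Finset V} (h : DgX k X ≠ 0) : k X ≠ 0 := by
  intro hX
  apply h
  have : (fun g f : V → Bool => if g = f then uX k X g else 0) = (fun _ _ => (0:ℂ)) := by
    funext g f
    have hmk : ∀ g' : V → Bool, mkX k X g' = 0 := by
      intro g'
      rw [mkX, hX, mat]
      simp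
    have hu : uX k X g = 0 := by
      simp [uX, hmk]
    rw [hu, ite_self]
  rw [DgX, this]
  have : (fun _ _ : V → Bool => (0:ℂ)) = (0 : (V → Bool) → (V → Bool) → ℂ) := rfl
  rw [this, map_zero]

end Pieces3

/-! Decomposition framework -/

section Decomp

variable {V : Type*} [Fintype V] [DecidableEq V]
variable {G : SimpleGraph V} {R : ℕ} {k : Finset V → Module.End ℂ (QState V)}

def Decomp (G : SimpleGraph V) (R : ℕ) (O : Module.End ℂ (QState V)) : Prop :=
  ∃ h : Finset V → Module.End ℂ (QState V),
    (∀ X, SupportedOn (h X) ↑X) ∧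
    (∀ X, h X ≠ 0 → X.Nonempty ∧ GDiamLE G X (2*R)) ∧
    (∀ X, h X W1 = 0 ∧ h X (basisVec f0) = 0) ∧
    ∑ X : Finset V, h X = O

lemma decomp_zero : Decomp G R 0 := by
  refine ⟨fun _ => 0, fun X => supportedOn_zero _, fun X hX => absurd rfl hX,
    fun X => ⟨rfl, rfl⟩, Finset.sum_const_zero⟩

lemma decomp_add {O1 O2 : Module.End ℂ (QState V)} (h1 : Decomp G R O1) (h2 : Decomp G R O2) :
    Decomp G R (O1 + O2) := by
  obtain ⟨f1, hs1, hc1, hk1, he1⟩ := h1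
  obtain ⟨f2, hs2, hc2, hk2, he2⟩ := h2
  refine ⟨fun X => f1 X + f2 X, ?_, ?_, ?_, ?_⟩
  · intro X
    exact supportedOn_add (hs1 X) (hs2 X)
  · intro X hX
    by_cases h : f1 X = 0
    · have h' : f2 X ≠ 0 := by
        intro hc
        exact hX (by show f1 X + f2 X = 0; rw [h, hc, add_zero])
      exact hc2 X h'
    · exact hc1 X h
  · intro X
    constructor
    · show (f1 X + f2 X) W1 = 0
      rw [LinearMap.add_apply, (hk1 X).1, (hk2 X).1, add_zero]
    · show (f1 X + f2 X) (basisVec f0) = 0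
      rw [LinearMap.add_apply, (hk1 X).2, (hk2 X).2, add_zero]
  · rw [Finset.sum_add_distrib, he1, he2]

lemma decomp_smul {O : Module.End ℂ (QState V)} (c : ℂ) (h : Decomp G R O) :
    Decomp G R (c • O) := by
  obtain ⟨f, hs, hc, hk, he⟩ := h
  refine ⟨fun X => c • f X, ?_, ?_, ?_, ?_⟩
  · intro X
    exact supportedOn_smul c (hs X)
  · intro X hX
    refine hc X ?_
    intro h0
    exact hX (by show c • f X = 0; rw [h0, smul_zero])
  · intro X
    constructor
    · show (c • f X) W1 = 0
      rw [LinearMap.smul_apply, (hk X).1, smul_zero]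
    · show (c • f X) (basisVec f0) = 0
      rw [LinearMap.smul_apply, (hk X).2, smul_zero]
  · rw [← Finset.smul_sum, he]

lemma decomp_sum {ι : Type*} (s : Finset ι) (F : ι → Module.End ℂ (QState V))
    (h : ∀ t ∈ s, Decomp G R (F t)) : Decomp G R (∑ t ∈ s, F t) := by
  classical
  induction s using Finset.induction_on with
  | empty => simpa using (decomp_zero (G := G) (R := R))
  | insert a s' hnot ih =>
    rw [Finset.sum_insert hnot]
    exact decomp_add (h a (Finset.mem_insert_self a s'))
      (ih fun t ht => h t (Finset.mem_insert_of_mem ht))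

lemma decomp_single (X0 : Finset V) (O : Module.End ℂ (QState V))
    (hs : SupportedOn O ↑X0) (hc : O ≠ 0 → X0.Nonempty ∧ GDiamLE G X0 (2*R))
    (hW : O W1 = 0) (hv : O (basisVec f0) = 0) : Decomp G R O := by
  refine ⟨fun X => if X = X0 then O else 0, ?_, ?_, ?_, ?_⟩
  · intro X
    show SupportedOn (if X = X0 then O else 0) ↑X
    by_cases h : X = X0
    · rw [if_pos h, h]
      exact hs
    · rw [if_neg h]
      exact supportedOn_zero _
  · intro X hX
    rw [show (fun X => if X = X0 then O else 0) X = (if X = X0 then O else 0) from rfl] at hX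
    by_cases h : X = X0
    · subst h
      rw [if_pos rfl] at hX
      exact hc hX
    · rw [if_neg h] at hX
      exact absurd rfl hX
  · intro X
    show ((if X = X0 then O else 0) W1 = 0) ∧ ((if X = X0 then O else 0) (basisVec f0) = 0)
    by_cases h : X = X0
    · rw [if_pos h]
      exact ⟨hW, hv⟩
    · rw [if_neg h]
      exact ⟨rfl, rfl⟩
  · rw [Finset.sum_ite_eq' Finset.univ X0 (fun _ => O), if_pos (Finset.mem_univ X0)]

/-! diameter lemmas -/

lemma gdiam_mono {X : Finset V} (hR : 0 < R) (h : GDiamLE G X R) : GDiamLE G X (2*R) := by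
  intro i hi j hj
  exact within_mono G (by omega) (h i hi j hj)

lemma gdiam_ball (hR : 0 < R) (x : V) : GDiamLE G (Ball G x (R-1)) (2*R) := by
  intro i hi j hj
  rw [mem_Ball] at hi hj
  exact within_mono G (by omega) (within_trans G (within_symm G hi) hj)

lemma ball_nonempty (x : V) (r : ℕ) : (Ball G x r).Nonempty := ⟨x, self_mem_Ball G x r⟩

lemma gdiam_pair (hR : 0 < R) {a c : V} (hadj : G.Adj a c) : GDiamLE G {a, c} (2*R) := by
  intro i hi j hj
  rw [Finset.mem_insert, Finset.mem_singleton] at hi hj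
  have hw : WithinDist G (2*R-1) a c := adj_within G (by omega) hadj
  rcases hi with rfl | rfl <;> rcases hj with rfl | rfl
  · exact within_refl G _ _
  · exact hw
  · exact within_symm G hw
  · exact within_refl G _ _

/-! telescope -/

lemma ajdiff_W (a c : V) : (OpML (AjM a) - OpML (AjM c) : Module.End ℂ (QState V)) W1 = 0 := by
  funext g
  rw [Pi.zero_apply, LinearMap.sub_apply, Pi.sub_apply, opml_W, opml_W]
  show (∑ i : V, AjM a g (dl i)) - (∑ i : V, AjM c g (dl i)) = 0
  rw [Aj_W, Aj_W, sub_self]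

lemma ajdiff_vac (a c : V) :
    (OpML (AjM a) - OpML (AjM c) : Module.End ℂ (QState V)) (basisVec f0) = 0 := by
  funext g
  rw [Pi.zero_apply, LinearMap.sub_apply, Pi.sub_apply, opml_basis', opml_basis',
    Aj_vac, Aj_vac, sub_self]

lemma ajdiff_supported {a c : V} :
    SupportedOn (OpML (AjM a) - OpML (AjM c) : Module.End ℂ (QState V)) ↑({a, c} : Finset V) := by
  refine supportedOn_sub ?_ ?_
  · refine supportedOn_mono ?_ (AjM_supported a)
    intro v hv
    rw [Finset.coe_singleton, Set.mem_singleton_iff] at hv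
    subst hv
    rw [Finset.mem_coe]
    exact Finset.mem_insert_self v _
  · refine supportedOn_mono ?_ (AjM_supported c)
    intro v hv
    rw [Finset.coe_singleton, Set.mem_singleton_iff] at hv
    subst hv
    rw [Finset.mem_coe, Finset.mem_insert, Finset.mem_singleton]
    exact Or.inr rfl

lemma decomp_tele (hR : 0 < R) {a b : V} (w : G.Walk a b) :
    Decomp G R (OpML (AjM a) - OpML (AjM b)) := by
  induction w with
  | nil =>
    rw [sub_self]
    exact decomp_zero
  | cons hadj q ih =>
    rename_i u c d
    have hsplit : (OpML (AjM u) - OpML (AjM d) : Module.End ℂ (QState V))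
        = (OpML (AjM u) - OpML (AjM c)) + (OpML (AjM c) - OpML (AjM d)) := by
      abel
    rw [hsplit]
    refine decomp_add ?_ ih
    refine decomp_single {u, c} _ ajdiff_supported ?_ (ajdiff_W u c) (ajdiff_vac u c)
    intro _
    exact ⟨Finset.insert_nonempty u {c}, gdiam_pair hR hadj⟩

end Decomp

/-! Grand identities and total decomposition -/

section Grand

variable {V : Type*} [Fintype V] [DecidableEq V]
variable {G : SimpleGraph V} {R : ℕ} {k : Finset V → Module.End ℂ (QState V)}

lemma sum_mkX (g : V → Bool) : ∑ X : Finset V, mkX k X g = MK k g g := (MK_eq g g).symm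

lemma dcfg_f0_dl (i : V) : dcfg (f0 : V → Bool) (dl i) = dl i := by
  funext v
  cases h : dl i v <;> simp [dcfg, f0_apply, h]

lemma I1 : (∑ D ∈ univ.filter (fun q : V → Bool => q ≠ f0), OpML (cDf k D))
    + OpML (fun g f : V → Bool => if g = f then MK k g g else 0) = ∑ X : Finset V, k X := by
  rw [← map_sum, ← map_add]
  conv_rhs => rw [← opml_mat (∑ X : Finset V, k X)]
  congr 1
  funext g f
  rw [Pi.add_apply, Pi.add_apply, Finset.sum_apply, Finset.sum_apply]
  by_cases hgf : g = f
  · subst hgf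
    have hz : ∀ D ∈ univ.filter (fun q : V → Bool => q ≠ f0), cDf k D g g = 0 := by
      intro D hD
      rw [Finset.mem_filter] at hD
      rw [cDf, if_neg]
      intro hc
      exact hD.2 (by rw [← hc, dcfg_eq_f0.mpr rfl])
    rw [Finset.sum_congr rfl hz, Finset.sum_const, smul_zero, zero_add, if_pos rfl]
    rfl
  · rw [if_neg hgf, add_zero]
    have hmem : dcfg g f ∈ univ.filter (fun q : V → Bool => q ≠ f0) := by
      rw [Finset.mem_filter]
      exact ⟨Finset.mem_univ _, fun hc => hgf (dcfg_eq_f0.mp hc)⟩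
    rw [Finset.sum_eq_single_of_mem (dcfg g f) hmem
      (fun D _ hD => by rw [cDf, if_neg (fun hc => hD hc.symm)])]
    rw [cDf, if_pos rfl]
    rfl

lemma sum_wD (C : Ctx G R k) (p : V → Bool) :
    ∑ D ∈ univ.filter (fun q : V → Bool => q ≠ f0), wD k D p
      = - ∑ i : V, (if p = dl i then MK k p p else 0) := by
  have hsw : ∑ D ∈ univ.filter (fun q : V → Bool => q ≠ f0), wD k D p
      = ∑ i : V, ∑ D ∈ univ.filter (fun q : V → Bool => q ≠ f0), cDf k D p (dl i) := by
    rw [Finset.sum_comm]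
    rfl
  rw [hsw]
  have hinner : ∀ i : V, ∑ D ∈ univ.filter (fun q : V → Bool => q ≠ f0), cDf k D p (dl i)
      = MK k p (dl i) - (if p = dl i then MK k p p else 0) := by
    intro i
    have hform : ∑ D ∈ univ.filter (fun q : V → Bool => q ≠ f0), cDf k D p (dl i)
        = if dcfg p (dl i) ∈ univ.filter (fun q : V → Bool => q ≠ f0)
          then MK k p (dl i) else 0 := by
      exact Finset.sum_ite_eq _ (dcfg p (dl i)) (fun _ => MK k p (dl i))
    rw [hform]
    by_cases hpd : p = dl i
    · have hf0 : dcfg p (dl i) = f0 := dcfg_eq_f0.mpr hpd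
      have hnm : ¬ (dcfg p (dl i) ∈ univ.filter (fun q : V → Bool => q ≠ f0)) := by
        intro hmem
        exact (Finset.mem_filter.mp hmem).2 hf0
      rw [if_neg hnm]
      rw [if_pos hpd, hpd, sub_self]
    · rw [if_pos (by rw [Finset.mem_filter]; exact ⟨Finset.mem_univ _,
        fun hc => hpd (dcfg_eq_f0.mp hc)⟩)]
      rw [if_neg hpd, sub_zero]
  rw [Finset.sum_congr rfl (fun i _ => hinner i), Finset.sum_sub_distrib, heig' C p, zero_sub]

lemma sum_filter_dl (F : (V → Bool) → Module.End ℂ (QState V))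
    (hz : ∀ p, p ≠ f0 → (∀ t : V, p ≠ dl t) → F p = 0) :
    ∑ p ∈ univ.filter (fun q : V → Bool => q ≠ f0), F p = ∑ t : V, F (dl t) := by
  have hinj : ∀ x ∈ (univ : Finset V), ∀ y ∈ univ, dl x = dl y → x = y :=
    fun x _ y _ h => dl_inj h
  have himg : Finset.image dl univ ⊆ univ.filter (fun q : V → Bool => q ≠ f0) := by
    intro p hp
    rw [Finset.mem_image] at hp
    obtain ⟨t, _, rfl⟩ := hp
    rw [Finset.mem_filter]
    exact ⟨Finset.mem_univ _, dl_ne_f0 t⟩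
  conv_rhs => rw [← Finset.sum_image hinj]
  refine (Finset.sum_subset himg ?_).symm
  intro p hp hni
  rw [Finset.mem_filter] at hp
  refine hz p hp.2 ?_
  intro t hc
  exact hni (by rw [hc]; exact Finset.mem_image_of_mem dl (Finset.mem_univ t))

lemma I2 [Nonempty V] (C : Ctx G R k) :
    ∑ D ∈ univ.filter (fun q : V → Bool => q ≠ f0), corrD k D
      = (∑ j : V, nuj k j • OpML (AjM j))
        - ∑ t : V, MK k (dl t) (dl t) • OpML (EW (dl t)) := by
  have hsplit : ∑ D ∈ univ.filter (fun q : V → Bool => q ≠ f0), corrD k D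
      = (∑ D ∈ univ.filter (fun q : V → Bool => q ≠ f0),
          ∑ p ∈ univ.filter (fun q : V → Bool => q ≠ f0), wD k D p • OpML (EW p))
        + ∑ D ∈ univ.filter (fun q : V → Bool => q ≠ f0),
            wD k D f0 • OpML (AjM (ctrP D)) := by
    rw [← Finset.sum_add_distrib]
    rfl
  have hpart1 : ∑ D ∈ univ.filter (fun q : V → Bool => q ≠ f0),
      ∑ p ∈ univ.filter (fun q : V → Bool => q ≠ f0), wD k D p • OpML (EW p)
      = - ∑ t : V, MK k (dl t) (dl t) • OpML (EW (dl t)) := by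
    rw [Finset.sum_comm]
    have h1 : ∀ p ∈ univ.filter (fun q : V → Bool => q ≠ f0),
        ∑ D ∈ univ.filter (fun q : V → Bool => q ≠ f0), wD k D p • OpML (EW p)
        = (- ∑ i : V, (if p = dl i then MK k p p else 0)) • OpML (EW p) := by
      intro p _
      rw [← Finset.sum_smul, sum_wD C p]
    rw [Finset.sum_congr rfl h1]
    rw [sum_filter_dl (fun p => (- ∑ i : V, (if p = dl i then MK k p p else 0)) • OpML (EW p))
      (fun p _ hnd => by
        show (- ∑ i : V, (if p = dl i then MK k p p else 0)) • OpML (EW p) = 0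
        rw [Finset.sum_eq_zero (fun i _ => if_neg (hnd i)), neg_zero, zero_smul])]
    rw [← Finset.sum_neg_distrib]
    refine Finset.sum_congr rfl fun t _ => ?_
    show ((fun p : V → Bool =>
        (- ∑ i : V, (if p = dl i then MK k p p else 0)) • OpML (EW p)) (dl t))
      = -(MK k (dl t) (dl t) • OpML (EW (dl t)))
    simp only []
    have hsingle : ∑ i : V, (if dl t = dl i then MK k (dl t) (dl t) else 0)
        = MK k (dl t) (dl t) := by
      rw [Finset.sum_eq_single_of_mem t (Finset.mem_univ t)
        (fun i _ hit => if_neg (fun hc => hit (dl_inj hc).symm))]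
      rw [if_pos rfl]
    rw [hsingle]
    exact neg_smul (MK k (dl t) (dl t)) (OpML (EW (dl t)))
  have hpart2 : ∑ D ∈ univ.filter (fun q : V → Bool => q ≠ f0),
      wD k D f0 • OpML (AjM (ctrP D)) = ∑ j : V, nuj k j • OpML (AjM j) := by
    rw [sum_filter_dl (fun D => wD k D f0 • OpML (AjM (ctrP D)))
      (fun D _ hnd => by
        have hw : wD k D f0 = 0 := by
          refine Finset.sum_eq_zero fun i _ => ?_
          rw [cDf, dcfg_f0_dl, if_neg (fun hc => hnd i hc.symm)]
        show wD k D f0 • OpML (AjM (ctrP D)) = 0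
        rw [hw, zero_smul])]
    refine Finset.sum_congr rfl fun j _ => ?_
    show wD k (dl j) f0 • OpML (AjM (ctrP (dl j))) = nuj k j • OpML (AjM j)
    have hw : wD k (dl j) f0 = nuj k j := by
      rw [wD]
      rw [Finset.sum_eq_single_of_mem j (Finset.mem_univ j)
        (fun i _ hij => by rw [cDf, dcfg_f0_dl, if_neg (fun hc => hij (dl_inj hc))])]
      rw [cDf, dcfg_f0_dl, if_pos rfl]
      rfl
    rw [hw, ctrP_dl]
  rw [hsplit, hpart1, hpart2]
  abel

lemma I3 (C : Ctx G R k) :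
    (∑ X : Finset V, DgX k X) + ∑ t : V, MK k (dl t) (dl t) • OpML (EW (dl t))
      = OpML (fun g f : V → Bool => if g = f then MK k g g else 0) := by
  have hDg : ∑ X : Finset V, DgX k X
      = OpML (∑ X : Finset V, fun g f : V → Bool => if g = f then uX k X g else 0) := by
    rw [map_sum]
    rfl
  have hEW : ∑ t : V, MK k (dl t) (dl t) • OpML (EW (dl t))
      = OpML (∑ t : V, MK k (dl t) (dl t) • EW (dl t)) := by
    rw [map_sum]
    exact Finset.sum_congr rfl fun t _ => (map_smul OpML _ _).symm
  rw [hDg, hEW, ← map_add]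
  congr 1
  funext g f
  rw [Pi.add_apply, Pi.add_apply, Finset.sum_apply, Finset.sum_apply,
    Finset.sum_apply, Finset.sum_apply]
  have hsmul : ∀ t : V, (MK k (dl t) (dl t) • EW (dl t)) g f
      = MK k (dl t) (dl t) * (if g = f ∧ f t = true then 1 else 0) := by
    intro t
    rw [Pi.smul_apply, Pi.smul_apply, smul_eq_mul, EW_dl_eq]
  rw [Finset.sum_congr rfl (fun t _ => hsmul t)]
  by_cases hgf : g = f
  · subst hgf
    rw [if_pos rfl]
    have e2 : ∀ t : V, MK k (dl t) (dl t) * (if g = g ∧ g t = true then 1 else 0)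
        = if t ∈ suppF g then MK k (dl t) (dl t) else 0 := by
      intro t
      by_cases hgt : g t = true
      · rw [if_pos ⟨rfl, hgt⟩, mul_one, if_pos (mem_suppF.mpr hgt)]
      · rw [if_neg (fun hc => hgt hc.2), mul_zero, if_neg (fun hc => hgt (mem_suppF.mp hc))]
    rw [Finset.sum_congr rfl (fun t _ => e2 t), Finset.sum_ite_mem, Finset.univ_inter]
    have e3 : ∀ X : Finset V, (fun g f : V → Bool => if g = f then uX k X g else 0) g g
        = uX k X g := fun X => if_pos rfl
    rw [Finset.sum_congr rfl (fun X _ => e3 X)]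
    have e4 : ∑ X : Finset V, uX k X g
        = MK k g g - MK k f0 f0 - ∑ i ∈ suppF g, (MK k (dl i) (dl i) - MK k f0 f0) := by
      have : ∀ X : Finset V, uX k X g = mkX k X g - mkX k X f0
          - ∑ i ∈ suppF g, (mkX k X (dl i) - mkX k X f0) := fun X => rfl
      rw [Finset.sum_congr rfl (fun X _ => this X), Finset.sum_sub_distrib,
        Finset.sum_sub_distrib, sum_mkX, sum_mkX]
      congr 1
      rw [Finset.sum_comm]
      refine Finset.sum_congr rfl fun i _ => ?_
      rw [Finset.sum_sub_distrib, sum_mkX, sum_mkX]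
    rw [e4, hdg0' C]
    have e5 : ∀ i ∈ suppF g, MK k (dl i) (dl i) - 0 = MK k (dl i) (dl i) :=
      fun i _ => sub_zero _
    rw [Finset.sum_congr rfl e5]
    ring
  · rw [if_neg hgf]
    have z1 : ∀ X : Finset V, (fun g f : V → Bool => if g = f then uX k X g else 0) g f
        = 0 := fun X => if_neg hgf
    have z2 : ∀ t : V, MK k (dl t) (dl t) * (if g = f ∧ f t = true then 1 else 0) = 0 := by
      intro t
      rw [if_neg (fun hc => hgf hc.1), mul_zero]
    rw [Finset.sum_congr rfl (fun X _ => z1 X), Finset.sum_congr rfl (fun t _ => z2 t)]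
    rw [Finset.sum_const, smul_zero, Finset.sum_const, smul_zero, add_zero]

lemma decomp_total [Nonempty V] (C : Ctx G R k) (hpc : G.Preconnected) :
    Decomp G R (∑ X : Finset V, k X) := by
  classical
  obtain ⟨r0⟩ := (inferInstance : Nonempty V)
  have h1 : Decomp G R (∑ D ∈ univ.filter (fun q : V → Bool => q ≠ f0), KD' k D) := by
    refine decomp_sum _ _ ?_
    intro D hD
    rw [Finset.mem_filter] at hD
    exact decomp_single (Ball G (ctrP D) (R-1)) _ (KD'_supported C hD.2)
      (fun _ => ⟨ball_nonempty _ _, gdiam_ball C.hR _⟩) (KD'_W1 C hD.2) (KD'_vac C hD.2)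
  have h2 : Decomp G R (∑ X : Finset V, DgX k X) := by
    refine decomp_sum _ _ ?_
    intro X _
    refine decomp_single X _ (DgX_supported C X) ?_ (DgX_W1 X) (DgX_vac X)
    intro hne
    obtain ⟨hn, hd⟩ := C.hkc X (DgX_ne hne)
    exact ⟨hn, gdiam_mono C.hR hd⟩
  have h3 : Decomp G R (∑ j : V, nuj k j • (OpML (AjM j) - OpML (AjM r0))) := by
    refine decomp_sum _ _ ?_
    intro j _
    exact decomp_smul _ (decomp_tele C.hR ((hpc j r0).some))
  have hs3 : ∑ j : V, nuj k j • (OpML (AjM j) - OpML (AjM r0))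
      = ∑ j : V, nuj k j • OpML (AjM j) := by
    have hterm : ∀ j : V, nuj k j • (OpML (AjM j) - OpML (AjM r0))
        = nuj k j • OpML (AjM j) - nuj k j • OpML (AjM r0) := fun j => smul_sub _ _ _
    rw [Finset.sum_congr rfl (fun j _ => hterm j), Finset.sum_sub_distrib]
    have hnu : ∑ j : V, nuj k j • OpML (AjM r0)
        = (∑ j : V, nuj k j) • OpML (AjM r0) := (Finset.sum_smul).symm
    have hnu0 : ∑ j : V, nuj k j = 0 := heig' C f0
    rw [hnu, hnu0, zero_smul, sub_zero]
  have key : (∑ D ∈ univ.filter (fun q : V → Bool => q ≠ f0), KD' k D)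
      + (∑ X : Finset V, DgX k X)
      + (∑ j : V, nuj k j • (OpML (AjM j) - OpML (AjM r0))) = ∑ X : Finset V, k X := by
    have exp1 : ∑ D ∈ univ.filter (fun q : V → Bool => q ≠ f0), KD' k D
        = (∑ D ∈ univ.filter (fun q : V → Bool => q ≠ f0), OpML (cDf k D))
          - ∑ D ∈ univ.filter (fun q : V → Bool => q ≠ f0), corrD k D := by
      rw [← Finset.sum_sub_distrib]
      rfl
    rw [hs3, exp1, I2 C, ← I1 (k := k), ← I3 C]
    abel
  rw [← key]
  exact decomp_add (decomp_add h1 h2) h3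

end Grand

/-! ntOp supported -/

section NtSupp

variable {V : Type*} [Fintype V] [DecidableEq V]

lemma ntOp_supported (t : V) : SupportedOn (ntOp t) ↑({t} : Finset V) := by
  have hmat : ∀ f g : V → Bool, ntOp t (basisVec f) g
      = if g = f ∧ f t = true then 1 else 0 := fun f g => ntOp_mat t g f
  constructor
  · rintro f g ⟨v, hv, hne⟩
    rw [hmat, if_neg]
    rintro ⟨hc, _⟩
    exact hne (congrFun hc v).symm
  · intro f f' g g' hff hgg hfg hf'g'
    have htm : t ∈ (↑({t} : Finset V) : Set V) := by
      rw [Finset.coe_singleton]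
      exact Set.mem_singleton t
    have hiff : g = f ↔ g' = f' := by
      constructor
      · intro h
        funext v
        rcases eq_or_ne v t with rfl | hv
        · rw [← hgg v htm, ← hff v htm]
          exact congrFun h v
        · have hvn : v ∉ (↑({t} : Finset V) : Set V) := by
            rw [Finset.coe_singleton, Set.mem_singleton_iff]
            exact hv
          exact (hf'g' v hvn).symm
      · intro h
        funext v
        rcases eq_or_ne v t with rfl | hv
        · rw [hgg v htm, hff v htm]
          exact congrFun h v
        · have hvn : v ∉ (↑({t} : Finset V) : Set V) := by
            rw [Finset.coe_singleton, Set.mem_singleton_iff]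
            exact hv
          exact (hfg v hvn).symm
    rw [hmat, hmat]
    by_cases h : g = f ∧ f t = true
    · rw [if_pos h, if_pos ⟨hiff.mp h.1, by rw [← hff t htm]; exact h.2⟩]
    · rw [if_neg h, if_neg]
      rintro ⟨h1, h2⟩
      exact h ⟨hiff.mpr h1, by rw [hff t htm]; exact h2⟩

lemma W1_apply (g : V → Bool) : W1 g = ∑ i : V, (if g = dl i then (1:ℂ) else 0) := by
  rw [W1, Finset.sum_apply]
  exact Finset.sum_congr rfl fun i _ => rfl

end NtSupp

end WAux
end Aux

open WAux
/-- Decomposition of a range-R parent Hamiltonian of the W state on a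
connected graph of maximum degree Δ with N > Δ^{4R}+1 vertices. -/
theorem W_parent_decomposition_graph
    {V : Type*} [Fintype V] [DecidableEq V]
    (G : SimpleGraph V) (hconn : G.Connected)
    (Δ : ℕ) (hdeg : ∀ v : V, (G.neighborSet v).ncard ≤ Δ)
    (R : ℕ) (hR : 0 < R) (hbig : Δ ^ (4 * R) + 1 < Fintype.card V)
    (H : Module.End ℂ (QState V)) (lam : ℂ)
    (hH : IsRangeHam G R H)
    (hW : H (WState V 1) = lam • WState V 1) :
    ∃ (Ω ω : ℂ) (h : Finset V → Module.End ℂ (QState V)),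
      (∀ X, SupportedOn (h X) ↑X) ∧
      (∀ X, h X ≠ 0 → X.Nonempty ∧ GDiamLE G X (2 * R)) ∧
      (∀ X, h X (WState V 1) = 0 ∧ h X (vac V) = 0) ∧
      H = Ω • (1 : Module.End ℂ (QState V)) + ω • numOp V + ∑ X : Finset V, h X := by
  classical
  haveI hne : Nonempty V := Fintype.card_pos_iff.mp (by omega)
  -- neighbors key fact under small degree
  have hkey : ∀ a b c' : V, (G.neighborSet a).ncard ≤ 1 → G.Adj a b → G.Adj a c' → b = c' := by
    intro a b c' hdg hab hac
    by_contra hbc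
    have hsub : ({b, c'} : Set V) ⊆ G.neighborSet a := by
      intro y hy
      rcases Set.mem_insert_iff.mp hy with rfl | hy2
      · exact hab
      · rw [Set.mem_singleton_iff] at hy2
        subst hy2
        exact hac
    have h2 : ({b, c'} : Set V).ncard = 2 := Set.ncard_pair hbc
    have h3 : ({b, c'} : Set V).ncard ≤ (G.neighborSet a).ncard :=
      Set.ncard_le_ncard hsub (Set.toFinite _)
    omega
  -- maximal degree is at least 2
  have hΔ2 : 2 ≤ Δ := by
    by_contra hlt
    push_neg at hlt
    have hΔ1 : Δ ≤ 1 := by omega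
    have hcard2 : Fintype.card V ≤ 2 := by
      by_contra hc
      push_neg at hc
      obtain ⟨u⟩ := hne
      have hs1 : 2 ≤ (Finset.univ.erase u).card := by
        rw [Finset.card_erase_of_mem (Finset.mem_univ u), Finset.card_univ]
        omega
      obtain ⟨v, hv⟩ := Finset.card_pos.mp (by omega : 0 < (Finset.univ.erase u).card)
      have hvu : v ≠ u := (Finset.mem_erase.mp hv).1
      have hs2 : 0 < ((Finset.univ.erase u).erase v).card := by
        rw [Finset.card_erase_of_mem hv]
        omega
      obtain ⟨w, hw⟩ := Finset.card_pos.mp hs2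
      have hwv : w ≠ v := (Finset.mem_erase.mp hw).1
      have hwu : w ≠ u := (Finset.mem_erase.mp (Finset.mem_erase.mp hw).2).1
      obtain ⟨p⟩ := hconn.preconnected u v
      cases p with
      | nil => exact hvu rfl
      | @cons _ m _ hadj q =>
        have trap : ∀ (a b : V) (wk : G.Walk a b), (a = u ∨ a = m) → (b = u ∨ b = m) := by
          intro a b wk
          induction wk with
          | nil => exact id
          | @cons a2 m2 b2 h2 q2 ih =>
            intro ha
            apply ih
            rcases ha with rfl | rfl
            · exact Or.inr (hkey _ _ _ (le_trans (hdeg _) hΔ1) h2 hadj)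
            · exact Or.inl (hkey _ _ _ (le_trans (hdeg _) hΔ1) h2 hadj.symm)
        have hvm : v = u ∨ v = m := trap u v (hconn.preconnected u v).some (Or.inl rfl)
        have hwm : w = u ∨ w = m := trap u w (hconn.preconnected u w).some (Or.inl rfl)
        rcases hvm with hvm | hvm
        · exact hvu hvm
        rcases hwm with hwm | hwm
        · exact hwu hwm
        exact hwv (by rw [hvm, hwm])
    have hΔ40 : Δ ^ (4*R) = 0 := by
      have h1 : Δ ^ (4*R) ≤ 1 := by
        calc Δ ^ (4*R) ≤ 1 ^ (4*R) := Nat.pow_le_pow_left hΔ1 _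
          _ = 1 := one_pow _
      omega
    have hΔ0 : Δ = 0 := by
      by_contra hΔn
      have : 1 ≤ Δ := by omega
      have : 1 ≤ Δ ^ (4*R) := Nat.one_le_pow _ _ (by omega)
      omega
    -- card V = 2, Δ = 0 : contradiction via an edge
    have hcV : 2 ≤ Fintype.card V := by omega
    obtain ⟨u⟩ := hne
    have hs1 : 0 < (Finset.univ.erase u).card := by
      rw [Finset.card_erase_of_mem (Finset.mem_univ u), Finset.card_univ]
      omega
    obtain ⟨v, hv⟩ := Finset.card_pos.mp hs1
    have hvu : v ≠ u := (Finset.mem_erase.mp hv).1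
    obtain ⟨p⟩ := hconn.preconnected u v
    cases p with
    | nil => exact hvu rfl
    | @cons _ m _ hadj q =>
      have hsub : ({m} : Set V) ⊆ G.neighborSet u := by
        intro y hy
        rw [Set.mem_singleton_iff] at hy
        subst hy
        exact hadj
      have h1 : ({m} : Set V).ncard = 1 := Set.ncard_singleton m
      have h2 : ({m} : Set V).ncard ≤ (G.neighborSet u).ncard :=
        Set.ncard_le_ncard hsub (Set.toFinite _)
      have h3 := hdeg u
      omega
  -- ball cardinality bound
  have hb : ∀ (t : V) (r : ℕ), r + 1 ≤ 4*R → (Ball G t r).card < Fintype.card V := by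
    intro t r hr
    calc (Ball G t r).card ≤ Δ^(r+1) := ball_card G hdeg hΔ2 t r
      _ ≤ Δ^(4*R) := Nat.pow_le_pow_right (by omega) hr
      _ < Fintype.card V := by omega
  -- set up the range-R family for K = H - Ω•1 - ω•N̂
  obtain ⟨hfam, hsupp, hcond, hHsum⟩ := hH
  set Ω : ℂ := mat H f0 f0 with hΩdef
  set ω : ℂ := lam - Ω with hωdef
  set r0 : V := Classical.arbitrary V with hr0def
  set k : Finset V → Module.End ℂ (QState V) := fun X =>
    hfam X - (if X = {r0} then Ω • (1 : Module.End ℂ (QState V)) else 0)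
      - (∑ t : V, if X = {t} then ω • ntOp t else 0) with hkdef
  have hksum : ∑ X : Finset V, k X = H - Ω • 1 - ω • numOp V := by
    have hsum1 : ∑ X : Finset V,
        (if X = ({r0} : Finset V) then Ω • (1 : Module.End ℂ (QState V)) else 0)
        = Ω • (1 : Module.End ℂ (QState V)) := by
      rw [Finset.sum_ite_eq' Finset.univ ({r0} : Finset V)
        (fun _ => Ω • (1 : Module.End ℂ (QState V))), if_pos (Finset.mem_univ _)]
    have hsum2 : ∑ X : Finset V, ∑ t : V,
        (if X = ({t} : Finset V) then ω • ntOp t else 0) = ω • numOp V := by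
      rw [Finset.sum_comm]
      have h1 : ∀ t : V, ∑ X : Finset V, (if X = ({t} : Finset V) then ω • ntOp t else 0)
          = ω • ntOp t := by
        intro t
        rw [Finset.sum_ite_eq' Finset.univ ({t} : Finset V) (fun _ => ω • ntOp t),
          if_pos (Finset.mem_univ _)]
      rw [Finset.sum_congr rfl (fun t _ => h1 t), ← Finset.smul_sum, numOp_eq]
    rw [hkdef]
    rw [Finset.sum_sub_distrib, Finset.sum_sub_distrib, hsum1, hsum2, ← hHsum]
  -- context
  have hks : ∀ X, SupportedOn (k X) ↑X := by
    intro X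
    refine supportedOn_sub (supportedOn_sub (hsupp X) ?_) ?_
    · by_cases h : X = ({r0} : Finset V)
      · rw [if_pos h]
        exact supportedOn_smul _ (supportedOn_one _)
      · rw [if_neg h]
        exact supportedOn_zero _
    · refine supportedOn_sum _ _ _ ?_
      intro t _
      by_cases h : X = ({t} : Finset V)
      · rw [if_pos h, h]
        exact supportedOn_smul _ (ntOp_supported t)
      · rw [if_neg h]
        exact supportedOn_zero _
  have hkc : ∀ X, k X ≠ 0 → X.Nonempty ∧ GDiamLE G X R := by
    intro X hkX
    by_cases hsing : ∃ t : V, X = ({t} : Finset V)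
    · obtain ⟨t, rfl⟩ := hsing
      refine ⟨Finset.singleton_nonempty t, ?_⟩
      intro i hi j hj
      rw [Finset.mem_singleton] at hi hj
      rw [hi, hj]
      exact within_refl G _ t
    · have h1 : (if X = ({r0} : Finset V) then Ω • (1 : Module.End ℂ (QState V)) else 0) = 0 :=
        if_neg (fun hc => hsing ⟨r0, hc⟩)
      have h2 : ∑ t : V, (if X = ({t} : Finset V) then ω • ntOp t else 0) = 0 :=
        Finset.sum_eq_zero fun t _ => if_neg (fun hc => hsing ⟨t, hc⟩)
      have hkX' : k X = hfam X := by
        rw [hkdef]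
        show hfam X - _ - _ = hfam X
        rw [h1, h2, sub_zero, sub_zero]
      rw [hkX'] at hkX
      exact hcond X hkX
  have hmate : ∀ g f : V → Bool, mat (∑ X : Finset V, k X) g f
      = mat H g f - Ω * mat (1 : Module.End ℂ (QState V)) g f - ω * mat (numOp V) g f := by
    intro g f
    rw [hksum]
    rfl
  have hHW : ∀ g : V → Bool, ∑ i : V, mat H g (dl i) = lam * W1 g := by
    intro g
    rw [← op_W1 H g, ← WState_eq, hW, WState_eq]
    rw [Pi.smul_apply, smul_eq_mul]
  have hmat1 : ∀ g f : V → Bool, mat (1 : Module.End ℂ (QState V)) g f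
      = if g = f then 1 else 0 := fun g f => rfl
  have heig : ∀ g : V → Bool, ∑ i : V, mat (∑ X : Finset V, k X) g (dl i) = 0 := by
    intro g
    have e : ∀ i : V, mat (∑ X : Finset V, k X) g (dl i)
        = mat H g (dl i) - Ω * (if g = dl i then 1 else 0)
          - ω * (if g = dl i then 1 else 0) := by
      intro i
      rw [hmate, hmat1, mat_numOp]
      congr 1
      by_cases hgi : g = dl i
      · rw [if_pos hgi, if_pos hgi]
        have hc1 : (Finset.univ.filter (fun t => dl i t = true)).card = 1 := by
          rw [show Finset.univ.filter (fun t => dl i t = true) = suppF (dl i) from rfl,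
            suppF_dl, Finset.card_singleton]
        rw [hc1, Nat.cast_one]
      · rw [if_neg hgi, if_neg hgi]
    rw [Finset.sum_congr rfl (fun i _ => e i), Finset.sum_sub_distrib, Finset.sum_sub_distrib,
      ← Finset.mul_sum, ← Finset.mul_sum, ← W1_apply, hHW]
    rw [hωdef]
    ring
  have hdg0 : mat (∑ X : Finset V, k X) f0 f0 = 0 := by
    rw [hmate, hmat1, mat_numOp, if_pos rfl, if_pos rfl]
    have hc0 : (Finset.univ.filter (fun t => (f0 : V → Bool) t = true)).card = 0 := by
      rw [show Finset.univ.filter (fun t => (f0 : V → Bool) t = true) = suppF f0 from rfl,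
        suppF_f0, Finset.card_empty]
    rw [hc0, Nat.cast_zero, mul_zero, mul_one, sub_zero, hΩdef, sub_self]
  have hfar : ∀ t : V, ∃ i : V, ¬ WithinDist G (3*R) t i := by
    intro t
    exact exists_far_of_card G t (3*R) (hb t (3*R) (by omega))
  have htri : ∃ x y z : V, ¬ WithinDist G (2*R-2) x y ∧ ¬ WithinDist G (2*R-2) x z ∧
      ¬ WithinDist G (2*R-2) y z := by
    obtain ⟨x⟩ := hne
    obtain ⟨y, hy⟩ := exists_far_of_card G x (2*R-2) (hb x (2*R-2) (by omega))
    have hcu : (Ball G x (2*R-2) ∪ Ball G y (2*R-2)).card < Fintype.card V := by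
      calc (Ball G x (2*R-2) ∪ Ball G y (2*R-2)).card
          ≤ (Ball G x (2*R-2)).card + (Ball G y (2*R-2)).card := Finset.card_union_le _ _
        _ ≤ Δ^((2*R-2)+1) + Δ^((2*R-2)+1) :=
            Nat.add_le_add (ball_card G hdeg hΔ2 x _) (ball_card G hdeg hΔ2 y _)
        _ = 2 * Δ^((2*R-2)+1) := by omega
        _ ≤ Δ * Δ^((2*R-2)+1) := Nat.mul_le_mul_right _ hΔ2
        _ = Δ^((2*R-2)+2) := by rw [pow_succ]; ring
        _ ≤ Δ^(4*R) := Nat.pow_le_pow_right (by omega) (by omega)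
        _ < Fintype.card V := by omega
    have hcne : ((Ball G x (2*R-2) ∪ Ball G y (2*R-2))ᶜ : Finset V).Nonempty := by
      rw [← Finset.card_pos, Finset.card_compl]
      omega
    obtain ⟨z, hz⟩ := hcne
    rw [Finset.mem_compl, Finset.mem_union] at hz
    push_neg at hz
    refine ⟨x, y, z, hy, ?_, ?_⟩
    · intro hc
      exact hz.1 ((mem_Ball (G := G)).mpr hc)
    · intro hc
      exact hz.2 ((mem_Ball (G := G)).mpr hc)
  have C : Ctx G R k := ⟨hR, hks, hkc, heig, hdg0, hfar, htri⟩
  obtain ⟨hfin, hGs, hGc, hGk, hGsum⟩ := decomp_total C hconn.preconnected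
  refine ⟨Ω, ω, hfin, hGs, ?_, ?_, ?_⟩
  · intro X hX
    obtain ⟨h1, h2⟩ := hGc X hX
    refine ⟨h1, ?_⟩
    rw [show 2 * R = 2*R from rfl]
    exact h2
  · intro X
    constructor
    · rw [WState_eq]
      exact (hGk X).1
    · rw [vac_eq]
      exact (hGk X).2
  · have hfs : ∑ X : Finset V, hfin X = H - Ω • 1 - ω • numOp V := by
      rw [hGsum, hksum]
    rw [hfs]
    abel
end

section
/- Let G be a finite simple graph on N vertices in which every vertex has degree at most Δ, and let R_max be a positive integer. For each nonempty subset X ⊆ V with diam(X) ≤ R_max, let h_X be an operator supported on X with h_X |W⟩ = 0 and h_X |0̄⟩ = 0. If p is a natural number with p·(Δ^{2·R_max}+1) ≤ N and (∑_X h_X) |W^p⟩ = E'·|W^p⟩ for some E' ∈ ℂ, then E' = 0. -/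
open scoped BigOperators
set_option linter.unusedSectionVars false

namespace AFGAux

open Finset

variable {V : Type*} [Fintype V] [DecidableEq V]

def trues (g : V → Bool) : Finset V := Finset.univ.filter fun v => g v = true

lemma mem_trues {g : V → Bool} {v : V} : v ∈ trues g ↔ g v = true := by
  simp [trues]

lemma trues_update_false (g : V → Bool) (i : V) :
    trues (Function.update g i false) = (trues g).erase i := by
  ext v
  rcases eq_or_ne v i with rfl | hv
  · simp [mem_trues]
  · simp [mem_trues, Function.update_of_ne hv, hv]

lemma wstate_apply (p : ℕ) (g : V → Bool) :
    WState V p g = if (trues g).card = p then (p.factorial : ℂ) else 0 := by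
  induction p generalizing g with
  | zero =>
    have h0 : WState V 0 = vac V := by simp [WState]
    rw [h0]
    have hiff : (g = fun _ => false) ↔ (trues g).card = 0 := by
      constructor
      · rintro rfl; simp [trues]
      · intro hc
        funext v
        by_contra hv
        have hgv : g v = true := by revert hv; cases g v <;> simp
        have hm : v ∈ trues g := mem_trues.mpr hgv
        rw [Finset.card_eq_zero.mp hc] at hm
        exact absurd hm (Finset.notMem_empty v)
    show (if g = (fun _ => false) then (1:ℂ) else 0) = _
    by_cases hg : g = fun _ => false
    · rw [if_pos hg, if_pos (hiff.mp hg)]; simp [Nat.factorial]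
    · rw [if_neg hg, if_neg (fun hc => hg (hiff.mpr hc))]
  | succ p ih =>
    have h1 : WState V (p+1) = Sdag V (WState V p) := by
      rw [WState, WState, pow_succ']
      rfl
    rw [h1]
    have h2 : Sdag V (WState V p) g
        = ∑ i : V, (if g i = true then WState V p (Function.update g i false) else 0) := by
      rw [Sdag, LinearMap.sum_apply, Finset.sum_apply]
      rfl
    rw [h2]
    have h3 : ∀ i : V, (if g i = true then WState V p (Function.update g i false) else 0)
        = if i ∈ trues g then (if (trues g).card - 1 = p then (p.factorial : ℂ) else 0)
          else 0 := by
      intro i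
      by_cases hi : g i = true
      · rw [if_pos hi, if_pos (mem_trues.mpr hi), ih, trues_update_false,
          Finset.card_erase_of_mem (mem_trues.mpr hi)]
      · rw [if_neg hi, if_neg (fun hm => hi (mem_trues.mp hm))]
    rw [Finset.sum_congr rfl (fun i _ => h3 i)]
    rw [Finset.sum_ite_mem, Finset.univ_inter, Finset.sum_const]
    by_cases hc : (trues g).card = p + 1
    · rw [if_pos hc, hc]
      have : p + 1 - 1 = p := rfl
      rw [this, if_pos rfl]
      simp only [Nat.factorial_succ, nsmul_eq_mul, Nat.cast_mul, Nat.cast_add,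
        Nat.cast_one]
    · rw [if_neg hc]
      rcases Nat.eq_zero_or_pos (trues g).card with h0 | h0
      · simp [h0]
      · have hne : (trues g).card - 1 ≠ p := by omega
        rw [if_neg hne]
        simp

lemma apply_eq_sum (O : Module.End ℂ (QState V)) (ψ : QState V) (g : V → Bool) :
    O ψ g = ∑ f : V → Bool, ψ f * O (basisVec f) g := by
  have hdec : ψ = ∑ f : V → Bool, ψ f • basisVec f := by
    funext g'
    rw [Finset.sum_apply]
    simp [basisVec, smul_eq_mul, mul_ite]
  conv_lhs => rw [hdec]
  rw [map_sum, Finset.sum_apply]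
  refine Finset.sum_congr rfl fun f _ => ?_
  rw [map_smul]
  simp [smul_eq_mul]

def chi (i : V) : V → Bool := fun v => decide (v = i)

lemma chi_self (i : V) : chi i i = true := by simp [chi]

lemma chi_ne {i v : V} (hv : v ≠ i) : chi i v = false := by simp [chi, hv]

lemma trues_chi (i : V) : trues (chi i) = {i} := by
  ext v
  rcases eq_or_ne v i with rfl | hv
  · simp [mem_trues, chi]
  · simp [mem_trues, chi, hv]

lemma eq_chi_iff {g : V → Bool} {i : V} : g = chi i ↔ trues g = {i} := by
  constructor
  · rintro rfl; exact trues_chi i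
  · intro ht
    funext v
    rcases eq_or_ne v i with rfl | hv
    · rw [chi_self]
      exact mem_trues.mp (ht ▸ Finset.mem_singleton_self v)
    · rw [chi_ne hv]
      by_contra hgv
      have hgv' : g v = true := by revert hgv; cases g v <;> simp
      have hm := mem_trues.mpr hgv'
      rw [ht, Finset.mem_singleton] at hm
      exact hv hm

lemma wstate_one : WState V 1 = ∑ i : V, basisVec (chi i) := by
  funext g
  rw [wstate_apply, Finset.sum_apply]
  by_cases hc : (trues g).card = 1
  · obtain ⟨a, ha⟩ := Finset.card_eq_one.mp hc
    rw [if_pos hc]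
    rw [Finset.sum_eq_single a]
    · have : g = chi a := eq_chi_iff.mpr ha
      simp [basisVec, this, Nat.factorial]
    · intro i _ hia
      show (if g = chi i then (1:ℂ) else 0) = 0
      rw [if_neg]
      intro hg
      have h2 := eq_chi_iff.mp hg
      rw [ha] at h2
      exact hia (Finset.singleton_injective h2).symm
    · intro ha'; exact absurd (Finset.mem_univ a) ha'
  · rw [if_neg hc]
    symm
    apply Finset.sum_eq_zero
    intro i _
    show (if g = chi i then (1:ℂ) else 0) = 0
    rw [if_neg]
    intro hg
    exact hc (by rw [eq_chi_iff.mp hg]; simp)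

lemma suppA {X : Finset V} {O : Module.End ℂ (QState V)}
    (hs : SupportedOn O ↑X) (hv : O (vac V) = 0)
    {f : V → Bool} (hf : ∀ v ∈ X, f v = false) (g : V → Bool) :
    O (basisVec f) g = 0 := by
  by_cases hfg : ∀ v, v ∉ X → f v = g v
  · have h2 := hs.2 f (fun _ => false) g (fun v => if v ∈ X then g v else false)
      (fun v hv' => hf v hv') (fun v hv' => (if_pos hv').symm) (fun v hv' => hfg v hv')
      (fun v hv' => (if_neg hv').symm)
    rw [h2]
    have hv0 : O (basisVec fun _ => false) = 0 := hv
    rw [hv0]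
    rfl
  · push_neg at hfg
    obtain ⟨v, hvX, hvfg⟩ := hfg
    exact hs.1 f g ⟨v, hvX, hvfg⟩

lemma suppB {X : Finset V} {O : Module.End ℂ (QState V)}
    (hs : SupportedOn O ↑X) {f g : V → Bool} {i : V}
    (hi : i ∈ X) (hfX : ∀ v ∈ X, f v = chi i v) (hfg : ∀ v, v ∉ X → f v = g v) :
    O (basisVec f) g = O (basisVec (chi i)) (fun v => if v ∈ X then g v else false) :=
  hs.2 f (chi i) g _ hfX (fun v hv => (if_pos hv).symm) hfg
    (fun v hv => by
      have hvX : v ∉ X := hv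
      have hvi : v ≠ i := fun hvi => hvX (by rw [hvi]; exact hi)
      rw [chi_ne hvi, if_neg hvX])

lemma suppC {X : Finset V} {O : Module.End ℂ (QState V)}
    (hs : SupportedOn O ↑X) (hv : O (vac V) = 0) (hW : O (WState V 1) = 0)
    (y : V → Bool) :
    ∑ i ∈ X, O (basisVec (chi i)) y = 0 := by
  have h0 : ∑ i : V, O (basisVec (chi i)) y = 0 := by
    have hWy := congrFun hW y
    rw [wstate_one, map_sum, Finset.sum_apply] at hWy
    simpa using hWy
  rw [Finset.sum_subset (Finset.subset_univ X)
    (fun i _ hiX => suppA hs hv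
      (fun v hvX => chi_ne (fun hvi => hiX (by rw [← hvi]; exact hvX))) y)]
  exact h0

lemma keylemma {X : Finset V} {O : Module.End ℂ (QState V)}
    (hs : SupportedOn O ↑X) (hv : O (vac V) = 0) (hW : O (WState V 1) = 0)
    {p : ℕ} {g : V → Bool} (hg : (trues g).card = p)
    (hX1 : (trues g ∩ X).card ≤ 1) :
    O (WState V p) g = 0 := by
  classical
  rw [apply_eq_sum]
  simp only [wstate_apply]
  have hdiffcard : ∀ f : V → Bool, (∀ v, v ∉ X → f v = g v) →
      trues f \ X = trues g \ X := by
    intro f hfg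
    ext v
    simp only [Finset.mem_sdiff, mem_trues]
    constructor
    · rintro ⟨h1, h2⟩; exact ⟨(hfg v h2) ▸ h1, h2⟩
    · rintro ⟨h1, h2⟩; exact ⟨(hfg v h2).symm ▸ h1, h2⟩
  rcases Nat.le_one_iff_eq_zero_or_eq_one.mp hX1 with hcase | hcase
  · -- card = 0
    have hempty : trues g ∩ X = ∅ := Finset.card_eq_zero.mp hcase
    apply Finset.sum_eq_zero
    intro f _
    by_cases hfp : (trues f).card = p
    · by_cases hfg : ∀ v, v ∉ X → f v = g v
      · have hgsd : (trues g \ X).card = p := by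
          have := Finset.card_inter_add_card_sdiff (trues g) X
          omega
        have hfsd : (trues f ∩ X).card = 0 := by
          have h1 := Finset.card_inter_add_card_sdiff (trues f) X
          rw [hdiffcard f hfg, hgsd] at h1
          omega
        have hkey : ∀ v ∈ X, f v = false := by
          intro v hvX
          by_contra hfv
          have hfv' : f v = true := by revert hfv; cases f v <;> simp
          have : v ∈ trues f ∩ X := Finset.mem_inter.mpr ⟨mem_trues.mpr hfv', hvX⟩
          rw [Finset.card_eq_zero.mp hfsd] at this
          exact absurd this (Finset.notMem_empty v)
        rw [suppA hs hv hkey g, mul_zero]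
      · push_neg at hfg
        obtain ⟨v, hvX, hvfg⟩ := hfg
        rw [hs.1 f g ⟨v, hvX, hvfg⟩, mul_zero]
    · rw [if_neg hfp, zero_mul]
  · -- card = 1
    obtain ⟨s, hsint⟩ := Finset.card_eq_one.mp hcase
    have hsS : s ∈ trues g := (Finset.mem_inter.mp (hsint ▸ Finset.mem_singleton_self s)).1
    have hp1 : 1 ≤ p := by
      rw [← hg]
      exact Finset.card_pos.mpr ⟨s, hsS⟩
    have hgsd : (trues g \ X).card = p - 1 := by
      have h1 := Finset.card_inter_add_card_sdiff (trues g) X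
      rw [hsint, Finset.card_singleton, hg] at h1
      omega
    set F : V → (V → Bool) := fun i v => if v ∈ X then decide (v = i) else g v with hF
    have hFtr : ∀ i ∈ X, trues (F i) = insert i (trues g \ X) := by
      intro i hi
      ext v
      by_cases hvX : v ∈ X
      · simp only [mem_trues, hF, if_pos hvX, Finset.mem_insert, Finset.mem_sdiff,
          decide_eq_true_eq]
        constructor
        · intro hvi; exact Or.inl hvi
        · rintro (hvi | ⟨_, hvnX⟩)
          · exact hvi
          · exact absurd hvX hvnX
      · simp only [mem_trues, hF, if_neg hvX, Finset.mem_insert, Finset.mem_sdiff]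
        constructor
        · intro hgv; exact Or.inr ⟨hgv, hvX⟩
        · rintro (rfl | ⟨hvt, _⟩)
          · exact absurd hi hvX
          · exact hvt
    have hFcard : ∀ i ∈ X, (trues (F i)).card = p := by
      intro i hi
      rw [hFtr i hi, Finset.card_insert_of_notMem (fun hm => (Finset.mem_sdiff.mp hm).2 hi),
        hgsd]
      omega
    have hout : ∀ f : V → Bool, f ∉ X.image F →
        (if (trues f).card = p then (p.factorial : ℂ) else 0) * O (basisVec f) g = 0 := by
      intro f hfim
      by_cases hfp : (trues f).card = p
      · by_cases hfg : ∀ v, v ∉ X → f v = g v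
        · exfalso
          have hfint : (trues f ∩ X).card = 1 := by
            have h1 := Finset.card_inter_add_card_sdiff (trues f) X
            rw [hdiffcard f hfg, hgsd, hfp] at h1
            omega
          obtain ⟨i, hi⟩ := Finset.card_eq_one.mp hfint
          have hiX : i ∈ X := (Finset.mem_inter.mp (hi ▸ Finset.mem_singleton_self i)).2
          have hfeq : f = F i := by
            funext v
            by_cases hvX : v ∈ X
            · show f v = if v ∈ X then decide (v = i) else g v
              rw [if_pos hvX]
              cases hfv : f v with
              | true =>
                have : v ∈ trues f ∩ X := Finset.mem_inter.mpr ⟨mem_trues.mpr hfv, hvX⟩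
                rw [hi, Finset.mem_singleton] at this
                simp [this]
              | false =>
                have hvi : v ≠ i := by
                  rintro rfl
                  have : v ∈ trues f ∩ X := hi ▸ Finset.mem_singleton_self v
                  have := mem_trues.mp (Finset.mem_inter.mp this).1
                  rw [hfv] at this
                  exact Bool.noConfusion this
                simp [hvi]
            · show f v = if v ∈ X then decide (v = i) else g v
              rw [if_neg hvX]
              exact hfg v hvX
          exact hfim (Finset.mem_image.mpr ⟨i, hiX, hfeq.symm⟩)
        · push_neg at hfg
          obtain ⟨v, hvX, hvfg⟩ := hfg
          rw [hs.1 f g ⟨v, hvX, hvfg⟩, mul_zero]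
      · rw [if_neg hfp, zero_mul]
    rw [← Finset.sum_subset (Finset.subset_univ (X.image F)) (fun f _ hf => hout f hf)]
    have hFinj : ∀ i ∈ X, ∀ j ∈ X, F i = F j → i = j := by
      intro i hi j hj hij
      have h1 := congrFun hij i
      simp only [hF, if_pos hi] at h1
      have h2 : (decide (i = j) : Bool) = true := by rw [← h1]; simp
      exact of_decide_eq_true h2
    rw [Finset.sum_image hFinj]
    have hterm : ∀ i ∈ X,
        (if (trues (F i)).card = p then (p.factorial : ℂ) else 0) * O (basisVec (F i)) g
        = (p.factorial : ℂ) * O (basisVec (chi i)) (fun v => if v ∈ X then g v else false) := by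
      intro i hi
      rw [if_pos (hFcard i hi),
        suppB hs hi (fun v hv => by simp [hF, chi, if_pos hv])
          (fun v hv => by simp [hF, if_neg hv])]
    rw [Finset.sum_congr rfl hterm, ← Finset.mul_sum, suppC hs hv hW, mul_zero]

lemma withinDist_symm {G : SimpleGraph V} {r : ℕ} {i j : V}
    (h : WithinDist G r i j) : WithinDist G r j i := by
  obtain ⟨w, hw⟩ := h
  exact ⟨w.reverse, by rwa [SimpleGraph.Walk.length_reverse]⟩

lemma self_mem_gball (G : SimpleGraph V) (i : V) (r : ℕ) : i ∈ gball G i r :=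
  ⟨SimpleGraph.Walk.nil, by simp⟩

lemma gball_zero (G : SimpleGraph V) (i : V) : gball G i 0 = {i} := by
  ext j
  constructor
  · rintro ⟨w, hw⟩
    exact (SimpleGraph.Walk.eq_of_length_eq_zero (Nat.le_zero.mp hw)).symm
  · rintro rfl
    exact self_mem_gball G j 0

lemma ncard_biUnion_le (S : Finset V) (t : V → Set V) :
    (⋃ a ∈ S, t a).ncard ≤ ∑ a ∈ S, (t a).ncard := by
  classical
  induction S using Finset.induction_on with
  | empty => simp
  | insert a s h ih =>
    rw [Finset.set_biUnion_insert, Finset.sum_insert h]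
    exact le_trans (Set.ncard_union_le _ _) (Nat.add_le_add_left ih _)

lemma gball_card_le (G : SimpleGraph V) {Δ : ℕ}
    (hdeg : ∀ v : V, (G.neighborSet v).ncard ≤ Δ) :
    ∀ (r : ℕ) (i : V), (gball G i r).ncard ≤ ∑ k ∈ Finset.range (r + 1), Δ ^ k := by
  intro r
  induction r with
  | zero => intro i; simp [gball_zero]
  | succ r ih =>
    intro i
    classical
    have hfin : (G.neighborSet i).Finite := Set.toFinite _
    have hsub : gball G i (r + 1) ⊆ insert i (⋃ v ∈ hfin.toFinset, gball G v r) := by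
      rintro j ⟨w, hw⟩
      cases w with
      | nil => exact Set.mem_insert _ _
      | @cons _ v _ hadj w' =>
        refine Set.mem_insert_of_mem _ (Set.mem_biUnion ?_ ⟨w', ?_⟩)
        · exact hfin.mem_toFinset.mpr hadj
        · rw [SimpleGraph.Walk.length_cons] at hw
          omega
    calc (gball G i (r + 1)).ncard
        ≤ (insert i (⋃ v ∈ hfin.toFinset, gball G v r)).ncard :=
          Set.ncard_le_ncard hsub (Set.toFinite _)
      _ ≤ (⋃ v ∈ hfin.toFinset, gball G v r).ncard + 1 := Set.ncard_insert_le _ _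
      _ ≤ (∑ v ∈ hfin.toFinset, (gball G v r).ncard) + 1 :=
          Nat.add_le_add_right (ncard_biUnion_le _ _) 1
      _ ≤ (∑ _v ∈ hfin.toFinset, ∑ k ∈ Finset.range (r + 1), Δ ^ k) + 1 :=
          Nat.add_le_add_right (Finset.sum_le_sum fun v _ => ih v) 1
      _ = hfin.toFinset.card * (∑ k ∈ Finset.range (r + 1), Δ ^ k) + 1 := by
          rw [Finset.sum_const, smul_eq_mul]
      _ ≤ Δ * (∑ k ∈ Finset.range (r + 1), Δ ^ k) + 1 := by
          refine Nat.add_le_add_right (Nat.mul_le_mul_right _ ?_) 1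
          rw [← Set.ncard_eq_toFinset_card _ hfin]
          exact hdeg i
      _ = ∑ k ∈ Finset.range (r + 2), Δ ^ k := by
          rw [Finset.sum_range_succ' (fun k => Δ ^ k) (r + 1), Finset.mul_sum]
          simp [pow_succ, mul_comm]

lemma gball_subset_of_deg_le_one (G : SimpleGraph V)
    (hdeg : ∀ v : V, (G.neighborSet v).ncard ≤ 1) (i : V) (r : ℕ) :
    gball G i r ⊆ insert i (G.neighborSet i) := by
  have key : ∀ {u j : V} (w : G.Walk u j), u ∈ insert i (G.neighborSet i) →
      j ∈ insert i (G.neighborSet i) := by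
    intro u j w
    induction w with
    | nil => exact id
    | @cons a b c hadj _ ih =>
      intro ha
      apply ih
      rcases ha with rfl | ha
      · exact Set.mem_insert_of_mem _ hadj
      · have h1 : b ∈ G.neighborSet a := hadj
        have h2 : i ∈ G.neighborSet a := G.adj_symm ha
        have hone := (Set.ncard_le_one (Set.toFinite _)).mp (hdeg a)
        have : b = i := hone b h1 i h2
        exact this ▸ Set.mem_insert _ _
  rintro j ⟨w, _⟩
  exact key w (Set.mem_insert _ _)

lemma ball_bound (G : SimpleGraph V) {Δ : ℕ}
    (hdeg : ∀ v : V, (G.neighborSet v).ncard ≤ Δ)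
    {Rmax : ℕ} (hR : 0 < Rmax) (i : V) :
    (gball G i (Rmax - 1)).ncard ≤ Δ ^ (2 * Rmax) + 1 := by
  rcases le_or_gt Δ 1 with hΔ | hΔ
  · -- Δ ≤ 1
    have hsub := gball_subset_of_deg_le_one G (fun v => le_trans (hdeg v) hΔ) i (Rmax - 1)
    calc (gball G i (Rmax - 1)).ncard
        ≤ (insert i (G.neighborSet i)).ncard := Set.ncard_le_ncard hsub (Set.toFinite _)
      _ ≤ (G.neighborSet i).ncard + 1 := Set.ncard_insert_le _ _
      _ ≤ Δ + 1 := Nat.add_le_add_right (hdeg i) 1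
      _ ≤ Δ ^ (2 * Rmax) + 1 := by
          refine Nat.add_le_add_right (Nat.le_self_pow ?_ Δ) 1
          omega
  · -- Δ ≥ 2
    have h1 : (gball G i (Rmax - 1)).ncard ≤ ∑ k ∈ Finset.range Rmax, Δ ^ k := by
      have := gball_card_le G hdeg (Rmax - 1) i
      have hr : Rmax - 1 + 1 = Rmax := by omega
      rwa [hr] at this
    have h2 : ∑ k ∈ Finset.range Rmax, Δ ^ k ≤ Rmax * Δ ^ (Rmax - 1) := by
      calc ∑ k ∈ Finset.range Rmax, Δ ^ k ≤ ∑ _k ∈ Finset.range Rmax, Δ ^ (Rmax - 1) :=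
            Finset.sum_le_sum fun k hk => Nat.pow_le_pow_right (by omega)
              (by have := Finset.mem_range.mp hk; omega)
        _ = Rmax * Δ ^ (Rmax - 1) := by rw [Finset.sum_const, smul_eq_mul, Finset.card_range]
    have h3 : Rmax * Δ ^ (Rmax - 1) ≤ Δ ^ Rmax * Δ ^ (Rmax - 1) :=
      Nat.mul_le_mul_right _ (le_of_lt (Nat.lt_pow_self (n := Rmax) hΔ))
    have h4 : Δ ^ Rmax * Δ ^ (Rmax - 1) ≤ Δ ^ (2 * Rmax) := by
      rw [← pow_add]
      exact Nat.pow_le_pow_right (by omega) (by omega)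
    omega

lemma exists_separated (G : SimpleGraph V) (r m : ℕ) (hm1 : 1 ≤ m)
    (hball : ∀ i : V, (gball G i r).ncard ≤ m) :
    ∀ p : ℕ, p * m ≤ Fintype.card V →
      ∃ S : Finset V, S.card = p ∧ ∀ a ∈ S, ∀ b ∈ S, a ≠ b → ¬WithinDist G r a b := by
  intro p
  induction p with
  | zero => intro _; exact ⟨∅, rfl, by simp⟩
  | succ p ih =>
    intro hp
    obtain ⟨S, hcard, hsep⟩ := ih (le_trans (Nat.mul_le_mul_right m (Nat.le_succ p)) hp)
    have hU : (⋃ a ∈ S, gball G a r).ncard ≤ p * m := by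
      refine le_trans (ncard_biUnion_le S _) ?_
      calc ∑ a ∈ S, (gball G a r).ncard ≤ ∑ _a ∈ S, m := Finset.sum_le_sum fun a _ => hball a
        _ = p * m := by rw [Finset.sum_const, smul_eq_mul, hcard]
    have hex : ∃ v : V, v ∉ ⋃ a ∈ S, gball G a r := by
      by_contra hc
      push_neg at hc
      have huniv : (⋃ a ∈ S, gball G a r) = Set.univ := Set.eq_univ_of_forall hc
      rw [huniv, Set.ncard_univ, Nat.card_eq_fintype_card] at hU
      have hpm : (p + 1) * m = p * m + m := Nat.succ_mul p m
      omega
    obtain ⟨v, hv⟩ := hex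
    have hvS : v ∉ S := fun hvS => hv (Set.mem_biUnion hvS (self_mem_gball G v r))
    refine ⟨insert v S, by rw [Finset.card_insert_of_notMem hvS, hcard], ?_⟩
    intro a ha b hb hab
    rcases Finset.mem_insert.mp ha with rfl | ha'
    · rcases Finset.mem_insert.mp hb with rfl | hb'
      · exact absurd rfl hab
      · intro hw
        exact hv (Set.mem_biUnion hb' (withinDist_symm hw))
    · rcases Finset.mem_insert.mp hb with rfl | hb'
      · intro hw
        exact hv (Set.mem_biUnion ha' hw)
      · exact hsep a ha' b hb' hab

end AFGAux

/-- Annihilation of a finite fraction of the Dicke tower on a graph of maximum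
degree Δ: a sum of local annihilators of `|W⟩` and `|0̄⟩` with diameters at most `R_max` has
eigenvalue 0 on `|W^p⟩` whenever `p · (Δ^{2R_max}+1) ≤ N`. -/
theorem annihilation_finite_fraction_graph
    {V : Type*} [Fintype V] [DecidableEq V]
    (G : SimpleGraph V)
    (Δ : ℕ) (hdeg : ∀ v : V, (G.neighborSet v).ncard ≤ Δ)
    (Rmax : ℕ) (hRmax : 0 < Rmax)
    (h : Finset V → Module.End ℂ (QState V))
    (hsupp : ∀ X, SupportedOn (h X) ↑X)
    (hdiam : ∀ X, ¬(X.Nonempty ∧ GDiamLE G X Rmax) → h X = 0)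
    (hannW : ∀ X, h X (WState V 1) = 0)
    (hannv : ∀ X, h X (vac V) = 0)
    (p : ℕ) (hp : p * (Δ ^ (2 * Rmax) + 1) ≤ Fintype.card V) (E' : ℂ)
    (hE : (∑ X : Finset V, h X) (WState V p) = E' • WState V p) :
    E' = 0 := by
  classical
  obtain ⟨S, hScard, hSsep⟩ := AFGAux.exists_separated G (Rmax - 1) (Δ ^ (2 * Rmax) + 1)
    (Nat.le_add_left 1 _) (fun i => AFGAux.ball_bound G hdeg hRmax i) p hp
  set g : V → Bool := fun v => decide (v ∈ S) with hgdef
  have hgt : AFGAux.trues g = S := by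
    ext v
    simp [AFGAux.mem_trues, hgdef]
  have key : ∀ X : Finset V, h X (WState V p) g = 0 := by
    intro X
    by_cases hX0 : h X = 0
    · rw [hX0]
      rfl
    · have hXd : X.Nonempty ∧ GDiamLE G X Rmax := by
        by_contra hc
        exact hX0 (hdiam X hc)
      have hle : (AFGAux.trues g ∩ X).card ≤ 1 := by
        rw [hgt]
        refine Finset.card_le_one.mpr ?_
        intro a ha b hb
        by_contra hab
        exact hSsep a (Finset.mem_inter.mp ha).1 b (Finset.mem_inter.mp hb).1 hab
          (hXd.2 a (Finset.mem_inter.mp ha).2 b (Finset.mem_inter.mp hb).2)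
      exact AFGAux.keylemma (hsupp X) (hannv X) (hannW X) (by rw [hgt, hScard]) hle
  have hEg := congrFun hE g
  rw [LinearMap.sum_apply, Finset.sum_apply] at hEg
  rw [Finset.sum_eq_zero (fun X _ => key X)] at hEg
  rw [Pi.smul_apply, AFGAux.wstate_apply, hgt, hScard, if_pos rfl, smul_eq_mul] at hEg
  have hfac : (p.factorial : ℂ) ≠ 0 := Nat.cast_ne_zero.mpr p.factorial_ne_zero
  exact (mul_eq_zero.mp hEg.symm).resolve_right hfac
end

section
/- Let G be a finite simple graph on the vertex set V in which every vertex has degree at most Δ, and let c > 1 and d ≥ 1 be integers. For each i ∈ V let I_i ⊆ V be a subset such that |I_i| = c, every j ∈ I_i is within distance d of i, and I_{i₁} ≠ I_{i₂} whenever i₁ ≠ i₂. Set Q†_i = ∏_{j∈I_i} s†_j (the operators s†_j commute, so this product is well defined) and Q† = ∑_{i∈V} Q†_i. Then there exists an invertible linear operator M on the state space that is δ-locality-preserving with δ = 8d(Δ^{4d}+1), and that satisfies M |0̄⟩ = |0̄⟩ and M (S† |0̄⟩) = Q† |0̄⟩. -/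
open scoped BigOperators
set_option linter.unusedSectionVars false

noncomputable section AuxDev

section Basics
open Finset

variable {V : Type*} [Fintype V] [DecidableEq V]

/-- Matrix-level support condition. -/
def MSuppOn (m : (V → Bool) → (V → Bool) → ℂ) (X : Finset V) : Prop :=
  (∀ f g : V → Bool, (∃ u, u ∉ X ∧ f u ≠ g u) → m f g = 0) ∧
  (∀ f f' g g' : V → Bool,
    (∀ u ∈ X, f u = f' u) → (∀ u ∈ X, g u = g' u) →
    (∀ u, u ∉ X → f u = g u) → (∀ u, u ∉ X → f' u = g' u) →
    m f g = m f' g')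

lemma suppOn_iff_msuppOn (O : Module.End ℂ (QState V)) (X : Finset V) :
    SupportedOn O ↑X ↔ MSuppOn (fun f g => O (basisVec f) g) X := by
  constructor
  · rintro ⟨h1, h2⟩
    refine ⟨fun f g ⟨u, hu, hfg⟩ => h1 f g ⟨u, by simpa using hu, hfg⟩,
      fun f f' g g' a1 a2 a3 a4 => h2 f f' g g' (by simpa using a1) (by simpa using a2)
        (by simpa using a3) (by simpa using a4)⟩
  · rintro ⟨h1, h2⟩
    refine ⟨fun f g ⟨u, hu, hfg⟩ => h1 f g ⟨u, by simpa using hu, hfg⟩,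
      fun f f' g g' a1 a2 a3 a4 => h2 f f' g g' (by simpa using a1) (by simpa using a2)
        (by simpa using a3) (by simpa using a4)⟩

/-- Single-gate support growth. -/
lemma msuppOn_gate {B : Finset V} {τ : (V → Bool) → (V → Bool)}
    (hoff : ∀ f u, u ∉ B → τ f u = f u)
    (hdep : ∀ f f', (∀ u ∈ B, f u = f' u) → ∀ u ∈ B, τ f u = τ f' u)
    {m : (V → Bool) → (V → Bool) → ℂ} {X : Finset V} (hm : MSuppOn m X) :
    MSuppOn (fun f g => m (τ f) (τ g)) (X ∪ B) := by
  obtain ⟨h1, h2⟩ := hm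
  constructor
  · rintro f g ⟨u, hu, hfg⟩
    have huX : u ∉ X := fun h => hu (mem_union_left _ h)
    have huB : u ∉ B := fun h => hu (mem_union_right _ h)
    exact h1 _ _ ⟨u, huX, by rw [hoff f u huB, hoff g u huB]; exact hfg⟩
  · intro f f' g g' a1 a2 a3 a4
    have hffB : ∀ u ∈ B, f u = f' u := fun u hu => a1 u (mem_union_right _ hu)
    have hggB : ∀ u ∈ B, g u = g' u := fun u hu => a2 u (mem_union_right _ hu)
    have tff' : ∀ u ∈ X, τ f u = τ f' u := by
      intro u hu
      by_cases hB : u ∈ B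
      · exact hdep f f' hffB u hB
      · rw [hoff f u hB, hoff f' u hB]; exact a1 u (mem_union_left _ hu)
    have tgg' : ∀ u ∈ X, τ g u = τ g' u := by
      intro u hu
      by_cases hB : u ∈ B
      · exact hdep g g' hggB u hB
      · rw [hoff g u hB, hoff g' u hB]; exact a2 u (mem_union_left _ hu)
    by_cases hcase : ∀ u, u ∉ X → τ f u = τ g u
    · have hcase' : ∀ u, u ∉ X → τ f' u = τ g' u := by
        intro u hu
        by_cases hB : u ∈ B
        · rw [← hdep f f' hffB u hB, ← hdep g g' hggB u hB]; exact hcase u hu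
        · rw [hoff f' u hB, hoff g' u hB]
          exact a4 u (fun h => (mem_union.mp h).elim hu hB)
      exact h2 _ _ _ _ tff' tgg' hcase hcase'
    · push_neg at hcase
      obtain ⟨u, hu, hne⟩ := hcase
      have hB : u ∈ B := by
        by_contra hB
        apply hne
        rw [hoff f u hB, hoff g u hB]
        exact a3 u (fun h => (mem_union.mp h).elim hu hB)
      have z1 : m (τ f) (τ g) = 0 := h1 _ _ ⟨u, hu, hne⟩
      have z2 : m (τ f') (τ g') = 0 := h1 _ _
        ⟨u, hu, by rw [← hdep f f' hffB u hB, ← hdep g g' hggB u hB]; exact hne⟩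
      show m (τ f) (τ g) = m (τ f') (τ g')
      rw [z1, z2]

/-- A gate whose support is disjoint from the support of `m` acts trivially under
conjugation. -/
lemma msuppOn_gate_disjoint {B : Finset V} {τ : (V → Bool) → (V → Bool)}
    (hinj : Function.Injective τ)
    (hoff : ∀ f u, u ∉ B → τ f u = f u)
    (hdep : ∀ f f', (∀ u ∈ B, f u = f' u) → ∀ u ∈ B, τ f u = τ f' u)
    {m : (V → Bool) → (V → Bool) → ℂ} {X : Finset V} (hm : MSuppOn m X)
    (hdisj : ∀ u ∈ B, u ∉ X) :
    ∀ f g, m (τ f) (τ g) = m f g := by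
  obtain ⟨h1, h2⟩ := hm
  intro f g
  by_cases hcase : ∀ u, u ∉ X → f u = g u
  · have hXB : ∀ u ∈ X, u ∉ B := fun u hu hB => hdisj u hB hu
    have hfgB : ∀ u ∈ B, f u = g u := fun u hu => hcase u (hdisj u hu)
    refine h2 (τ f) f (τ g) g (fun u hu => hoff f u (hXB u hu))
      (fun u hu => hoff g u (hXB u hu)) ?_ hcase
    intro u hu
    by_cases hB : u ∈ B
    · exact hdep f g hfgB u hB
    · rw [hoff f u hB, hoff g u hB]; exact hcase u hu
  · push_neg at hcase
    obtain ⟨u, hu, hne⟩ := hcase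
    have z1 : m f g = 0 := h1 _ _ ⟨u, hu, hne⟩
    have z2 : m (τ f) (τ g) = 0 := by
      by_cases hB : u ∈ B
      · have hdiff : ¬ (∀ w ∈ B, τ f w = τ g w) := by
          intro hall
          have key : τ (fun w => if w ∈ B then g w else f w) = τ f := by
            funext w
            by_cases hw : w ∈ B
            · rw [hdep _ g (fun x hx => by simp [hx]) w hw]
              exact (hall w hw).symm
            · rw [hoff _ w hw, hoff f w hw]
              simp [hw]
          have hgf := hinj key
          have : g u = f u := by
            have := congrFun hgf u
            simpa [hB] using this
          exact hne this.symm
        push_neg at hdiff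
        obtain ⟨w, hwB, hne'⟩ := hdiff
        exact h1 _ _ ⟨w, hdisj w hwB, hne'⟩
      · exact h1 _ _ ⟨u, hu, by rw [hoff f u hB, hoff g u hB]; exact hne⟩
    rw [z1, z2]

lemma supportedOn_sum {η : Type*} (s : Finset η) (F : η → Module.End ℂ (QState V))
    (Z : Finset V) (hF : ∀ t ∈ s, SupportedOn (F t) ↑Z) :
    SupportedOn (∑ t ∈ s, F t) ↑Z := by
  constructor
  · intro f g hfg
    have : (∑ t ∈ s, F t) (basisVec f) g = ∑ t ∈ s, (F t) (basisVec f) g := by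
      simp [LinearMap.sum_apply, Finset.sum_apply]
    rw [this]
    exact Finset.sum_eq_zero fun t ht => (hF t ht).1 f g hfg
  · intro f f' g g' a1 a2 a3 a4
    have e1 : (∑ t ∈ s, F t) (basisVec f) g = ∑ t ∈ s, (F t) (basisVec f) g := by
      simp [LinearMap.sum_apply, Finset.sum_apply]
    have e2 : (∑ t ∈ s, F t) (basisVec f') g' = ∑ t ∈ s, (F t) (basisVec f') g' := by
      simp [LinearMap.sum_apply, Finset.sum_apply]
    rw [e1, e2]
    exact Finset.sum_congr rfl fun t ht => (hF t ht).2 f f' g g' a1 a2 a3 a4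

lemma withinDist_refl (G : SimpleGraph V) (r : ℕ) (i : V) : WithinDist G r i i :=
  ⟨SimpleGraph.Walk.nil, by simp⟩

lemma WithinDist.symm' {G : SimpleGraph V} {r : ℕ} {i j : V}
    (h : WithinDist G r i j) : WithinDist G r j i := by
  obtain ⟨w, hw⟩ := h
  exact ⟨w.reverse, by simpa using hw⟩

lemma WithinDist.trans' {G : SimpleGraph V} {r s : ℕ} {i j k : V}
    (h1 : WithinDist G r i j) (h2 : WithinDist G s j k) : WithinDist G (r + s) i k := by
  obtain ⟨w1, hw1⟩ := h1
  obtain ⟨w2, hw2⟩ := h2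
  exact ⟨w1.append w2, by rw [SimpleGraph.Walk.length_append]; omega⟩

lemma WithinDist.mono' {G : SimpleGraph V} {r s : ℕ} {i j : V}
    (h : WithinDist G r i j) (hrs : r ≤ s) : WithinDist G s i j := by
  obtain ⟨w, hw⟩ := h
  exact ⟨w, le_trans hw hrs⟩

end Basics
section Gates
open Finset

variable {V : Type*} [Fintype V] [DecidableEq V]

/-- Overwrite `f` with pattern `p` on `B`. -/
def ovw (f p : V → Bool) (B : Finset V) : V → Bool := fun u => if u ∈ B then p u else f u

/-- The pattern-swap gate on `B` exchanging patterns `p` and `q`. -/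
def patSwap (B : Finset V) (p q : V → Bool) (f : V → Bool) : V → Bool :=
  if ∀ u ∈ B, f u = p u then ovw f q B
  else if ∀ u ∈ B, f u = q u then ovw f p B
  else f

lemma patSwap_off (B : Finset V) (p q f : V → Bool) (u : V) (hu : u ∉ B) :
    patSwap B p q f u = f u := by
  unfold patSwap ovw
  split_ifs <;> simp [hu]

lemma patSwap_dep (B : Finset V) (p q : V → Bool) (f f' : V → Bool)
    (h : ∀ u ∈ B, f u = f' u) : ∀ u ∈ B, patSwap B p q f u = patSwap B p q f' u := by
  intro u hu
  have c1 : (∀ w ∈ B, f w = p w) ↔ (∀ w ∈ B, f' w = p w) :=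
    ⟨fun hc w hw => (h w hw).symm.trans (hc w hw), fun hc w hw => (h w hw).trans (hc w hw)⟩
  have c2 : (∀ w ∈ B, f w = q w) ↔ (∀ w ∈ B, f' w = q w) :=
    ⟨fun hc w hw => (h w hw).symm.trans (hc w hw), fun hc w hw => (h w hw).trans (hc w hw)⟩
  unfold patSwap ovw
  by_cases h1 : ∀ w ∈ B, f w = p w
  · rw [if_pos h1, if_pos (c1.mp h1)]; simp [hu]
  · rw [if_neg h1, if_neg (fun hc => h1 (c1.mpr hc))]
    by_cases h2 : ∀ w ∈ B, f w = q w
    · rw [if_pos h2, if_pos (c2.mp h2)]; simp [hu]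
    · rw [if_neg h2, if_neg (fun hc => h2 (c2.mpr hc))]; exact h u hu

lemma patSwap_fix {B : Finset V} {p q f : V → Bool}
    (h1 : ¬ ∀ u ∈ B, f u = p u) (h2 : ¬ ∀ u ∈ B, f u = q u) :
    patSwap B p q f = f := by
  unfold patSwap
  rw [if_neg h1, if_neg h2]

lemma patSwap_fst {B : Finset V} {p q f : V → Bool} (h1 : ∀ u ∈ B, f u = p u) :
    patSwap B p q f = ovw f q B := by
  unfold patSwap
  rw [if_pos h1]

lemma patSwap_snd {B : Finset V} {p q f : V → Bool}
    (hpq : ∃ u ∈ B, p u ≠ q u) (h2 : ∀ u ∈ B, f u = q u) :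
    patSwap B p q f = ovw f p B := by
  obtain ⟨w, hwB, hw⟩ := hpq
  unfold patSwap
  rw [if_neg, if_pos h2]
  intro hc
  exact hw (((hc w hwB).symm).trans (h2 w hwB))

lemma patSwap_invol (B : Finset V) (p q : V → Bool) (hpq : ∃ u ∈ B, p u ≠ q u)
    (f : V → Bool) : patSwap B p q (patSwap B p q f) = f := by
  obtain ⟨w, hwB, hw⟩ := hpq
  by_cases h1 : ∀ u ∈ B, f u = p u
  · rw [patSwap_fst h1]
    have hq : ∀ u ∈ B, ovw f q B u = q u := by intro u hu; simp [ovw, hu]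
    rw [patSwap_snd ⟨w, hwB, hw⟩ hq]
    funext u
    by_cases hu : u ∈ B <;> simp [ovw, hu]
    exact (h1 u hu).symm
  · by_cases h2 : ∀ u ∈ B, f u = q u
    · rw [patSwap_snd ⟨w, hwB, hw⟩ h2]
      have hp : ∀ u ∈ B, ovw f p B u = p u := by intro u hu; simp [ovw, hu]
      rw [patSwap_fst hp]
      funext u
      by_cases hu : u ∈ B <;> simp [ovw, hu]
      exact (h2 u hu).symm
    · rw [patSwap_fix h1 h2, patSwap_fix h1 h2]

end Gates
section Layers
open Finset

variable {V : Type*} [Fintype V] [DecidableEq V]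

variable (gt : V → (V → Bool) → (V → Bool))

/-- Apply gates in the order of the list (head first). -/
def appL : List V → (V → Bool) → (V → Bool)
  | [], f => f
  | i :: l, f => appL l (gt i f)

lemma appL_append (a b : List V) (f : V → Bool) :
    appL gt (a ++ b) f = appL gt b (appL gt a f) := by
  induction a generalizing f with
  | nil => rfl
  | cons i l ih => simp [appL, ih]

lemma appL_inv (hinv : ∀ i f, gt i (gt i f) = f) (l : List V) (f : V → Bool) :
    appL gt l.reverse (appL gt l f) = f := by
  induction l generalizing f with
  | nil => rfl
  | cons i l ih =>
    rw [List.reverse_cons, appL_append]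
    show appL gt [i] (appL gt l.reverse (appL gt l (gt i f))) = f
    rw [ih]
    show gt i (gt i f) = f
    exact hinv i f

lemma appL_inv' (hinv : ∀ i f, gt i (gt i f) = f) (l : List V) (f : V → Bool) :
    appL gt l (appL gt l.reverse f) = f := by
  have := appL_inv gt hinv l.reverse f
  rwa [List.reverse_reverse] at this

variable (Bl : V → Finset V)

/-- Conjugating a matrix by one layer of gates with pairwise disjoint supports. -/
lemma layer_supp
    (hinj : ∀ i, Function.Injective (gt i))
    (hoff : ∀ i f u, u ∉ Bl i → gt i f u = f u)
    (hdep : ∀ i f f', (∀ u ∈ Bl i, f u = f' u) → ∀ u ∈ Bl i, gt i f u = gt i f' u)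
    (L : List V) (hL : L.Pairwise (fun a b => Disjoint (Bl a) (Bl b)))
    (m : (V → Bool) → (V → Bool) → ℂ) (X : Finset V) (hm : MSuppOn m X) :
    ∃ Y : Finset V, X ⊆ Y ∧
      MSuppOn (fun f g => m (appL gt L f) (appL gt L g)) Y ∧
      ∀ y ∈ Y, y ∈ X ∨ ∃ i ∈ L, (Bl i ∩ X).Nonempty ∧ y ∈ Bl i := by
  induction L generalizing m X with
  | nil => exact ⟨X, subset_rfl, hm, fun y hy => Or.inl hy⟩
  | cons i rest ih =>
    obtain ⟨Yr, hXYr, hYr, hgeo⟩ := ih (List.Pairwise.of_cons hL) m X hm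
    have hrel : (fun f g => m (appL gt (i :: rest) f) (appL gt (i :: rest) g))
        = (fun f g => (fun a b => m (appL gt rest a) (appL gt rest b)) (gt i f) (gt i g)) := rfl
    by_cases hinter : (Bl i ∩ Yr).Nonempty
    · refine ⟨Yr ∪ Bl i, hXYr.trans subset_union_left, ?_, ?_⟩
      · rw [hrel]
        exact msuppOn_gate (hoff i) (hdep i) hYr
      · intro y hy
        rcases mem_union.mp hy with hy | hy
        · rcases hgeo y hy with h | ⟨j, hj, hjX, hyj⟩
          · exact Or.inl h
          · exact Or.inr ⟨j, List.mem_cons_of_mem _ hj, hjX, hyj⟩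
        · -- y ∈ Bl i ; show Bl i meets X
          obtain ⟨z, hz⟩ := hinter
          have hzi : z ∈ Bl i := (mem_inter.mp hz).1
          have hzY : z ∈ Yr := (mem_inter.mp hz).2
          rcases hgeo z hzY with hzX | ⟨j, hj, _, hzj⟩
          · exact Or.inr ⟨i, List.mem_cons_self, ⟨z, mem_inter.mpr ⟨hzi, hzX⟩⟩, hy⟩
          · -- z ∈ Bl i ∩ Bl j with j ∈ rest : contradicts disjointness
            exact absurd hzj (by
              have hdisj := (List.pairwise_cons.mp hL).1 j hj
              exact fun hzj => (Finset.disjoint_left.mp hdisj hzi) hzj)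
    · refine ⟨Yr, hXYr, ?_, ?_⟩
      · rw [hrel]
        have heq : ∀ f g, (fun a b => m (appL gt rest a) (appL gt rest b)) (gt i f) (gt i g)
            = m (appL gt rest f) (appL gt rest g) := by
          apply msuppOn_gate_disjoint (hinj i) (hoff i) (hdep i) hYr
          intro u hu huY
          exact hinter ⟨u, mem_inter.mpr ⟨hu, huY⟩⟩
        have : (fun f g => (fun a b => m (appL gt rest a) (appL gt rest b)) (gt i f) (gt i g))
            = fun f g => m (appL gt rest f) (appL gt rest g) := by
          funext f g; exact heq f g
        rw [this]
        exact hYr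
      · intro y hy
        rcases hgeo y hy with h | ⟨j, hj, hjX, hyj⟩
        · exact Or.inl h
        · exact Or.inr ⟨j, List.mem_cons_of_mem _ hj, hjX, hyj⟩

/-- Conjugating a matrix by a sequence of layers. -/
lemma layers_supp
    (hinj : ∀ i, Function.Injective (gt i))
    (hoff : ∀ i f u, u ∉ Bl i → gt i f u = f u)
    (hdep : ∀ i f f', (∀ u ∈ Bl i, f u = f' u) → ∀ u ∈ Bl i, gt i f u = gt i f' u)
    (G : SimpleGraph V) (r : ℕ)
    (hball : ∀ i, ∀ y ∈ Bl i, ∀ z ∈ Bl i, WithinDist G r y z)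
    (LL : List (List V))
    (hLL : ∀ L ∈ LL, L.Pairwise (fun a b => Disjoint (Bl a) (Bl b)))
    (m : (V → Bool) → (V → Bool) → ℂ) (X : Finset V) (hm : MSuppOn m X) :
    ∃ Y : Finset V, X ⊆ Y ∧
      MSuppOn (fun f g => m (appL gt (LL.flatMap id) f) (appL gt (LL.flatMap id) g)) Y ∧
      ∀ y ∈ Y, ∃ x ∈ X, WithinDist G (r * LL.length) x y := by
  induction LL generalizing m X with
  | nil =>
    exact ⟨X, subset_rfl, hm, fun y hy => ⟨y, hy, withinDist_refl G 0 y⟩⟩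
  | cons L T ih =>
    obtain ⟨Yr, hXYr, hYr, hgeo⟩ := ih (fun L' hL' => hLL L' (List.mem_cons_of_mem _ hL')) m X hm
    obtain ⟨Y, hYrY, hY, hgeo2⟩ := layer_supp gt Bl hinj hoff hdep L
      (hLL L (List.mem_cons_self))
      (fun a b => m (appL gt (T.flatMap id) a) (appL gt (T.flatMap id) b)) Yr hYr
    refine ⟨Y, hXYr.trans hYrY, ?_, ?_⟩
    · have : ∀ f, appL gt ((L :: T).flatMap id) f = appL gt (T.flatMap id) (appL gt L f) := by
        intro f
        show appL gt (L ++ T.flatMap id) f = _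
        exact appL_append gt L (T.flatMap id) f
      have e : (fun f g => m (appL gt ((L :: T).flatMap id) f) (appL gt ((L :: T).flatMap id) g))
          = fun f g => (fun a b => m (appL gt (T.flatMap id) a) (appL gt (T.flatMap id) b))
              (appL gt L f) (appL gt L g) := by
        funext f g; rw [this f, this g]
      rw [e]
      exact hY
    · intro y hy
      rcases hgeo2 y hy with hyYr | ⟨i, _, hiYr, hyi⟩
      · obtain ⟨x, hxX, hx⟩ := hgeo y hyYr
        refine ⟨x, hxX, hx.mono' ?_⟩
        simp only [List.length_cons, Nat.mul_succ]
        omega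
      · obtain ⟨z, hz⟩ := hiYr
        have hzi : z ∈ Bl i := (mem_inter.mp hz).1
        have hzY : z ∈ Yr := (mem_inter.mp hz).2
        obtain ⟨x, hxX, hx⟩ := hgeo z hzY
        have hzy : WithinDist G r z y := hball i z hzi y hyi
        have := hx.trans' hzy
        refine ⟨x, hxX, this.mono' ?_⟩
        simp only [List.length_cons, Nat.mul_succ]
        omega

end Layers
section Coloring
open Finset

variable {V : Type*} [Fintype V] [DecidableEq V]

lemma exists_greedy_coloring (D : ℕ) (Conf : V → V → Prop)
    (hsymm : ∀ a b, Conf a b → Conf b a) (hirr : ∀ a, ¬ Conf a a)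
    (hdeg : ∀ v, ∃ s : Finset V, (∀ w, Conf v w → w ∈ s) ∧ s.card ≤ D) :
    ∃ col : V → Fin (D + 1), ∀ a b, Conf a b → col a ≠ col b := by
  classical
  suffices h : ∀ s : Finset V, ∃ col : V → Fin (D + 1),
      ∀ a ∈ s, ∀ b ∈ s, Conf a b → col a ≠ col b by
    obtain ⟨col, hcol⟩ := h univ
    exact ⟨col, fun a b hab => hcol a (mem_univ a) b (mem_univ b) hab⟩
  intro s
  induction s using Finset.induction_on with
  | empty => exact ⟨fun _ => 0, by simp⟩
  | @insert a s ha ih =>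
    obtain ⟨col, hcol⟩ := ih
    obtain ⟨sa, hsa, hsacard⟩ := hdeg a
    set used := (sa.filter (fun b => b ∈ s)).image col with hused
    have hcard : used.card < D + 1 := by
      calc used.card ≤ (sa.filter (fun b => b ∈ s)).card := Finset.card_image_le
        _ ≤ sa.card := Finset.card_le_card (Finset.filter_subset _ _)
        _ ≤ D := hsacard
        _ < D + 1 := Nat.lt_succ_self D
    have hex : ∃ cnew : Fin (D + 1), cnew ∉ used := by
      by_contra hcon
      push_neg at hcon
      have hsub : (univ : Finset (Fin (D + 1))) ⊆ used := fun c _ => hcon c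
      have := Finset.card_le_card hsub
      simp only [Finset.card_univ, Fintype.card_fin] at this
      omega
    obtain ⟨cnew, hcnew⟩ := hex
    refine ⟨Function.update col a cnew, ?_⟩
    intro x hx y hy hxy
    have husedmem : ∀ b ∈ s, Conf a b → col b ∈ used := by
      intro b hb hab
      exact Finset.mem_image_of_mem col (Finset.mem_filter.mpr ⟨hsa b hab, hb⟩)
    have key : ∀ z, z ∈ s → z ≠ a := fun z hz h => ha (by rw [← h]; exact hz)
    rcases Finset.mem_insert.mp hx with rfl | hxs
    · rcases Finset.mem_insert.mp hy with rfl | hys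
      · exact absurd hxy (hirr _)
      · rw [Function.update_self, Function.update_of_ne (key y hys)]
        intro hcontra
        exact hcnew (by rw [hcontra]; exact husedmem y hys hxy)
    · rcases Finset.mem_insert.mp hy with rfl | hys
      · rw [Function.update_of_ne (key x hxs), Function.update_self]
        intro hcontra
        exact hcnew (by rw [← hcontra]; exact husedmem x hxs (hsymm _ _ hxy))
      · rw [Function.update_of_ne (key x hxs), Function.update_of_ne (key y hys)]
        exact hcol x hxs y hys hxy

variable (G : SimpleGraph V)

/-- The ball of radius `k` around `v`, as a `Finset`. -/
def ballD (v : V) (k : ℕ) : Finset V :=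
  @Finset.filter _ (fun w => WithinDist G k v w) (Classical.decPred _) univ

lemma mem_ballD {v w : V} {k : ℕ} : w ∈ ballD G v k ↔ WithinDist G k v w := by
  unfold ballD
  rw [@Finset.mem_filter _ _ (Classical.decPred _)]
  simp

lemma ballD_mono {v : V} {k k' : ℕ} (h : k ≤ k') : ballD G v k ⊆ ballD G v k' :=
  fun w hw => mem_ballD G |>.mpr ((mem_ballD G |>.mp hw).mono' h)

lemma ballD_zero (v : V) : ballD G v 0 = {v} := by
  ext w
  rw [mem_ballD, Finset.mem_singleton]
  constructor
  · rintro ⟨p, hp⟩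
    have : p.length = 0 := Nat.le_zero.mp hp
    exact (SimpleGraph.Walk.eq_of_length_eq_zero this).symm
  · rintro rfl
    exact withinDist_refl G 0 w

lemma adj_withinDist {u w : V} (h : G.Adj u w) : WithinDist G 1 u w :=
  ⟨SimpleGraph.Walk.cons h SimpleGraph.Walk.nil, by simp⟩

/-- The classical neighbor finset. -/
def nbrF (v : V) : Finset V :=
  @Finset.filter _ (fun w => G.Adj v w) (Classical.decPred _) univ

lemma mem_nbrF {v w : V} : w ∈ nbrF G v ↔ G.Adj v w := by
  unfold nbrF
  rw [@Finset.mem_filter _ _ (Classical.decPred _)]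
  simp

lemma nbrF_card_le {Δ : ℕ} (hdeg : ∀ v : V, (G.neighborSet v).ncard ≤ Δ) (v : V) :
    (nbrF G v).card ≤ Δ := by
  have hcoe : (↑(nbrF G v) : Set V) = G.neighborSet v := by
    ext w
    simp [mem_nbrF, SimpleGraph.mem_neighborSet]
  have := Set.ncard_coe_finset (nbrF G v)
  rw [hcoe] at this
  rw [← this]
  exact hdeg v

lemma exists_penultimate {v w : V} {k : ℕ}
    (h : WithinDist G (k + 1) v w) (hnot : ¬ WithinDist G k v w) :
    ∃ u, G.Adj u w ∧ WithinDist G k v u := by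
  obtain ⟨p, hp⟩ := h
  have hlen : p.length = k + 1 := by
    rcases Nat.lt_or_ge p.length (k + 1) with h' | h'
    · exact absurd ⟨p, by omega⟩ hnot
    · omega
  have hpr : p.reverse.length = k + 1 := by
    rw [SimpleGraph.Walk.length_reverse]; exact hlen
  clear hp hlen
  generalize p.reverse = pr at hpr
  cases pr with
  | nil => simp at hpr
  | @cons _ u _ ha q =>
    exact ⟨u, ha.symm, ⟨q.reverse, by simp at hpr ⊢; omega⟩⟩

/-- Sites at distance exactly `k+1` from `v`. -/
def layerD (v : V) (k : ℕ) : Finset V := ballD G v (k + 1) \ ballD G v k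

lemma layerD_zero_subset (v : V) : layerD G v 0 ⊆ nbrF G v := by
  intro w hw
  obtain ⟨hw1, hw0⟩ := Finset.mem_sdiff.mp hw
  obtain ⟨u, hadj, hu⟩ := exists_penultimate G (mem_ballD G |>.mp hw1)
    (fun hc => hw0 (mem_ballD G |>.mpr hc))
  have : u = v := by
    have := (mem_ballD G |>.mpr hu)
    rw [ballD_zero, Finset.mem_singleton] at this
    exact this
  subst this
  exact mem_nbrF G |>.mpr hadj

lemma layerD_step {Δ : ℕ} (hdeg : ∀ v : V, (G.neighborSet v).ncard ≤ Δ) (v : V) (k : ℕ) :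
    (layerD G v (k + 1)).card ≤ (Δ - 1) * (layerD G v k).card := by
  classical
  have hsub : layerD G v (k + 1) ⊆
      (layerD G v k).biUnion (fun u => nbrF G u ∩ layerD G v (k + 1)) := by
    intro w hw
    obtain ⟨hw1, hw0⟩ := Finset.mem_sdiff.mp hw
    obtain ⟨u, hadj, hu⟩ := exists_penultimate G (mem_ballD G |>.mp hw1)
      (fun hc => hw0 (mem_ballD G |>.mpr hc))
    have hunot : ¬ WithinDist G k v u := by
      intro hc
      exact hw0 (mem_ballD G |>.mpr (hc.trans' (adj_withinDist G hadj)))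
    refine Finset.mem_biUnion.mpr ⟨u, Finset.mem_sdiff.mpr
      ⟨mem_ballD G |>.mpr hu, fun hc => hunot (mem_ballD G |>.mp hc)⟩, ?_⟩
    exact Finset.mem_inter.mpr ⟨mem_nbrF G |>.mpr hadj, hw⟩
  calc (layerD G v (k + 1)).card
      ≤ ((layerD G v k).biUnion (fun u => nbrF G u ∩ layerD G v (k + 1))).card :=
        Finset.card_le_card hsub
    _ ≤ ∑ u ∈ layerD G v k, (nbrF G u ∩ layerD G v (k + 1)).card :=
        Finset.card_biUnion_le
    _ ≤ ∑ _u ∈ layerD G v k, (Δ - 1) := by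
        apply Finset.sum_le_sum
        intro u hu
        obtain ⟨hu1, hu0⟩ := Finset.mem_sdiff.mp hu
        obtain ⟨u', hadj', hu'⟩ := exists_penultimate G (mem_ballD G |>.mp hu1)
          (fun hc => hu0 (mem_ballD G |>.mpr hc))
        have hu'mem : u' ∈ nbrF G u := mem_nbrF G |>.mpr hadj'.symm
        have hu'not : u' ∉ layerD G v (k + 1) := by
          intro hc
          exact (Finset.mem_sdiff.mp hc).2 (mem_ballD G |>.mpr (hu'.mono' (Nat.le_succ k)))
        have hsub2 : nbrF G u ∩ layerD G v (k + 1) ⊆ (nbrF G u).erase u' := by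
          intro x hx
          obtain ⟨hx1, hx2⟩ := Finset.mem_inter.mp hx
          exact Finset.mem_erase.mpr ⟨fun h => hu'not (h ▸ hx2), hx1⟩
        calc (nbrF G u ∩ layerD G v (k + 1)).card ≤ ((nbrF G u).erase u').card :=
              Finset.card_le_card hsub2
          _ = (nbrF G u).card - 1 := Finset.card_erase_of_mem hu'mem
          _ ≤ Δ - 1 := Nat.sub_le_sub_right (nbrF_card_le G hdeg u) 1
    _ = (Δ - 1) * (layerD G v k).card := by
        rw [Finset.sum_const, smul_eq_mul, Nat.mul_comm]

lemma layerD_bound {Δ : ℕ} (hdeg : ∀ v : V, (G.neighborSet v).ncard ≤ Δ) (v : V) :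
    ∀ k, (layerD G v k).card ≤ Δ * (Δ - 1) ^ k := by
  intro k
  induction k with
  | zero =>
    simpa using Finset.card_le_card (layerD_zero_subset G v) |>.trans (nbrF_card_le G hdeg v)
  | succ k ih =>
    calc (layerD G v (k + 1)).card ≤ (Δ - 1) * (layerD G v k).card := layerD_step G hdeg v k
      _ ≤ (Δ - 1) * (Δ * (Δ - 1) ^ k) := Nat.mul_le_mul_left _ ih
      _ = Δ * (Δ - 1) ^ (k + 1) := by ring

lemma ballD_subset_layers (v : V) :
    ∀ r, ballD G v r ⊆ insert v ((Finset.range r).biUnion (fun k => layerD G v k)) := by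
  intro r
  induction r with
  | zero => rw [ballD_zero]; intro x hx; exact Finset.mem_insert.mpr (Or.inl (Finset.mem_singleton.mp hx))
  | succ r ih =>
    intro x hx
    by_cases hxr : x ∈ ballD G v r
    · have := ih hxr
      rcases Finset.mem_insert.mp this with h | h
      · exact Finset.mem_insert.mpr (Or.inl h)
      · refine Finset.mem_insert.mpr (Or.inr ?_)
        obtain ⟨k, hk, hxk⟩ := Finset.mem_biUnion.mp h
        exact Finset.mem_biUnion.mpr ⟨k, Finset.mem_range.mpr (Nat.lt_succ_of_lt (Finset.mem_range.mp hk)), hxk⟩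
    · refine Finset.mem_insert.mpr (Or.inr (Finset.mem_biUnion.mpr ⟨r, Finset.mem_range.mpr (Nat.lt_succ_self r), ?_⟩))
      exact Finset.mem_sdiff.mpr ⟨hx, hxr⟩

lemma geom_sum_le (Δ : ℕ) : ∀ r, 1 ≤ r → ∑ k ∈ Finset.range r, Δ * (Δ - 1) ^ k ≤ Δ ^ r := by
  rcases Nat.eq_zero_or_pos Δ with hΔ | hΔ
  · intro r hr
    subst hΔ
    simp [Nat.zero_pow (show 0 < r by omega)]
  · intro r hr
    induction r with
    | zero => omega
    | succ r ih =>
      rcases Nat.eq_zero_or_pos r with hr0 | hr0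
      · subst hr0; simp
      · have h1 : ∑ k ∈ Finset.range (r + 1), Δ * (Δ - 1) ^ k
            = (∑ k ∈ Finset.range r, Δ * (Δ - 1) ^ k) + Δ * (Δ - 1) ^ r :=
          Finset.sum_range_succ _ r
        have h2 : Δ * (Δ - 1) ^ r ≤ Δ ^ r * (Δ - 1) := by
          obtain ⟨r', rfl⟩ : ∃ r', r = r' + 1 := ⟨r - 1, by omega⟩
          calc Δ * (Δ - 1) ^ (r' + 1) = Δ * (Δ - 1) ^ r' * (Δ - 1) := by ring
            _ ≤ Δ * Δ ^ r' * (Δ - 1) :=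
              Nat.mul_le_mul_right _ (Nat.mul_le_mul_left _ (Nat.pow_le_pow_left (Nat.sub_le _ _) r'))
            _ = Δ ^ (r' + 1) * (Δ - 1) := by ring
        have h3 : Δ ^ r + Δ ^ r * (Δ - 1) = Δ ^ (r + 1) := by
          have : 1 + (Δ - 1) = Δ := by omega
          calc Δ ^ r + Δ ^ r * (Δ - 1) = Δ ^ r * (1 + (Δ - 1)) := by ring
            _ = Δ ^ r * Δ := by rw [this]
            _ = Δ ^ (r + 1) := by ring
        have := ih hr0
        omega
lemma conflict_bound {Δ : ℕ} (hdeg : ∀ v : V, (G.neighborSet v).ncard ≤ Δ)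
    (r : ℕ) (hr : 1 ≤ r) (v : V) :
    ∃ s : Finset V, (∀ w, (v ≠ w ∧ WithinDist G r v w) → w ∈ s) ∧ s.card ≤ Δ ^ r := by
  classical
  refine ⟨(ballD G v r).erase v, ?_, ?_⟩
  · rintro w ⟨hne, hw⟩
    exact Finset.mem_erase.mpr ⟨fun h => hne h.symm, mem_ballD G |>.mpr hw⟩
  · have hsub : (ballD G v r).erase v ⊆ (Finset.range r).biUnion (fun k => layerD G v k) := by
      intro x hx
      obtain ⟨hxne, hxb⟩ := Finset.mem_erase.mp hx
      rcases Finset.mem_insert.mp (ballD_subset_layers G v r hxb) with h | h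
      · exact absurd h hxne
      · exact h
    calc ((ballD G v r).erase v).card
        ≤ ((Finset.range r).biUnion (fun k => layerD G v k)).card := Finset.card_le_card hsub
      _ ≤ ∑ k ∈ Finset.range r, (layerD G v k).card := Finset.card_biUnion_le
      _ ≤ ∑ k ∈ Finset.range r, Δ * (Δ - 1) ^ k :=
          Finset.sum_le_sum (fun k _ => layerD_bound G hdeg v k)
      _ ≤ Δ ^ r := geom_sum_le Δ r hr

end Coloring
section Specific
open Finset

variable {V : Type*} [Fintype V] [DecidableEq V]

/-- Single-excitation configuration at `i`. -/
def dcfg (i : V) : V → Bool := fun u => if u = i then true else false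

/-- Configuration with excitations exactly on `S`. -/
def ccfg (S : Finset V) : V → Bool := fun u => if u ∈ S then true else false

/-- The all-false configuration. -/
def vcfg : V → Bool := fun _ => false

lemma vac_eq_basis : vac V = basisVec vcfg := rfl

lemma creOp_basisVec (a : V) (f : V → Bool) (hf : f a = false) :
    creOp a (basisVec f) = basisVec (Function.update f a true) := by
  funext g
  show (if g a = true then basisVec f (Function.update g a false) else 0)
      = basisVec (Function.update f a true) g
  by_cases he : g = Function.update f a true
  · subst he
    have h1 : Function.update f a true a = true := Function.update_self a true f
    rw [if_pos h1]
    have h2 : Function.update (Function.update f a true) a false = f := by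
      funext u
      by_cases hu : u = a
      · subst hu; simp [Function.update_self, hf]
      · simp [Function.update_of_ne hu]
    rw [h2]
    simp [basisVec]
  · have hrhs : basisVec (Function.update f a true) g = 0 := by
      simp [basisVec, he]
    rw [hrhs]
    by_cases hg : g a = true
    · rw [if_pos hg]
      have hne : Function.update g a false ≠ f := by
        intro hcon
        apply he
        funext u
        by_cases hu : u = a
        · subst hu; simp [Function.update_self, hg]
        · rw [Function.update_of_ne hu]
          have := congrFun hcon u
          rw [Function.update_of_ne hu] at this
          exact this
      simp [basisVec, hne]
    · rw [if_neg hg]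

lemma dcfg_eq_update (i : V) : dcfg i = Function.update vcfg i true := by
  funext u
  by_cases hu : u = i <;> simp [dcfg, vcfg, Function.update_apply, hu]

lemma creOp_vac (i : V) : creOp i (vac V) = basisVec (dcfg i) := by
  rw [vac_eq_basis, creOp_basisVec i vcfg rfl, ← dcfg_eq_update]

lemma Sdag_vac : Sdag V (vac V) = ∑ i : V, basisVec (dcfg i) := by
  show (∑ i : V, creOp i) (vac V) = _
  rw [LinearMap.sum_apply]
  exact Finset.sum_congr rfl fun i _ => creOp_vac i

lemma creProd_basis (Y : Finset V) : ∀ f : V → Bool, (∀ u ∈ Y, f u = false) →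
    creProd Y (basisVec f) = basisVec (fun u => if u ∈ Y then true else f u) := by
  induction Y using Finset.cons_induction with
  | empty =>
    intro f hf
    have he : (fun u => if u ∈ (∅ : Finset V) then true else f u) = f := by
      funext u; simp
    rw [he]
    exact LinearMap.congr_fun (Finset.noncommProd_empty ..) (basisVec f)
  | cons a s ha ih =>
    intro f hf
    have hstep : creProd (Finset.cons a s ha) (basisVec f)
        = creOp a (creProd s (basisVec f)) := by
      exact LinearMap.congr_fun (Finset.noncommProd_cons ..) (basisVec f)
    rw [hstep, ih f (fun u hu => hf u (Finset.mem_cons_of_mem hu))]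
    have hf'a : (fun u => if u ∈ s then true else f u) a = false := by
      simp [ha]
      exact hf a (Finset.mem_cons_self a s)
    rw [creOp_basisVec a _ hf'a]
    have hfun : Function.update (fun u => if u ∈ s then true else f u) a true
        = (fun u => if u ∈ Finset.cons a s ha then true else f u) := by
      funext u
      by_cases hu : u = a
      · subst hu; simp [Function.update_self, Finset.mem_cons]
      · rw [Function.update_of_ne hu]
        simp [Finset.mem_cons, hu]
    rw [hfun]

lemma creProd_vac (Y : Finset V) : creProd Y (vac V) = basisVec (ccfg Y) := by
  rw [vac_eq_basis, creProd_basis Y vcfg (fun _ _ => rfl)]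
  have hfun : (fun u => if u ∈ Y then true else vcfg u) = ccfg Y := by
    funext u; simp [ccfg, vcfg]
  rw [hfun]

/-- The linear equivalence induced by a bijection of configurations. -/
def permLE (σ τ : (V → Bool) → (V → Bool)) (h1 : ∀ f, σ (τ f) = f) (h2 : ∀ f, τ (σ f) = f) :
    QState V ≃ₗ[ℂ] QState V where
  toFun ψ := ψ ∘ τ
  invFun ψ := ψ ∘ σ
  map_add' ψ φ := rfl
  map_smul' a ψ := rfl
  left_inv ψ := by funext g; exact congrArg ψ (h2 g)
  right_inv ψ := by funext g; exact congrArg ψ (h1 g)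

lemma permLE_basisVec (σ τ : (V → Bool) → (V → Bool)) (h1 h2) (f : V → Bool) :
    permLE σ τ h1 h2 (basisVec f) = basisVec (σ f) := by
  funext g
  show basisVec f (τ g) = basisVec (σ f) g
  unfold basisVec
  by_cases hg : g = σ f
  · subst hg
    rw [if_pos (h2 f), if_pos rfl]
  · rw [if_neg hg, if_neg (fun hc => hg (by rw [← h1 g, hc]))]

lemma permLE_symm (σ τ : (V → Bool) → (V → Bool)) (h1 h2) :
    (permLE σ τ h1 h2).symm = permLE τ σ h2 h1 := rfl

lemma permLE_conj_apply (σ τ : (V → Bool) → (V → Bool)) (h1 h2)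
    (O : Module.End ℂ (QState V)) (f g : V → Bool) :
    ((permLE σ τ h1 h2).toLinearMap ∘ₗ O ∘ₗ (permLE σ τ h1 h2).symm.toLinearMap)
      (basisVec f) g = O (basisVec (τ f)) (τ g) := by
  have hsymm : (permLE σ τ h1 h2).symm (basisVec f) = basisVec (τ f) :=
    permLE_basisVec τ σ h2 h1 f
  show ((permLE σ τ h1 h2) (O ((permLE σ τ h1 h2).symm (basisVec f)))) g = _
  rw [hsymm]
  rfl

lemma permLE_conj_apply' (σ τ : (V → Bool) → (V → Bool)) (h1 h2)
    (O : Module.End ℂ (QState V)) (f g : V → Bool) :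
    ((permLE σ τ h1 h2).symm.toLinearMap ∘ₗ O ∘ₗ (permLE σ τ h1 h2).toLinearMap)
      (basisVec f) g = O (basisVec (σ f)) (σ g) := by
  have hM : (permLE σ τ h1 h2) (basisVec f) = basisVec (σ f) :=
    permLE_basisVec σ τ h1 h2 f
  show ((permLE σ τ h1 h2).symm (O ((permLE σ τ h1 h2) (basisVec f)))) g = _
  rw [hM]
  rfl

lemma exists_mem_ne (s : Finset V) (hs : 1 < s.card) (x : V) : ∃ u ∈ s, u ≠ x := by
  obtain ⟨a, ha, b, hb, hab⟩ := Finset.one_lt_card.mp hs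
  by_cases h : a = x
  · refine ⟨b, hb, ?_⟩
    rw [← h]
    exact fun e => hab e.symm
  · exact ⟨a, ha, h⟩

section QGate

variable (G : SimpleGraph V) (d : ℕ) (I : V → Finset V)

/-- The local gate at `i`: swaps `dcfg i` and `ccfg (I i)` patterns on the ball of
radius `2d` around `i`. -/
def qgate (i : V) : (V → Bool) → (V → Bool) :=
  patSwap (ballD G i (2 * d)) (dcfg i) (ccfg (I i))

variable {G d I}

lemma self_mem_ball (i : V) : i ∈ ballD G i (2 * d) :=
  (mem_ballD G).mpr (withinDist_refl G _ i)

lemma II_subset_ball (hclose : ∀ i, ∀ j ∈ I i, WithinDist G d i j) (i : V) :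
    I i ⊆ ballD G i (2 * d) := fun u hu =>
  (mem_ballD G).mpr ((hclose i u hu).mono' (by omega))

variable {c : ℕ}

lemma qgate_hpq (hc : 1 < c) (hcard : ∀ i, (I i).card = c)
    (hclose : ∀ i, ∀ j ∈ I i, WithinDist G d i j) (i : V) :
    ∃ u ∈ ballD G i (2 * d), dcfg i u ≠ ccfg (I i) u := by
  by_cases hi : i ∈ I i
  · obtain ⟨u, hu, hune⟩ := exists_mem_ne (I i) (by rw [hcard i]; exact hc) i
    exact ⟨u, II_subset_ball hclose i hu, by simp [dcfg, ccfg, hune, hu]⟩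
  · exact ⟨i, self_mem_ball i, by simp [dcfg, ccfg, hi]⟩

lemma qgate_invol (hc : 1 < c) (hcard : ∀ i, (I i).card = c)
    (hclose : ∀ i, ∀ j ∈ I i, WithinDist G d i j) (i : V) (f : V → Bool) :
    qgate G d I i (qgate G d I i f) = f :=
  patSwap_invol _ _ _ (qgate_hpq hc hcard hclose i) f

lemma qgate_inj (hc : 1 < c) (hcard : ∀ i, (I i).card = c)
    (hclose : ∀ i, ∀ j ∈ I i, WithinDist G d i j) (i : V) :
    Function.Injective (qgate G d I i) :=
  Function.Involutive.injective (qgate_invol hc hcard hclose i)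

lemma qgate_off (i : V) (f : V → Bool) (u : V) (hu : u ∉ ballD G i (2 * d)) :
    qgate G d I i f u = f u :=
  patSwap_off _ _ _ f u hu

lemma qgate_dep (i : V) (f f' : V → Bool) (h : ∀ u ∈ ballD G i (2 * d), f u = f' u) :
    ∀ u ∈ ballD G i (2 * d), qgate G d I i f u = qgate G d I i f' u :=
  patSwap_dep _ _ _ f f' h

lemma qgate_dcfg_self (hclose : ∀ i, ∀ j ∈ I i, WithinDist G d i j) (i : V) :
    qgate G d I i (dcfg i) = ccfg (I i) := by
  unfold qgate
  rw [patSwap_fst (fun u _ => rfl)]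
  funext u
  by_cases hu : u ∈ ballD G i (2 * d)
  · simp [ovw, hu]
  · have h1 : u ≠ i := fun e => hu (by rw [e]; exact self_mem_ball i)
    have h2 : u ∉ I i := fun e => hu (II_subset_ball hclose i e)
    simp [ovw, hu, dcfg, ccfg, h1, h2]

lemma qgate_ccfg_self (hc : 1 < c) (hcard : ∀ i, (I i).card = c)
    (hclose : ∀ i, ∀ j ∈ I i, WithinDist G d i j) (i : V) :
    qgate G d I i (ccfg (I i)) = dcfg i := by
  unfold qgate
  rw [patSwap_snd (qgate_hpq hc hcard hclose i) (fun u _ => rfl)]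
  funext u
  by_cases hu : u ∈ ballD G i (2 * d)
  · simp [ovw, hu]
  · have h1 : u ≠ i := fun e => hu (by rw [e]; exact self_mem_ball i)
    have h2 : u ∉ I i := fun e => hu (II_subset_ball hclose i e)
    simp [ovw, hu, dcfg, ccfg, h1, h2]

lemma qgate_dcfg_other (hc : 1 < c) (hcard : ∀ i, (I i).card = c)
    (hclose : ∀ i, ∀ j ∈ I i, WithinDist G d i j) {i j : V} (hji : j ≠ i) :
    qgate G d I j (dcfg i) = dcfg i := by
  unfold qgate
  apply patSwap_fix
  · intro hall
    have := hall j (self_mem_ball j)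
    simp [dcfg, hji] at this
  · intro hall
    obtain ⟨u, hu, hune⟩ := exists_mem_ne (I j) (by rw [hcard j]; exact hc) i
    have := hall u (II_subset_ball hclose j hu)
    simp [dcfg, ccfg, hune, hu] at this

lemma qgate_ccfg_other (hc : 1 < c) (hcard : ∀ i, (I i).card = c)
    (hclose : ∀ i, ∀ j ∈ I i, WithinDist G d i j) (hinjI : Function.Injective I)
    {i j : V} (hji : j ≠ i) :
    qgate G d I j (ccfg (I i)) = ccfg (I i) := by
  unfold qgate
  apply patSwap_fix
  · intro hall
    by_cases hj : j ∈ I i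
    · obtain ⟨u, hu, hune⟩ := exists_mem_ne (I i) (by rw [hcard i]; exact hc) j
      have huB : u ∈ ballD G j (2 * d) := by
        refine (mem_ballD G).mpr ?_
        have h1 : WithinDist G d j i := (hclose i j hj).symm'
        have h2 : WithinDist G d i u := hclose i u hu
        exact (h1.trans' h2).mono' (by omega)
      have := hall u huB
      simp [ccfg, dcfg, hu, hune] at this
    · have := hall j (self_mem_ball j)
      simp [ccfg, dcfg, hj] at this
  · intro hall
    have hsub : I j ⊆ I i := by
      intro u hu
      have huB : u ∈ ballD G j (2 * d) := II_subset_ball hclose j hu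
      have heq := hall u huB
      simp [ccfg, hu] at heq
      by_contra hcon
      simp [hcon] at heq
    have heq2 : I j = I i := Finset.eq_of_subset_of_card_le hsub (by rw [hcard i, hcard j])
    exact hji (hinjI heq2)

lemma qgate_vcfg (hc : 1 < c) (hcard : ∀ i, (I i).card = c)
    (hclose : ∀ i, ∀ j ∈ I i, WithinDist G d i j) (j : V) :
    qgate G d I j vcfg = vcfg := by
  unfold qgate
  apply patSwap_fix
  · intro hall
    have := hall j (self_mem_ball j)
    simp [vcfg, dcfg] at this
  · intro hall
    have hpos : (I j).Nonempty := Finset.card_pos.mp (by rw [hcard j]; omega)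
    obtain ⟨u, hu⟩ := hpos
    have := hall u (II_subset_ball hclose j hu)
    simp [vcfg, ccfg, hu] at this

end QGate

lemma appL_fix (gt : V → (V → Bool) → (V → Bool)) (x : V → Bool) :
    ∀ l : List V, (∀ i ∈ l, gt i x = x) → appL gt l x = x := by
  intro l
  induction l with
  | nil => intro _; rfl
  | cons i t ih =>
    intro h
    show appL gt t (gt i x) = x
    rw [h i (List.mem_cons_self)]
    exact ih (fun j hj => h j (List.mem_cons_of_mem i hj))

lemma appL_once (gt : V → (V → Bool) → (V → Bool)) (x y : V → Bool) (l : List V)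
    (hnd : l.Nodup) (i : V) (hi : i ∈ l) (hswap : gt i x = y)
    (hfix : ∀ j, j ≠ i → gt j x = x) (hfix2 : ∀ j, j ≠ i → gt j y = y) :
    appL gt l x = y := by
  obtain ⟨s, t, rfl⟩ := List.append_of_mem hi
  obtain ⟨hs, hit, hdisj⟩ := List.nodup_append'.mp hnd
  have his : i ∉ s := fun h => hdisj h (List.mem_cons_self)
  have hitt : i ∉ t := (List.nodup_cons.mp hit).1
  rw [appL_append]
  rw [appL_fix gt x s (fun j hj => hfix j (fun e => his (e ▸ hj)))]
  show appL gt t (gt i x) = y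
  rw [hswap]
  exact appL_fix gt y t (fun j hj => hfix2 j (fun e => hitt (e ▸ hj)))

lemma nodup_flat (LL : List (List V)) (hnd : ∀ L ∈ LL, L.Nodup)
    (hpd : LL.Pairwise (fun A B => ∀ a ∈ A, a ∉ B)) : (LL.flatMap id).Nodup := by
  induction LL with
  | nil => simp
  | cons L T ih =>
    have hflat : (L :: T).flatMap id = L ++ T.flatMap id := by simp
    rw [hflat, List.nodup_append']
    obtain ⟨hhead, htail⟩ := List.pairwise_cons.mp hpd
    refine ⟨hnd L (List.mem_cons_self), ih (fun A hA => hnd A (List.mem_cons_of_mem _ hA)) htail, ?_⟩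
    intro a ha hmem
    obtain ⟨B, hB, haB⟩ := List.mem_flatMap.mp hmem
    exact hhead B hB a ha haB

lemma flat_reverse (LL : List (List V)) :
    (LL.flatMap id).reverse = ((LL.map List.reverse).reverse).flatMap id := by
  induction LL with
  | nil => simp
  | cons L T ih =>
    have h1 : (L :: T).flatMap id = L ++ T.flatMap id := by simp
    rw [h1, List.reverse_append, ih]
    simp [List.flatMap_append]

end Specific
section ConjLemma
open Finset

variable {V : Type*} [Fintype V] [DecidableEq V]

lemma conj_isRangeHam
    (gt : V → (V → Bool) → (V → Bool)) (Bl : V → Finset V)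
    (hinj : ∀ i, Function.Injective (gt i))
    (hoff : ∀ i f u, u ∉ Bl i → gt i f u = f u)
    (hdep : ∀ i f f', (∀ u ∈ Bl i, f u = f' u) → ∀ u ∈ Bl i, gt i f u = gt i f' u)
    (G : SimpleGraph V) (r : ℕ)
    (hball : ∀ i, ∀ y ∈ Bl i, ∀ z ∈ Bl i, WithinDist G r y z)
    (LL : List (List V))
    (hLL : ∀ L ∈ LL, L.Pairwise (fun a b => Disjoint (Bl a) (Bl b)))
    (A B : Module.End ℂ (QState V)) (O : Module.End ℂ (QState V))
    (hmat : ∀ (O' : Module.End ℂ (QState V)) (f g : V → Bool),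
      (A ∘ₗ O' ∘ₗ B) (basisVec f) g
        = O' (basisVec (appL gt (LL.flatMap id) f)) (appL gt (LL.flatMap id) g))
    (δ R : ℕ) (hR : 0 < R)
    (harith : r * LL.length + (R - 1) + r * LL.length ≤ (R + δ) - 1)
    (hO : IsRangeHam G R O) :
    IsRangeHam G (R + δ) (A ∘ₗ O ∘ₗ B) := by
  classical
  obtain ⟨h, hsupp, hnz, hsum⟩ := hO
  have hms : ∀ X : Finset V, MSuppOn (fun f g => (h X) (basisVec f) g) X :=
    fun X => (suppOn_iff_msuppOn (h X) X).mp (hsupp X)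
  have hfor : ∀ X : Finset V, ∃ Y : Finset V, X ⊆ Y ∧
      MSuppOn (fun f g => (h X) (basisVec (appL gt (LL.flatMap id) f))
        (appL gt (LL.flatMap id) g)) Y ∧
      ∀ y ∈ Y, ∃ x ∈ X, WithinDist G (r * LL.length) x y :=
    fun X => layers_supp gt Bl hinj hoff hdep G r hball LL hLL _ X (hms X)
  choose Yf hXY hmY hgeo using hfor
  refine ⟨fun Z => ∑ X ∈ Finset.univ.filter (fun X => Yf X = Z), (A ∘ₗ h X ∘ₗ B),
    ?_, ?_, ?_⟩
  · intro Z
    apply supportedOn_sum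
    intro X hX
    have hYZ : Yf X = Z := (Finset.mem_filter.mp hX).2
    rw [← hYZ, suppOn_iff_msuppOn]
    have he : (fun f g => (A ∘ₗ h X ∘ₗ B) (basisVec f) g)
        = fun f g => (h X) (basisVec (appL gt (LL.flatMap id) f))
            (appL gt (LL.flatMap id) g) := by
      funext f g
      exact hmat (h X) f g
    rw [he]
    exact hmY X
  · intro Z hZ
    have hex : ∃ X ∈ Finset.univ.filter (fun X => Yf X = Z), (A ∘ₗ h X ∘ₗ B) ≠ 0 := by
      by_contra hcon
      push_neg at hcon
      exact hZ (Finset.sum_eq_zero hcon)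
    obtain ⟨X, hXf, hXne⟩ := hex
    have hYZ : Yf X = Z := (Finset.mem_filter.mp hXf).2
    have hhX : h X ≠ 0 := by
      intro h0
      apply hXne
      rw [h0]
      ext ψ
      simp
    obtain ⟨hXnonempty, hXdiam⟩ := hnz X hhX
    subst hYZ
    constructor
    · obtain ⟨x, hx⟩ := hXnonempty
      exact ⟨x, hXY X hx⟩
    · intro y hy y' hy'
      obtain ⟨x, hxX, hxy⟩ := hgeo X y hy
      obtain ⟨x', hx'X, hx'y'⟩ := hgeo X y' hy'
      have hxx' : WithinDist G (R - 1) x x' := hXdiam x hxX x' hx'X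
      exact ((hxy.symm'.trans' hxx').trans' hx'y').mono' harith
  · rw [Finset.sum_fiberwise]
    rw [hsum]
    ext ψ
    simp [LinearMap.sum_apply, Finset.sum_apply, map_sum]

end ConjLemma

end AuxDev

/-- Existence of a δ-locality-preserving invertible map sending the vacuum to
itself and `S† |0̄⟩` to `Q† |0̄⟩`, for `Q† = ∑ i ∏_{j ∈ I_i} s†_j` with distinct index sets
`I_i` of size `c > 1` located within distance `d` of `i`, with `δ = 8d(Δ^{4d}+1)`. -/
theorem exists_locality_preserving_map
    {V : Type*} [Fintype V] [DecidableEq V]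
    (G : SimpleGraph V)
    (Δ : ℕ) (hdeg : ∀ v : V, (G.neighborSet v).ncard ≤ Δ)
    (c d : ℕ) (hc : 1 < c) (hd : 1 ≤ d)
    (I : V → Finset V)
    (hcard : ∀ i, (I i).card = c)
    (hclose : ∀ i, ∀ j ∈ I i, WithinDist G d i j)
    (hinj : Function.Injective I) :
    ∃ M : QState V ≃ₗ[ℂ] QState V,
      LocalityPreserving G (8 * d * (Δ ^ (4 * d) + 1)) M ∧
      M (vac V) = vac V ∧
      M ((Sdag V) (vac V)) = (∑ i : V, creProd (I i)) (vac V) := by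
  classical
  -- a coloring of the conflict graph (vertices within distance 4d)
  obtain ⟨col, hcol⟩ := exists_greedy_coloring (Δ ^ (4 * d))
    (fun a b => a ≠ b ∧ WithinDist G (4 * d) a b)
    (fun a b hab => ⟨Ne.symm hab.1, hab.2.symm'⟩)
    (fun a haa => haa.1 rfl)
    (fun v => conflict_bound G hdeg (4 * d) (by omega) v)
  set layerL : Fin (Δ ^ (4 * d) + 1) → List V :=
    fun k => (Finset.univ.filter (fun v => col v = k)).toList with hlayerL
  set LL : List (List V) := (List.finRange (Δ ^ (4 * d) + 1)).map layerL with hLLdef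
  set l : List V := LL.flatMap id with hldef
  set gt := qgate G d I with hgt
  set Bl : V → Finset V := fun i => ballD G i (2 * d) with hBl
  -- gate properties
  have ginj : ∀ i, Function.Injective (gt i) := fun i => qgate_inj hc hcard hclose i
  have ginv : ∀ i f, gt i (gt i f) = f := fun i f => qgate_invol hc hcard hclose i f
  have goff : ∀ i f u, u ∉ Bl i → gt i f u = f u := fun i f u hu => qgate_off i f u hu
  have gdep : ∀ i f f', (∀ u ∈ Bl i, f u = f' u) → ∀ u ∈ Bl i, gt i f u = gt i f' u :=
    fun i => qgate_dep i
  -- membership into colored layers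
  have hmemcol : ∀ (k : Fin (Δ ^ (4 * d) + 1)) (v : V), v ∈ layerL k → col v = k := fun k v hv =>
    (Finset.mem_filter.mp (Finset.mem_toList.mp hv)).2
  have hdisj2 : ∀ a b : V, a ≠ b → col a = col b → Disjoint (Bl a) (Bl b) := by
    intro a b hne hcoleq
    rw [Finset.disjoint_left]
    intro x hxa hxb
    have h1 : WithinDist G (2 * d) a x := (mem_ballD G).mp hxa
    have h2 : WithinDist G (2 * d) b x := (mem_ballD G).mp hxb
    exact hcol a b ⟨hne, (h1.trans' h2.symm').mono' (by omega)⟩ hcoleq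
  have hlayers : ∀ L ∈ LL, L.Pairwise (fun a b => Disjoint (Bl a) (Bl b)) := by
    intro L hLmem
    obtain ⟨k, _, rfl⟩ := List.mem_map.mp hLmem
    have hnd : (layerL k).Nodup := Finset.nodup_toList _
    refine List.Pairwise.imp_of_mem ?_ hnd
    intro a b ha hb hne
    exact hdisj2 a b hne ((hmemcol k a ha).trans (hmemcol k b hb).symm)
  have hball : ∀ i, ∀ y ∈ Bl i, ∀ z ∈ Bl i, WithinDist G (4 * d) y z := by
    intro i y hy z hz
    exact (((mem_ballD G).mp hy).symm'.trans' ((mem_ballD G).mp hz)).mono' (by omega)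
  -- nodup and membership of the full gate list
  have hnodup : l.Nodup := by
    apply nodup_flat
    · intro L hL
      obtain ⟨k, _, rfl⟩ := List.mem_map.mp hL
      exact Finset.nodup_toList _
    · rw [hLLdef, List.pairwise_map]
      refine List.Pairwise.imp ?_ (List.nodup_finRange (Δ ^ (4 * d) + 1))
      intro k k' hkk' a ha ha'
      exact hkk' ((hmemcol k a ha).symm.trans (hmemcol k' a ha'))
  have hmem : ∀ i : V, i ∈ l := by
    intro i
    refine List.mem_flatMap.mpr ⟨layerL (col i), ?_, ?_⟩
    · exact List.mem_map.mpr ⟨col i, List.mem_finRange _, rfl⟩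
    · exact Finset.mem_toList.mpr (Finset.mem_filter.mpr ⟨Finset.mem_univ i, rfl⟩)
  -- the permutation and the linear equivalence
  set σf := appL gt l with hσ
  set τf := appL gt l.reverse with hτ
  have h1 : ∀ f, σf (τf f) = f := appL_inv' gt ginv l
  have h2 : ∀ f, τf (σf f) = f := appL_inv gt ginv l
  refine ⟨permLE σf τf h1 h2, ?_, ?_, ?_⟩
  · -- locality preservation
    intro R hR O hO
    have hKlen : LL.length = Δ ^ (4 * d) + 1 := by
      rw [hLLdef, List.length_map, List.length_finRange]
    have harith : (4 * d) * LL.length + (R - 1) + (4 * d) * LL.length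
        ≤ (R + 8 * d * (Δ ^ (4 * d) + 1)) - 1 := by
      have hδ : 8 * d * (Δ ^ (4 * d) + 1) = 2 * ((4 * d) * LL.length) := by
        rw [hKlen]; ring
      rw [hδ]
      generalize (4 * d) * LL.length = m
      omega
    constructor
    · -- M O M⁻¹
      set LLr : List (List V) := (LL.map List.reverse).reverse with hLLr
      have hrev : l.reverse = LLr.flatMap id := flat_reverse LL
      have hLLrlen : LLr.length = LL.length := by
        rw [hLLr, List.length_reverse, List.length_map]
      have hlayersr : ∀ L ∈ LLr, L.Pairwise (fun a b => Disjoint (Bl a) (Bl b)) := by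
        intro L hL
        rw [hLLr, List.mem_reverse] at hL
        obtain ⟨L0, hL0, rfl⟩ := List.mem_map.mp hL
        rw [List.pairwise_reverse]
        exact (hlayers L0 hL0).imp (fun hab => hab.symm)
      apply conj_isRangeHam gt Bl ginj goff gdep G (4 * d) hball LLr hlayersr
        _ _ O ?_ _ R hR ?_ hO
      · intro O' f g
        rw [← hrev]
        exact permLE_conj_apply σf τf h1 h2 O' f g
      · rw [hLLrlen]
        exact harith
    · -- M⁻¹ O M
      apply conj_isRangeHam gt Bl ginj goff gdep G (4 * d) hball LL hlayers
        _ _ O ?_ _ R hR ?_ hO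
      · intro O' f g
        rw [← hldef]
        exact permLE_conj_apply' σf τf h1 h2 O' f g
      · exact harith
  · -- vacuum preserved
    have hfix : σf vcfg = vcfg :=
      appL_fix gt vcfg l (fun i _ => qgate_vcfg hc hcard hclose i)
    rw [vac_eq_basis, permLE_basisVec, hfix]
  · -- W state mapped to Q† vacuum
    have hstep : ∀ i : V, σf (dcfg i) = ccfg (I i) := by
      intro i
      apply appL_once gt (dcfg i) (ccfg (I i)) l hnodup i (hmem i)
      · exact qgate_dcfg_self hclose i
      · exact fun j hji => qgate_dcfg_other hc hcard hclose hji
      · exact fun j hji => qgate_ccfg_other hc hcard hclose hinj hji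
    rw [Sdag_vac, map_sum]
    rw [LinearMap.sum_apply]
    refine Finset.sum_congr rfl fun i _ => ?_
    rw [permLE_basisVec, hstep i, creProd_vac]
end
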